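/- arXiv:2205.07685 — 10 statements merged into one kernel-verified Lean document; each statement's English description precedes it below -/
import Mathlib

section
/- Let d ≥ 2. The following four subsets of de Sitter space dS^d coincide: (a) the wedge W = {x ∈ dS^d : x 1 > |x 0|}; (b) the positivity domain {x ∈ dS^d : h x ∈ V₊} of the boost vector field; (c) the KMS domain {x ∈ dS^d : for all t ∈ (0,π), α_{it}(x) ∈ T_M}; (d) the Wick-rotated fixed-point set κ_h({z ∈ T_M : τ̄_h(z) = z}). -/
/- STATEMENT 0: The four wedge-domain descriptions in de Sitter space dS^d coincide
   (Proposition on de Sitter space, d ≥ 2). -/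

open Complex Set

noncomputable section

/-- The Lorentzian form `[x,y] = x 0 * y 0 - ∑_{j=1}^d x j * y j` on `ℝ^{d+1}`. -/
def lorR (d : ℕ) (x y : Fin (d + 1) → ℝ) : ℝ :=
  2 * (x 0 * y 0) - ∑ j, x j * y j

/-- The complex-bilinear extension of the Lorentzian form to `ℂ^{d+1}`. -/
def lorC (d : ℕ) (x y : Fin (d + 1) → ℂ) : ℂ :=
  2 * (x 0 * y 0) - ∑ j, x j * y j

/-- The open future light cone `V₊`. -/
def Vplus (d : ℕ) : Set (Fin (d + 1) → ℝ) :=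
  {x | 0 < x 0 ∧ 0 < lorR d x x}

/-- The boost generator `h`: `(hx) 0 = x 1`, `(hx) 1 = x 0`, `(hx) j = 0` for `j ≥ 2`. -/
def boost (d : ℕ) (x : Fin (d + 1) → ℝ) : Fin (d + 1) → ℝ :=
  fun j => if j = 0 then x 1 else if j = 1 then x 0 else 0

/-- The complex boost flow `α_z`. -/
def boostFlowC (d : ℕ) (z : ℂ) (v : Fin (d + 1) → ℂ) : Fin (d + 1) → ℂ :=
  fun j =>
    if j = 0 then Complex.cosh z * v 0 + Complex.sinh z * v 1
    else if j = 1 then Complex.cosh z * v 1 + Complex.sinh z * v 0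
    else v j

/-- The antilinear involution `τ̄_h`. -/
def tauBar (d : ℕ) (z : Fin (d + 1) → ℂ) : Fin (d + 1) → ℂ :=
  fun j =>
    if j = 0 then -(starRingEnd ℂ) (z 0)
    else if j = 1 then -(starRingEnd ℂ) (z 1)
    else (starRingEnd ℂ) (z j)

/-- The Wick rotation `κ_h`. -/
def kappa (d : ℕ) (z : Fin (d + 1) → ℂ) : Fin (d + 1) → ℂ :=
  fun j =>
    if j = 0 then -Complex.I * z 1
    else if j = 1 then -Complex.I * z 0
    else z j

/-- De Sitter space `dS^d`. -/
def deSitter (d : ℕ) : Set (Fin (d + 1) → ℝ) := {x | lorR d x x = -1}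

/-- The tube domain `T_M` of de Sitter space. -/
def tubeM (d : ℕ) : Set (Fin (d + 1) → ℂ) :=
  {z | lorC d z z = -1 ∧ (fun j => (z j).im) ∈ Vplus d}

/-- The coordinatewise embedding `ℝ^{d+1} → ℂ^{d+1}`. -/
def embedC (d : ℕ) (x : Fin (d + 1) → ℝ) : Fin (d + 1) → ℂ := fun j => (x j : ℂ)

namespace DSAux
variable {n : ℕ}

abbrev rest (n : ℕ) : Finset (Fin (n + 3)) := (Finset.univ.erase 0).erase 1

lemma restMem {j : Fin (n + 3)} (hj : j ∈ rest n) : j ≠ 0 ∧ j ≠ 1 := by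
  simp only [rest, Finset.mem_erase, Finset.mem_univ, and_true] at hj
  exact ⟨hj.2, hj.1⟩

lemma split_sum {M : Type*} [AddCommMonoid M] (f : Fin (n + 3) → M) :
    ∑ j, f j = f 0 + f 1 + ∑ j ∈ rest n, f j := by
  rw [← Finset.add_sum_erase _ f (Finset.mem_univ 0),
      ← Finset.add_sum_erase _ f (show (1 : Fin (n+3)) ∈ Finset.univ.erase 0 by simp),
      ← add_assoc]

lemma lorR_eq (x : Fin (n + 3) → ℝ) :
    lorR (n + 2) x x = x 0 * x 0 - x 1 * x 1 - ∑ j ∈ rest n, x j * x j := by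
  rw [lorR, split_sum (fun j => x j * x j)]; ring

lemma lorC_eq (x : Fin (n + 3) → ℂ) :
    lorC (n + 2) x x = x 0 * x 0 - x 1 * x 1 - ∑ j ∈ rest n, x j * x j := by
  rw [lorC, split_sum (fun j => x j * x j)]; ring

lemma wedge_iff (a b : ℝ) : |a| < b ↔ 0 < b ∧ a * a < b * b := by
  constructor
  · intro h
    have h0 := abs_nonneg a
    have h1 := abs_lt.mp h
    exact ⟨by linarith, by nlinarith [h1.1, h1.2]⟩
  · rintro ⟨h1, h2⟩
    rw [abs_lt]
    constructor <;> nlinarith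

lemma boost_lor (x : Fin (n + 3) → ℝ) :
    lorR (n + 2) (boost (n + 2) x) (boost (n + 2) x) = x 1 * x 1 - x 0 * x 0 := by
  rw [lorR_eq]
  have h0 : boost (n + 2) x 0 = x 1 := by simp [boost]
  have h1 : boost (n + 2) x 1 = x 0 := by simp [boost]
  have hr : ∑ j ∈ rest n, boost (n + 2) x j * boost (n + 2) x j = 0 :=
    Finset.sum_eq_zero fun j hj => by
      obtain ⟨hj0, hj1⟩ := restMem hj
      simp [boost, hj0, hj1]
  rw [h0, h1, hr]; ring

end DSAux

namespace DSAux
variable {n : ℕ}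

lemma lorC_embed (x : Fin (n + 3) → ℝ) :
    lorC (n + 2) (embedC (n + 2) x) (embedC (n + 2) x) = (lorR (n + 2) x x : ℂ) := by
  unfold lorC lorR embedC
  push_cast
  ring

lemma flow_lor (w : ℂ) (v : Fin (n + 3) → ℂ) :
    lorC (n + 2) (boostFlowC (n + 2) w v) (boostFlowC (n + 2) w v) = lorC (n + 2) v v := by
  rw [lorC_eq, lorC_eq]
  have h0 : boostFlowC (n + 2) w v 0 = Complex.cosh w * v 0 + Complex.sinh w * v 1 := by
    simp [boostFlowC]
  have h1 : boostFlowC (n + 2) w v 1 = Complex.cosh w * v 1 + Complex.sinh w * v 0 := by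
    simp [boostFlowC]
  have hr : ∑ j ∈ rest n, boostFlowC (n + 2) w v j * boostFlowC (n + 2) w v j
      = ∑ j ∈ rest n, v j * v j :=
    Finset.sum_congr rfl fun j hj => by
      obtain ⟨a, b⟩ := restMem hj
      simp [boostFlowC, a, b]
  rw [h0, h1, hr]
  have h := Complex.cosh_sq_sub_sinh_sq w
  linear_combination (v 0 * v 0 - v 1 * v 1) * h

lemma flow_im0 (t : ℝ) (x : Fin (n + 3) → ℝ) :
    (boostFlowC (n + 2) (t * Complex.I) (embedC (n + 2) x) 0).im = Real.sin t * x 1 := by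
  simp [boostFlowC, embedC, Complex.cosh_mul_I, Complex.sinh_mul_I, Complex.sin_ofReal_re]

lemma flow_im1 (t : ℝ) (x : Fin (n + 3) → ℝ) :
    (boostFlowC (n + 2) (t * Complex.I) (embedC (n + 2) x) 1).im = Real.sin t * x 0 := by
  simp [boostFlowC, embedC, Complex.cosh_mul_I, Complex.sinh_mul_I, Complex.sin_ofReal_re]

lemma flow_imr (t : ℝ) (x : Fin (n + 3) → ℝ) {j : Fin (n + 3)} (h0 : j ≠ 0) (h1 : j ≠ 1) :
    (boostFlowC (n + 2) (t * Complex.I) (embedC (n + 2) x) j).im = 0 := by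
  simp [boostFlowC, embedC, h0, h1]

lemma flow_im_lor (t : ℝ) (x : Fin (n + 3) → ℝ) :
    lorR (n + 2) (fun j => (boostFlowC (n + 2) (t * Complex.I) (embedC (n + 2) x) j).im)
      (fun j => (boostFlowC (n + 2) (t * Complex.I) (embedC (n + 2) x) j).im)
      = Real.sin t * Real.sin t * (x 1 * x 1 - x 0 * x 0) := by
  rw [lorR_eq]
  rw [flow_im0, flow_im1]
  have hr : ∑ j ∈ rest n, (boostFlowC (n + 2) (t * Complex.I) (embedC (n + 2) x) j).im *
      (boostFlowC (n + 2) (t * Complex.I) (embedC (n + 2) x) j).im = 0 :=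
    Finset.sum_eq_zero fun j hj => by
      obtain ⟨a, b⟩ := restMem hj
      rw [flow_imr t x a b]; ring
  rw [hr]; ring

end DSAux

theorem deSitter_wedge_descriptions (d : ℕ) (hd : 2 ≤ d) :
    ({x ∈ deSitter d | |x 0| < x 1} = {x ∈ deSitter d | boost d x ∈ Vplus d}) ∧
    ({x ∈ deSitter d | |x 0| < x 1} =
      {x ∈ deSitter d |
        ∀ t ∈ Ioo (0 : ℝ) Real.pi, boostFlowC d (t * Complex.I) (embedC d x) ∈ tubeM d}) ∧
    (embedC d '' {x ∈ deSitter d | |x 0| < x 1} =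
      kappa d '' {z ∈ tubeM d | tauBar d z = z}) := by
  obtain ⟨n, rfl⟩ : ∃ n, d = n + 2 := ⟨d - 2, by omega⟩
  refine ⟨?_, ?_, ?_⟩
  · -- part (b)
    ext x
    simp only [Set.mem_sep_iff]
    refine and_congr_right fun _ => ?_
    rw [DSAux.wedge_iff]
    have hb : boost (n + 2) x ∈ Vplus (n + 2) ↔ (0 < x 1 ∧ 0 < x 1 * x 1 - x 0 * x 0) := by
      have hb0 : boost (n + 2) x 0 = x 1 := by simp [boost]
      simp only [Vplus, Set.mem_setOf_eq, DSAux.boost_lor, hb0]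
    rw [hb]
    constructor
    · rintro ⟨h1, h2⟩; exact ⟨h1, by linarith⟩
    · rintro ⟨h1, h2⟩; exact ⟨h1, by linarith⟩
  · -- part (c)
    ext x
    simp only [Set.mem_sep_iff]
    refine and_congr_right fun hds => ?_
    have hds' : lorR (n + 2) x x = -1 := hds
    rw [DSAux.wedge_iff]
    simp only [tubeM, Vplus, Set.mem_setOf_eq]
    constructor
    · rintro ⟨h1, h2⟩ t ⟨ht0, htpi⟩
      have hs : 0 < Real.sin t := Real.sin_pos_of_pos_of_lt_pi ht0 htpi
      refine ⟨?_, ?_, ?_⟩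
      · rw [DSAux.flow_lor, DSAux.lorC_embed, hds']
        norm_num
      · show 0 < (boostFlowC (n + 2) (t * Complex.I) (embedC (n + 2) x) 0).im
        rw [DSAux.flow_im0]
        exact mul_pos hs h1
      · rw [DSAux.flow_im_lor]
        exact mul_pos (mul_pos hs hs) (by linarith)
    · intro h
      have hio : (0 : ℝ) < Real.pi / 2 := div_pos Real.pi_pos two_pos
      obtain ⟨-, h0, hlor⟩ := h (Real.pi / 2) ⟨hio, half_lt_self Real.pi_pos⟩
      have h0' : 0 < (boostFlowC (n + 2) ((Real.pi / 2 : ℝ) * Complex.I)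
          (embedC (n + 2) x) 0).im := h0
      rw [DSAux.flow_im0, Real.sin_pi_div_two, one_mul] at h0'
      rw [DSAux.flow_im_lor, Real.sin_pi_div_two] at hlor
      exact ⟨h0', by nlinarith⟩
  · -- part (d)
    apply Set.Subset.antisymm
    · rintro _ ⟨x, ⟨hds, hw⟩, rfl⟩
      have hds' : lorR (n + 2) x x = -1 := hds
      rw [DSAux.wedge_iff] at hw
      obtain ⟨h1, h2⟩ := hw
      set z : Fin (n + 3) → ℂ := fun j =>
        if j = 0 then (x 1 : ℂ) * Complex.I
        else if j = 1 then (x 0 : ℂ) * Complex.I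
        else (x j : ℂ) with hzdef
      have hz0 : z 0 = (x 1 : ℂ) * Complex.I := by simp [hzdef]
      have hz1 : z 1 = (x 0 : ℂ) * Complex.I := by simp [hzdef]
      have hzr : ∀ j : Fin (n + 3), j ≠ 0 → j ≠ 1 → z j = (x j : ℂ) := by
        intro j a b; simp [hzdef, a, b]
      refine ⟨z, ⟨⟨?_, ?_, ?_⟩, ?_⟩, ?_⟩
      · -- lorC z z = -1
        rw [DSAux.lorR_eq] at hds'
        rw [DSAux.lorC_eq]
        have hC := congrArg Complex.ofReal hds'
        push_cast [Complex.ofReal_sum] at hC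
        have hr : (∑ j ∈ DSAux.rest n, z j * z j)
            = ∑ j ∈ DSAux.rest n, (x j : ℂ) * (x j : ℂ) :=
          Finset.sum_congr rfl fun j hj => by
            obtain ⟨a, b⟩ := DSAux.restMem hj
            rw [hzr j a b]
        rw [hz0, hz1, hr]
        linear_combination hC + ((x 1 : ℂ) * (x 1) - (x 0 : ℂ) * (x 0)) * Complex.I_sq
      · -- 0 < im z 0
        show 0 < (z 0).im
        rw [hz0]; simp
        exact h1
      · -- 0 < lorR of im
        rw [DSAux.lorR_eq]
        have e0 : (z 0).im = x 1 := by rw [hz0]; simp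
        have e1 : (z 1).im = x 0 := by rw [hz1]; simp
        have er : ∑ j ∈ DSAux.rest n, (z j).im * (z j).im = 0 :=
          Finset.sum_eq_zero fun j hj => by
            obtain ⟨a, b⟩ := DSAux.restMem hj
            rw [hzr j a b]; simp
        simp only [e0, e1, er]
        nlinarith
      · -- tauBar z = z
        funext j
        by_cases a : j = 0
        · subst a
          simp [tauBar, hz0, Complex.conj_ofReal]
        · by_cases b : j = 1
          · subst b
            simp [tauBar, a, hz1, Complex.conj_ofReal]
          · simp [tauBar, a, b, hzr j a b, Complex.conj_ofReal]
      · -- kappa z = embedC x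
        funext j
        by_cases a : j = 0
        · subst a
          have hk : kappa (n + 2) z 0 = -Complex.I * z 1 := by simp [kappa]
          rw [hk, hz1]
          show -Complex.I * ((x 0 : ℂ) * Complex.I) = ((x 0 : ℝ) : ℂ)
          linear_combination -(x 0 : ℂ) * Complex.I_sq
        · by_cases b : j = 1
          · subst b
            have hk : kappa (n + 2) z 1 = -Complex.I * z 0 := by simp [kappa]
            rw [hk, hz0]
            show -Complex.I * ((x 1 : ℂ) * Complex.I) = ((x 1 : ℝ) : ℂ)
            linear_combination -(x 1 : ℂ) * Complex.I_sq
          · have hk : kappa (n + 2) z j = z j := by simp [kappa, a, b]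
            rw [hk, hzr j a b]
            rfl
    · rintro _ ⟨z, ⟨hztube, htau⟩, rfl⟩
      simp only [tubeM, Vplus, Set.mem_setOf_eq] at hztube
      obtain ⟨hzlor, hzpos, hzlorpos⟩ := hztube
      -- purely imaginary / real facts
      have h0re : (z 0).re = 0 := by
        have h : -(starRingEnd ℂ) (z 0) = z 0 := by simpa [tauBar] using congrFun htau 0
        have := congrArg Complex.re h
        simp only [Complex.neg_re, Complex.conj_re] at this
        linarith
      have h1re : (z 1).re = 0 := by
        have h : -(starRingEnd ℂ) (z 1) = z 1 := by simpa [tauBar] using congrFun htau 1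
        have := congrArg Complex.re h
        simp only [Complex.neg_re, Complex.conj_re] at this
        linarith
      have hjim : ∀ j : Fin (n + 3), j ≠ 0 → j ≠ 1 → (z j).im = 0 := by
        intro j a b
        have h : (starRingEnd ℂ) (z j) = z j := by simpa [tauBar, a, b] using congrFun htau j
        have := congrArg Complex.im h
        simp only [Complex.conj_im] at this
        linarith
      have hz0 : z 0 = ((z 0).im : ℂ) * Complex.I := by
        apply Complex.ext <;> simp [h0re]
      have hz1 : z 1 = ((z 1).im : ℂ) * Complex.I := by
        apply Complex.ext <;> simp [h1re]
      set x : Fin (n + 3) → ℝ := fun j =>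
        if j = 0 then (z 1).im else if j = 1 then (z 0).im else (z j).re with hxdef
      have hx0 : x 0 = (z 1).im := by simp [hxdef]
      have hx1 : x 1 = (z 0).im := by simp [hxdef]
      have hxr : ∀ j : Fin (n + 3), j ≠ 0 → j ≠ 1 → x j = (z j).re := by
        intro j a b; simp [hxdef, a, b]
      refine ⟨x, ⟨?_, ?_⟩, ?_⟩
      · -- x ∈ deSitter
        show lorR (n + 2) x x = -1
        rw [DSAux.lorC_eq] at hzlor
        have hr : (∑ j ∈ DSAux.rest n, z j * z j)
            = ((∑ j ∈ DSAux.rest n, x j * x j : ℝ) : ℂ) := by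
          rw [Complex.ofReal_sum]
          refine Finset.sum_congr rfl fun j hj => ?_
          obtain ⟨a, b⟩ := DSAux.restMem hj
          have him := hjim j a b
          rw [hxr j a b]
          apply Complex.ext <;> simp [Complex.mul_re, Complex.mul_im, him]
        rw [hz0, hz1, hr] at hzlor
        rw [DSAux.lorR_eq, hx0, hx1]
        have key : (((z 1).im * (z 1).im - (z 0).im * (z 0).im -
            ∑ j ∈ DSAux.rest n, x j * x j : ℝ) : ℂ) = -1 := by
          push_cast [Complex.ofReal_sum] at hzlor ⊢
          linear_combination hzlor -
            (((z 0).im : ℂ) * ((z 0).im) - ((z 1).im : ℂ) * ((z 1).im)) * Complex.I_sq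
        exact_mod_cast key
      · -- wedge condition
        rw [DSAux.wedge_iff, hx0, hx1]
        have hp : 0 < (z 0).im := hzpos
        rw [DSAux.lorR_eq] at hzlorpos
        have er : ∑ j ∈ DSAux.rest n, (z j).im * (z j).im = 0 :=
          Finset.sum_eq_zero fun j hj => by
            obtain ⟨a, b⟩ := DSAux.restMem hj
            rw [hjim j a b]; ring
        rw [er] at hzlorpos
        exact ⟨hp, by nlinarith⟩
      · -- embedC x = kappa z
        funext j
        by_cases a : j = 0
        · subst a
          simp only [kappa, if_pos rfl, embedC, hx0]
          rw [hz1]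
          apply Complex.ext <;> simp
        · by_cases b : j = 1
          · subst b
            simp only [kappa, if_neg a, if_pos rfl, embedC, hx1]
            rw [hz0]
            apply Complex.ext <;> simp
          · simp only [kappa, if_neg a, if_neg b, embedC, hxr j a b]
            apply Complex.ext <;> simp [hjim j a b]

end
end

section
/- Let d ≥ 2. Then {z ∈ ℂ^{d+1} : [z,z] = −1 and Im z ∈ V₊} = {cos(t)·(g e₁) + i·sin(t)·(g e₀) : t ∈ (0,π), g ∈ G}. In other words, the tube domain T_M of de Sitter space equals the orbit G.Exp_{e₁}(i V₊^π(e₁)) of the exponential image of the bounded timelike cone at the base point e₁. -/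
/- STATEMENT 2: The tube domain of de Sitter space equals the orbit
   `G.Exp_{e₁}(i V₊^π(e₁))`, i.e.
   `{z : [z,z] = -1, Im z ∈ V₊} = {cos t · (g e₁) + i sin t · (g e₀)}`. -/

open Complex Set

noncomputable section

/-- The connected proper orthochronous Lorentz group, described as the set of
linear automorphisms of determinant one preserving the form and the future cone. -/
def isLorentz (d : ℕ) (g : (Fin (d + 1) → ℝ) ≃ₗ[ℝ] (Fin (d + 1) → ℝ)) : Prop :=
  LinearMap.det (g : (Fin (d + 1) → ℝ) →ₗ[ℝ] (Fin (d + 1) → ℝ)) = 1 ∧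
  (∀ x y, lorR d (g x) (g y) = lorR d x y) ∧
  (⇑g '' Vplus d = Vplus d)

namespace TubeAux

variable {d : ℕ}

def eta (d : ℕ) (j : Fin (d + 1)) : ℝ := if j = 0 then 1 else -1

lemma lorR_eq_sum (x y : Fin (d+1) → ℝ) : lorR d x y = ∑ j, eta d j * (x j * y j) := by
  have h : ∀ j : Fin (d+1), eta d j * (x j * y j)
      = 2 * (if j = 0 then x j * y j else 0) - x j * y j := by
    intro j; unfold eta; split <;> ring
  rw [Finset.sum_congr rfl fun j _ => h j, Finset.sum_sub_distrib, ← Finset.mul_sum,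
    Finset.sum_ite_eq' Finset.univ (0 : Fin (d+1)) (fun j => x j * y j)]
  simp [lorR]

lemma lorR_comm (x y : Fin (d+1) → ℝ) : lorR d x y = lorR d y x := by
  simp only [lorR_eq_sum]
  exact Finset.sum_congr rfl fun j _ => by ring

lemma lorR_add_left (x x' y : Fin (d+1) → ℝ) :
    lorR d (x + x') y = lorR d x y + lorR d x' y := by
  simp only [lorR_eq_sum, ← Finset.sum_add_distrib]
  exact Finset.sum_congr rfl fun j _ => by simp [Pi.add_apply]; ring

lemma lorR_sub_left (x x' y : Fin (d+1) → ℝ) :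
    lorR d (x - x') y = lorR d x y - lorR d x' y := by
  simp only [lorR_eq_sum, ← Finset.sum_sub_distrib]
  exact Finset.sum_congr rfl fun j _ => by simp [Pi.sub_apply]; ring

lemma lorR_smul_left (a : ℝ) (x y : Fin (d+1) → ℝ) :
    lorR d (a • x) y = a * lorR d x y := by
  simp only [lorR_eq_sum, Finset.mul_sum]
  exact Finset.sum_congr rfl fun j _ => by simp [Pi.smul_apply, smul_eq_mul]; ring

lemma lorR_add_right (x y y' : Fin (d+1) → ℝ) :
    lorR d x (y + y') = lorR d x y + lorR d x y' := by
  rw [lorR_comm, lorR_add_left, lorR_comm y x, lorR_comm y' x]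

lemma lorR_sub_right (x y y' : Fin (d+1) → ℝ) :
    lorR d x (y - y') = lorR d x y - lorR d x y' := by
  rw [lorR_comm, lorR_sub_left, lorR_comm y x, lorR_comm y' x]

lemma lorR_smul_right (a : ℝ) (x y : Fin (d+1) → ℝ) :
    lorR d x (a • y) = a * lorR d x y := by
  rw [lorR_comm, lorR_smul_left, lorR_comm y x]

lemma lorR_neg_left (x y : Fin (d+1) → ℝ) : lorR d (-x) y = -lorR d x y := by
  have := lorR_smul_left (d := d) (-1) x y
  simpa using this

lemma lorR_mul_mul (a b : ℝ) (x y : Fin (d+1) → ℝ) :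
    lorR d (fun j => a * x j) (fun j => b * y j) = a * b * lorR d x y := by
  simp only [lorR_eq_sum, Finset.mul_sum]
  exact Finset.sum_congr rfl fun j _ => by ring

lemma lorR_single_left (i : Fin (d+1)) (u : Fin (d+1) → ℝ) :
    lorR d (Pi.single i 1) u = eta d i * u i := by
  rw [lorR_eq_sum]
  rw [Finset.sum_eq_single i (fun k _ hk => by simp [Pi.single_eq_of_ne hk]) (by simp)]
  simp

lemma lorR_e0_left (u : Fin (d+1) → ℝ) : lorR d (Pi.single 0 1) u = u 0 := by
  rw [lorR_single_left]; simp [eta]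

lemma lorR_e0_e0 : lorR d (Pi.single 0 1) (Pi.single 0 1) = 1 := by
  rw [lorR_e0_left]; simp

/-! ### Reflections -/

def lreflFun (d : ℕ) (w : Fin (d+1) → ℝ) : (Fin (d+1) → ℝ) →ₗ[ℝ] (Fin (d+1) → ℝ) where
  toFun x := x - (2 * lorR d x w / lorR d w w) • w
  map_add' x y := by
    simp only [lorR_add_left]
    rw [show 2 * (lorR d x w + lorR d y w) / lorR d w w
        = 2 * lorR d x w / lorR d w w + 2 * lorR d y w / lorR d w w by ring, add_smul]
    abel
  map_smul' a x := by
    simp only [lorR_smul_left, RingHom.id_apply, smul_sub, smul_smul]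
    rw [show 2 * (a * lorR d x w) / lorR d w w = a * (2 * lorR d x w / lorR d w w) by ring]

lemma lreflFun_apply (w x : Fin (d+1) → ℝ) :
    lreflFun d w x = x - (2 * lorR d x w / lorR d w w) • w := rfl

lemma lorR_lreflFun (w : Fin (d+1) → ℝ) (hw : lorR d w w ≠ 0) (x y : Fin (d+1) → ℝ) :
    lorR d (lreflFun d w x) (lreflFun d w y) = lorR d x y := by
  simp only [lreflFun_apply, lorR_sub_left, lorR_sub_right, lorR_smul_left, lorR_smul_right]
  field_simp
  linear_combination (2 * lorR d x w) * lorR_comm (d := d) y w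

lemma lreflFun_invol (w : Fin (d+1) → ℝ) (hw : lorR d w w ≠ 0) (x : Fin (d+1) → ℝ) :
    lreflFun d w (lreflFun d w x) = x := by
  simp only [lreflFun_apply, lorR_sub_left, lorR_smul_left]
  rw [show 2 * (lorR d x w - 2 * lorR d x w / lorR d w w * lorR d w w) / lorR d w w
      = -(2 * lorR d x w / lorR d w w) by field_simp; ring, neg_smul]
  abel

def lrefl (w : Fin (d+1) → ℝ) (hw : lorR d w w ≠ 0) : (Fin (d+1) → ℝ) ≃ₗ[ℝ] (Fin (d+1) → ℝ) :=
  LinearEquiv.ofLinear (lreflFun d w) (lreflFun d w)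
    (LinearMap.ext fun x => lreflFun_invol w hw x)
    (LinearMap.ext fun x => lreflFun_invol w hw x)

lemma lrefl_apply (w : Fin (d+1) → ℝ) (hw : lorR d w w ≠ 0) (x : Fin (d+1) → ℝ) :
    lrefl w hw x = x - (2 * lorR d x w / lorR d w w) • w := rfl

lemma lorR_lrefl (w : Fin (d+1) → ℝ) (hw : lorR d w w ≠ 0) (x y : Fin (d+1) → ℝ) :
    lorR d (lrefl w hw x) (lrefl w hw y) = lorR d x y := lorR_lreflFun w hw x y

/-! ### The coordinate flip -/

def flipFun (d : ℕ) (c : Fin (d+1)) : (Fin (d+1) → ℝ) →ₗ[ℝ] (Fin (d+1) → ℝ) where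
  toFun x := fun j => if j = c then -x j else x j
  map_add' x y := by funext j; by_cases h : j = c <;> simp [h] <;> ring
  map_smul' a x := by funext j; by_cases h : j = c <;> simp [h]

lemma flipFun_invol (c : Fin (d+1)) (x : Fin (d+1) → ℝ) :
    flipFun d c (flipFun d c x) = x := by
  funext j; by_cases h : j = c <;> simp [flipFun, h]

def flipE (d : ℕ) (c : Fin (d+1)) : (Fin (d+1) → ℝ) ≃ₗ[ℝ] (Fin (d+1) → ℝ) :=
  LinearEquiv.ofLinear (flipFun d c) (flipFun d c)
    (LinearMap.ext fun x => flipFun_invol c x) (LinearMap.ext fun x => flipFun_invol c x)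

lemma lorR_flip (c : Fin (d+1)) (x y : Fin (d+1) → ℝ) :
    lorR d (flipE d c x) (flipE d c y) = lorR d x y := by
  show lorR d (flipFun d c x) (flipFun d c y) = lorR d x y
  simp only [lorR_eq_sum]
  refine Finset.sum_congr rfl fun j _ => ?_
  by_cases h : j = c <;> simp [flipFun, h] <;> ring

lemma flipE_single (c i : Fin (d+1)) (h : c ≠ i) :
    flipE d c (Pi.single i 1) = Pi.single i (1:ℝ) := by
  show flipFun d c (Pi.single i 1) = Pi.single i (1:ℝ)
  funext j
  by_cases hj : j = c
  · subst hj
    simp [flipFun, Pi.single_eq_of_ne h]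
  · simp [flipFun, hj]

lemma flipE_det (c : Fin (d+1)) :
    LinearMap.det ((flipE d c : (Fin (d+1) → ℝ) →ₗ[ℝ] (Fin (d+1) → ℝ))) = -1 := by
  have h : (flipE d c : (Fin (d+1) → ℝ) →ₗ[ℝ] (Fin (d+1) → ℝ))
      = Matrix.toLin' (Matrix.diagonal (fun j => if j = c then (-1:ℝ) else 1)) := by
    apply LinearMap.ext; intro x; funext j
    show flipFun d c x j = _
    simp only [Matrix.toLin'_apply, Matrix.mulVec_diagonal, flipFun, LinearMap.coe_mk,
      AddHom.coe_mk]
    by_cases h : j = c <;> simp [h]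
  rw [h, LinearMap.det_toLin', Matrix.det_diagonal]
  rw [Finset.prod_ite_eq' Finset.univ c (fun _ => (-1:ℝ))]
  simp

/-! ### Determinant of a Lorentz map is `±1` -/

lemma det_pm (f : (Fin (d+1) → ℝ) →ₗ[ℝ] (Fin (d+1) → ℝ))
    (hf : ∀ a b, lorR d (f a) (f b) = lorR d a b) :
    LinearMap.det f = 1 ∨ LinearMap.det f = -1 := by
  set A := LinearMap.toMatrix' f with hA
  have hsingle : ∀ i : Fin (d+1), (Pi.single i (1:ℝ)) = fun j' => if j' = i then (1:ℝ) else 0 := by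
    intro i; funext j'; rw [Pi.single_apply]
  have key : Matrix.transpose A * Matrix.diagonal (eta d) * A = Matrix.diagonal (eta d) := by
    ext i j
    have h := hf (Pi.single i 1) (Pi.single j 1)
    rw [lorR_eq_sum, lorR_eq_sum] at h
    have hL : ∀ k i, f (Pi.single i 1) k = A k i := by
      intro k i
      rw [hA, LinearMap.toMatrix'_apply]
    have hR : ∑ k, eta d k * ((Pi.single i 1 : Fin (d+1) → ℝ) k * (Pi.single j 1 : Fin (d+1) → ℝ) k)
        = Matrix.diagonal (eta d) i j := by
      rw [Finset.sum_eq_single i (fun k _ hk => by simp [Pi.single_eq_of_ne hk]) (by simp),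
        Matrix.diagonal_apply]
      rcases eq_or_ne i j with rfl | hij
      · simp
      · simp [Pi.single_eq_of_ne (Ne.symm hij), hij]
    rw [Matrix.mul_apply]
    calc ∑ k, (Matrix.transpose A * Matrix.diagonal (eta d)) i k * A k j
        = ∑ k, eta d k * (f (Pi.single i 1) k * f (Pi.single j 1) k) := by
          refine Finset.sum_congr rfl fun k _ => ?_
          rw [Matrix.mul_diagonal, Matrix.transpose_apply, hL k i, hL k j]; ring
      _ = ∑ k, eta d k * ((Pi.single i 1 : Fin (d+1) → ℝ) k * (Pi.single j 1 : Fin (d+1) → ℝ) k) := h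
      _ = Matrix.diagonal (eta d) i j := hR
  have hd := congrArg Matrix.det key
  rw [Matrix.det_mul, Matrix.det_mul, Matrix.det_transpose] at hd
  have hEd : (Matrix.diagonal (eta d)).det ≠ 0 := by
    rw [Matrix.det_diagonal]
    refine Finset.prod_ne_zero_iff.mpr fun j _ => ?_
    unfold eta; split <;> norm_num
  have hsq : A.det * A.det = 1 := by
    have h2 : (A.det * A.det) * (Matrix.diagonal (eta d)).det
        = 1 * (Matrix.diagonal (eta d)).det := by
      rw [one_mul]; linear_combination hd
    exact mul_right_cancel₀ hEd h2
  have := mul_self_eq_one_iff.mp hsq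
  rwa [← LinearMap.det_toMatrix' f]

/-! ### reverse Cauchy-Schwarz facts -/

lemma lorR_split (a b : Fin (d+1) → ℝ) :
    lorR d a b = a 0 * b 0 - ∑ j ∈ Finset.univ.erase 0, a j * b j := by
  rw [lorR, ← Finset.add_sum_erase Finset.univ (fun j => a j * b j) (Finset.mem_univ 0)]
  ring

lemma lor_pos (u w : Fin (d+1) → ℝ) (hu2 : 0 < lorR d u u) (hu0 : 0 < u 0)
    (hw2 : 0 < lorR d w w) (hw0 : 0 < w 0) : 0 < lorR d u w := by
  set s : Finset (Fin (d+1)) := Finset.univ.erase 0 with hs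
  have cs := Finset.sum_mul_sq_le_sq_mul_sq s (fun j => u j) (fun j => w j)
  have h1 : ∑ j ∈ s, u j ^ 2 < u 0 ^ 2 := by
    have h := hu2; rw [lorR_split] at h
    have h' : ∑ j ∈ s, u j * u j < u 0 * u 0 := by linarith
    calc ∑ j ∈ s, u j ^ 2 = ∑ j ∈ s, u j * u j := Finset.sum_congr rfl fun j _ => by ring
      _ < u 0 * u 0 := h'
      _ = u 0 ^ 2 := by ring
  have h2 : ∑ j ∈ s, w j ^ 2 < w 0 ^ 2 := by
    have h := hw2; rw [lorR_split] at h
    have h' : ∑ j ∈ s, w j * w j < w 0 * w 0 := by linarith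
    calc ∑ j ∈ s, w j ^ 2 = ∑ j ∈ s, w j * w j := Finset.sum_congr rfl fun j _ => by ring
      _ < w 0 * w 0 := h'
      _ = w 0 ^ 2 := by ring
  have hnn1 : (0:ℝ) ≤ ∑ j ∈ s, u j ^ 2 := Finset.sum_nonneg fun j _ => sq_nonneg _
  have hnn2 : (0:ℝ) ≤ ∑ j ∈ s, w j ^ 2 := Finset.sum_nonneg fun j _ => sq_nonneg _
  rw [lorR_split]
  have hlt : (∑ j ∈ s, u j * w j) ^ 2 < (u 0 * w 0) ^ 2 := by
    calc (∑ j ∈ s, u j * w j) ^ 2 ≤ (∑ j ∈ s, u j ^ 2) * ∑ j ∈ s, w j ^ 2 := cs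
      _ < u 0 ^ 2 * w 0 ^ 2 := by
          apply mul_lt_mul' h1.le h2 hnn2 (by positivity)
      _ = (u 0 * w 0) ^ 2 := by ring
  nlinarith [mul_pos hu0 hw0, sq_nonneg (u 0 * w 0 + ∑ j ∈ s, u j * w j)]

lemma time_sign (u w : Fin (d+1) → ℝ) (hu2 : 0 < lorR d u u) (hu0 : 0 < u 0)
    (hw2 : 0 < lorR d w w) (huw : 0 < lorR d u w) : 0 < w 0 := by
  rcases lt_trichotomy (w 0) 0 with h | h | h
  · exfalso
    have h2 : 0 < lorR d (-w) (-w) := by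
      rw [lorR_neg_left, lorR_comm, lorR_neg_left, neg_neg]; exact hw2
    have h0 : 0 < (-w) 0 := by simpa using h
    have hneg := lor_pos u (-w) hu2 hu0 h2 h0
    rw [lorR_comm, lorR_neg_left, lorR_comm] at hneg
    linarith
  · exfalso
    have h' := hw2
    rw [lorR_split] at h'
    have hnn : (0:ℝ) ≤ ∑ j ∈ Finset.univ.erase 0, w j * w j :=
      Finset.sum_nonneg fun j _ => mul_self_nonneg _
    rw [h] at h'; linarith
  · exact h

lemma spacelike (x y : Fin (d+1) → ℝ) (hy : y ∈ Vplus d) (ho : lorR d x y = 0)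
    (hx : x ≠ 0) : lorR d x x < 0 := by
  set s : Finset (Fin (d+1)) := Finset.univ.erase 0 with hs
  have hy0 : 0 < y 0 := hy.1
  have hy2 := hy.2
  rw [lorR_split] at hy2 ho ⊢
  have cs := Finset.sum_mul_sq_le_sq_mul_sq s (fun j => x j) (fun j => y j)
  have hq : ∑ j ∈ s, y j ^ 2 < y 0 ^ 2 := by
    have h' : ∑ j ∈ s, y j * y j < y 0 * y 0 := by linarith
    calc ∑ j ∈ s, y j ^ 2 = ∑ j ∈ s, y j * y j := Finset.sum_congr rfl fun j _ => by ring
      _ < y 0 * y 0 := h'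
      _ = y 0 ^ 2 := by ring
  have hp0 : 0 < ∑ j ∈ s, x j ^ 2 := by
    rcases (Finset.sum_nonneg fun j (_ : j ∈ s) => sq_nonneg (x j)).lt_or_eq with h | h
    · exact h
    · exfalso
      have hz : ∀ j ∈ s, x j = 0 := by
        intro j hj
        have h0 := (Finset.sum_eq_zero_iff_of_nonneg
          fun j (_ : j ∈ s) => sq_nonneg (x j)).mp h.symm j hj
        exact pow_eq_zero_iff (n := 2) (by norm_num) |>.mp h0
      have hsum0 : ∑ j ∈ s, x j * y j = 0 :=
        Finset.sum_eq_zero fun j hj => by rw [hz j hj, zero_mul]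
      have hx0 : x 0 = 0 := by
        rw [hsum0] at ho
        nlinarith
      apply hx
      funext j
      rcases eq_or_ne j 0 with rfl | hj
      · exact hx0
      · exact hz j (Finset.mem_erase.mpr ⟨hj, Finset.mem_univ j⟩)
  have key : (x 0 * y 0) ^ 2 ≤ (∑ j ∈ s, x j ^ 2) * ∑ j ∈ s, y j ^ 2 := by
    have h : x 0 * y 0 = ∑ j ∈ s, x j * y j := by linarith
    rw [h]; exact cs
  have hxsq : ∑ j ∈ s, x j * x j = ∑ j ∈ s, x j ^ 2 := Finset.sum_congr rfl fun j _ => by ring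
  rw [hxsq]
  nlinarith [sq_nonneg (y 0), sq_nonneg (x 0)]

lemma cone_preserved (g : (Fin (d+1) → ℝ) ≃ₗ[ℝ] (Fin (d+1) → ℝ))
    (hg : ∀ a b, lorR d (g a) (g b) = lorR d a b)
    (h0 : 0 < (g (Pi.single 0 1)) 0) : ⇑g '' Vplus d = Vplus d := by
  have hge2 : 0 < lorR d (g (Pi.single 0 1)) (g (Pi.single 0 1)) := by
    rw [hg, lorR_e0_e0]; norm_num
  ext w
  constructor
  · rintro ⟨a, ha, rfl⟩
    refine ⟨?_, by rw [hg]; exact ha.2⟩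
    have huw : 0 < lorR d (g (Pi.single 0 1)) (g a) := by
      rw [hg, lorR_e0_left]; exact ha.1
    exact time_sign _ _ hge2 h0 (by rw [hg]; exact ha.2) huw
  · intro hw
    refine ⟨g.symm w, ⟨?_, ?_⟩, g.apply_symm_apply w⟩
    · have h1 : 0 < lorR d (g (Pi.single 0 1)) w :=
        lor_pos _ w hge2 h0 hw.2 hw.1
      have h2 : lorR d (Pi.single 0 1) (g.symm w) = lorR d (g (Pi.single 0 1)) w := by
        conv_lhs => rw [← hg, g.apply_symm_apply]
      rw [← lorR_e0_left (g.symm w), h2]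
      exact h1
    · have h3 : lorR d (g.symm w) (g.symm w) = lorR d w w := by
        rw [← hg, g.apply_symm_apply]
      rw [h3]; exact hw.2

lemma lorC_decomp (x y : Fin (d+1) → ℝ) :
    lorC d (fun j => (x j : ℂ) + Complex.I * (y j : ℂ))
      (fun j => (x j : ℂ) + Complex.I * (y j : ℂ))
      = ((lorR d x x - lorR d y y : ℝ) : ℂ) + Complex.I * ((2 * lorR d x y : ℝ) : ℂ) := by
  have h : ∀ j : Fin (d+1),
      ((x j : ℂ) + Complex.I * (y j : ℂ)) * ((x j : ℂ) + Complex.I * (y j : ℂ))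
      = ((x j * x j : ℝ) : ℂ) - ((y j * y j : ℝ) : ℂ) + (2 * Complex.I) * ((x j * y j : ℝ) : ℂ) := by
    intro j
    push_cast
    linear_combination ((y j : ℂ) * (y j : ℂ)) * Complex.I_mul_I
  simp only [lorC]
  rw [h 0, Finset.sum_congr rfl fun j _ => h j, Finset.sum_add_distrib,
    Finset.sum_sub_distrib, ← Finset.mul_sum]
  simp only [lorR]
  push_cast
  ring

lemma smul_mem_Vplus (c : ℝ) (hc : 0 < c) (x : Fin (d+1) → ℝ) (hx : x ∈ Vplus d) :
    (fun j => c * x j) ∈ Vplus d := by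
  have h : (fun j => c * x j) = c • x := rfl
  constructor
  · show 0 < c * x 0
    exact mul_pos hc hx.1
  · show 0 < lorR d (fun j => c * x j) (fun j => c * x j)
    rw [h, lorR_smul_left, lorR_smul_right]
    have := hx.2; positivity

end TubeAux

open TubeAux

theorem tube_eq_orbit (d : ℕ) (hd : 2 ≤ d) :
    {z : Fin (d + 1) → ℂ | lorC d z z = -1 ∧ (fun j => (z j).im) ∈ Vplus d} =
    {z : Fin (d + 1) → ℂ |
      ∃ t ∈ Ioo (0 : ℝ) Real.pi,
        ∃ g : (Fin (d + 1) → ℝ) ≃ₗ[ℝ] (Fin (d + 1) → ℝ), isLorentz d g ∧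
          z = fun j =>
            (Real.cos t * g (Pi.single (1 : Fin (d + 1)) (1 : ℝ)) j : ℝ) +
              Complex.I * (Real.sin t * g (Pi.single (0 : Fin (d + 1)) (1 : ℝ)) j : ℝ)} := by
  obtain ⟨k, rfl⟩ : ∃ k, d = k + 2 := ⟨d - 2, by omega⟩
  have hval1 : ((1 : Fin (k+3)) : ℕ) = 1 := by
    rw [Fin.val_one']
    exact Nat.mod_eq_of_lt (by omega)
  have h10 : (1 : Fin (k+3)) ≠ 0 := by
    intro h
    have h' := congrArg Fin.val h
    rw [hval1] at h'
    simp at h'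
  have heta1 : eta (k+2) 1 = -1 := if_neg h10
  have he₀mem : (Pi.single 0 1 : Fin (k+3) → ℝ) ∈ Vplus (k+2) := by
    constructor
    · show (0:ℝ) < (Pi.single 0 1 : Fin (k+3) → ℝ) 0
      rw [Pi.single_eq_same]
      exact one_pos
    · rw [lorR_e0_e0]; norm_num
  have he₁e₁ : lorR (k+2) (Pi.single 1 1) (Pi.single (1:Fin (k+3)) 1) = -1 := by
    rw [lorR_single_left, heta1, Pi.single_eq_same]; ring
  have he₁e₀ : lorR (k+2) (Pi.single 1 1) (Pi.single (0:Fin (k+3)) 1) = 0 := by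
    rw [lorR_single_left, heta1, Pi.single_eq_of_ne h10]; ring
  have he₀e₁ : lorR (k+2) (Pi.single 0 1) (Pi.single (1:Fin (k+3)) 1) = 0 := by
    rw [lorR_e0_left, Pi.single_eq_of_ne (Ne.symm h10)]
  ext z
  simp only [mem_setOf_eq]
  constructor
  · -- hard direction
    rintro ⟨hz1, hz2⟩
    classical
    set x : Fin (k+3) → ℝ := fun j => (z j).re with hxdef
    set y : Fin (k+3) → ℝ := fun j => (z j).im with hydef
    have hzxy : z = fun j => (x j : ℂ) + Complex.I * (y j : ℂ) := by
      funext j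
      apply Complex.ext <;> simp [hxdef, hydef]
    have hdec := lorC_decomp (d := k+2) x y
    rw [← hzxy, hz1] at hdec
    have hre : lorR (k+2) x x - lorR (k+2) y y = -1 := by
      have h := congrArg Complex.re hdec
      simp at h
      linarith
    have him : lorR (k+2) x y = 0 := by
      have h := congrArg Complex.im hdec
      simp at h
      linarith
    set s : ℝ := lorR (k+2) y y with hsdef
    have hs : 0 < s := hz2.2
    have hxx : lorR (k+2) x x = s - 1 := by linarith
    set β : ℝ := Real.sqrt s with hβdef
    have hβ : 0 < β := Real.sqrt_pos.mpr hs
    have hβ2 : β * β = s := Real.mul_self_sqrt hs.le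
    set v : Fin (k+3) → ℝ := β⁻¹ • y with hvdef
    have hv0 : 0 < v 0 := by
      show 0 < β⁻¹ * y 0
      exact mul_pos (inv_pos.mpr hβ) hz2.1
    have hvv : lorR (k+2) v v = 1 := by
      rw [hvdef, lorR_smul_left, lorR_smul_right, ← hsdef, ← hβ2]
      field_simp
    have hyv : y = β • v := by
      rw [hvdef, smul_smul, mul_inv_cancel₀ hβ.ne', one_smul]
    -- the boost B with B e₀ = v
    set w₀ : Fin (k+3) → ℝ := Pi.single 0 1 + v with hw₀def
    have hw₀ : lorR (k+2) w₀ w₀ = 2 + 2 * v 0 := by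
      rw [hw₀def, lorR_add_left, lorR_add_right, lorR_add_right, lorR_e0_e0, lorR_e0_left,
        lorR_comm v (Pi.single 0 1), lorR_e0_left, hvv]
      ring
    have hw₀ne : lorR (k+2) w₀ w₀ ≠ 0 := by
      rw [hw₀]; exact (by linarith : (0:ℝ) < 2 + 2 * v 0).ne'
    have hvvne : lorR (k+2) v v ≠ 0 := by rw [hvv]; norm_num
    set B := (lrefl w₀ hw₀ne).trans (lrefl v hvvne) with hBdef
    have hB : ∀ a b, lorR (k+2) (B a) (B b) = lorR (k+2) a b := by
      intro a b
      show lorR _ (lrefl v hvvne (lrefl w₀ hw₀ne a)) (lrefl v hvvne (lrefl w₀ hw₀ne b)) = _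
      rw [lorR_lrefl, lorR_lrefl]
    have hBe₀ : B (Pi.single 0 1) = v := by
      show lrefl v hvvne (lrefl w₀ hw₀ne (Pi.single 0 1)) = v
      have h1 : lrefl w₀ hw₀ne (Pi.single 0 1) = -v := by
        rw [lrefl_apply]
        have hc : 2 * lorR (k+2) (Pi.single 0 1) w₀ / lorR (k+2) w₀ w₀ = 1 := by
          rw [hw₀, hw₀def, lorR_add_right, lorR_e0_e0, lorR_e0_left]
          have : (0:ℝ) < 2 + 2 * v 0 := by linarith
          field_simp
        rw [hc, one_smul, hw₀def]
        abel
      rw [h1, lrefl_apply]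
      have hc2 : 2 * lorR (k+2) (-v) v / lorR (k+2) v v = -2 := by
        rw [lorR_neg_left, hvv]; norm_num
      rw [hc2, neg_smul, sub_neg_eq_add, show ((2:ℝ)) • v = v + v from two_smul ℝ v]
      abel
    -- main construction
    have key : ∃ t ∈ Ioo (0:ℝ) Real.pi, ∃ g₀ : (Fin (k+3) → ℝ) ≃ₗ[ℝ] (Fin (k+3) → ℝ),
        (∀ a b, lorR (k+2) (g₀ a) (g₀ b) = lorR (k+2) a b) ∧
        (∀ j, x j = Real.cos t * g₀ (Pi.single 1 1) j) ∧
        (∀ j, y j = Real.sin t * g₀ (Pi.single 0 1) j) ∧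
        0 < (g₀ (Pi.single 0 1)) 0 := by
      by_cases hx0 : x = 0
      · -- purely imaginary case : t = π/2, g₀ = B
        have hs1 : s = 1 := by
          have h0 : lorR (k+2) x x = 0 := by rw [hx0]; simp [lorR]
          linarith
        have hβ1 : β = 1 := by rw [hβdef, hs1, Real.sqrt_one]
        refine ⟨Real.pi/2, ⟨by linarith [Real.pi_pos], by linarith [Real.pi_pos]⟩, B, hB,
          ?_, ?_, ?_⟩
        · intro j
          rw [Real.cos_pi_div_two, zero_mul, hx0]
          rfl
        · intro j
          rw [Real.sin_pi_div_two, one_mul, hBe₀]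
          have : y j = (β • v) j := by rw [← hyv]
          rw [this, hβ1, one_smul]
        · rw [hBe₀]; exact hv0
      · -- generic case
        have hxxlt : lorR (k+2) x x < 0 := spacelike x y hz2 him hx0
        have hs1 : s < 1 := by linarith
        set α : ℝ := Real.sqrt (1 - s) with hαdef
        have hα : 0 < α := Real.sqrt_pos.mpr (by linarith)
        have hα2 : α * α = 1 - s := Real.mul_self_sqrt (by linarith)
        set v₁ : Fin (k+3) → ℝ := α⁻¹ • x with hv₁def
        have hv₁v₁ : lorR (k+2) v₁ v₁ = -1 := by
          rw [hv₁def, lorR_smul_left, lorR_smul_right, hxx]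
          field_simp
          nlinarith [hα2]
        have hv₁v : lorR (k+2) v₁ v = 0 := by
          rw [hv₁def, hvdef, lorR_smul_left, lorR_smul_right, him]
          ring
        set u : Fin (k+3) → ℝ := B.symm v₁ with hudef
        have hBu : B u = v₁ := B.apply_symm_apply v₁
        have hsymm : ∀ a b, lorR (k+2) (B.symm a) (B.symm b) = lorR (k+2) a b := by
          intro a b
          rw [← hB (B.symm a) (B.symm b), B.apply_symm_apply, B.apply_symm_apply]
        have huu : lorR (k+2) u u = -1 := by rw [hudef, hsymm]; exact hv₁v₁
        have hue₀ : lorR (k+2) u (Pi.single 0 1) = 0 := by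
          have he₀B : (Pi.single 0 1 : Fin (k+3) → ℝ) = B.symm v := by
            rw [← hBe₀, B.symm_apply_apply]
          rw [hudef, he₀B, hsymm]
          exact hv₁v
        have hu0 : u 0 = 0 := by
          have h := hue₀
          rw [lorR_comm, lorR_e0_left] at h
          exact h
        have he₁u : lorR (k+2) (Pi.single 1 1) u = -u 1 := by
          rw [lorR_single_left, heta1]; ring
        -- the rotation R with R e₀ = e₀ and R e₁ = u
        have hrot : ∃ R : (Fin (k+3) → ℝ) ≃ₗ[ℝ] (Fin (k+3) → ℝ),
            (∀ a b, lorR (k+2) (R a) (R b) = lorR (k+2) a b) ∧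
            R (Pi.single 0 1) = Pi.single 0 1 ∧ R (Pi.single 1 1) = u := by
          have huune : lorR (k+2) u u ≠ 0 := by rw [huu]; norm_num
          by_cases hu1 : u 1 = 1
          · set w : Fin (k+3) → ℝ := Pi.single 1 1 + u with hwdef
            have hww : lorR (k+2) w w = -4 := by
              rw [hwdef, lorR_add_left, lorR_add_right, lorR_add_right, he₁e₁, he₁u,
                lorR_comm u (Pi.single 1 1), he₁u, huu, hu1]
              ring
            have hwwne : lorR (k+2) w w ≠ 0 := by rw [hww]; norm_num
            refine ⟨(lrefl w hwwne).trans (lrefl u huune), ?_, ?_, ?_⟩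
            · intro a b
              show lorR (k+2) (lrefl u huune (lrefl w hwwne a))
                (lrefl u huune (lrefl w hwwne b)) = lorR (k+2) a b
              rw [lorR_lrefl, lorR_lrefl]
            · show lrefl u huune (lrefl w hwwne (Pi.single 0 1)) = Pi.single 0 1
              have h1 : lrefl w hwwne (Pi.single 0 1) = Pi.single 0 1 := by
                rw [lrefl_apply]
                have h0 : lorR (k+2) (Pi.single 0 1) w = 0 := by
                  rw [hwdef, lorR_add_right, he₀e₁, lorR_e0_left, hu0]; ring
                rw [h0]
                simp
              rw [h1, lrefl_apply]
              have h0 : lorR (k+2) (Pi.single (0:Fin (k+3)) 1) u = 0 := by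
                rw [lorR_e0_left, hu0]
              rw [h0]
              simp
            · show lrefl u huune (lrefl w hwwne (Pi.single 1 1)) = u
              have h1 : lrefl w hwwne (Pi.single 1 1) = -u := by
                rw [lrefl_apply]
                have hc : 2 * lorR (k+2) (Pi.single 1 1) w / lorR (k+2) w w = 1 := by
                  rw [hww, hwdef, lorR_add_right, he₁e₁, he₁u, hu1]; norm_num
                rw [hc, one_smul, hwdef]
                abel
              rw [h1, lrefl_apply]
              have hc2 : 2 * lorR (k+2) (-u) u / lorR (k+2) u u = -2 := by
                rw [lorR_neg_left, huu]; norm_num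
              rw [hc2, neg_smul, sub_neg_eq_add, show ((2:ℝ)) • u = u + u from two_smul ℝ u]
              abel
          · set w : Fin (k+3) → ℝ := Pi.single 1 1 - u with hwdef
            have hww : lorR (k+2) w w = 2 * u 1 - 2 := by
              rw [hwdef, lorR_sub_left, lorR_sub_right, lorR_sub_right, he₁e₁, he₁u,
                lorR_comm u (Pi.single 1 1), he₁u, huu]
              ring
            have hden : 2 * u 1 - 2 ≠ 0 := by
              intro hcon; apply hu1; linarith
            have hwwne : lorR (k+2) w w ≠ 0 := by rw [hww]; exact hden
            refine ⟨lrefl w hwwne, ?_, ?_, ?_⟩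
            · intro a b; rw [lorR_lrefl]
            · rw [lrefl_apply]
              have h0 : lorR (k+2) (Pi.single 0 1) w = 0 := by
                rw [hwdef, lorR_sub_right, he₀e₁, lorR_e0_left, hu0]; ring
              rw [h0]
              simp
            · rw [lrefl_apply]
              have hc : 2 * lorR (k+2) (Pi.single 1 1) w / lorR (k+2) w w = 1 := by
                rw [hww, hwdef, lorR_sub_right, he₁e₁, he₁u]
                rw [div_eq_one_iff_eq hden]
                ring
              rw [hc, one_smul, hwdef]
              abel
        obtain ⟨R, hR, hRe₀, hRe₁⟩ := hrot
        set t := Real.arcsin β with htdef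
        have hβ1 : β ≤ 1 := by rw [hβdef]; exact Real.sqrt_le_one.mpr hs1.le
        have hsin : Real.sin t = β := Real.sin_arcsin (by linarith) hβ1
        have hcos : Real.cos t = α := by
          rw [htdef, Real.cos_arcsin, hαdef]
          congr 1
          rw [sq, hβ2]
        refine ⟨t, ⟨Real.arcsin_pos.mpr hβ,
          lt_of_le_of_lt (Real.arcsin_le_pi_div_two β) (by linarith [Real.pi_pos])⟩,
          R.trans B, ?_, ?_, ?_, ?_⟩
        · intro a b
          show lorR _ (B (R a)) (B (R b)) = _
          rw [hB, hR]
        · intro j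
          show x j = Real.cos t * (B (R (Pi.single 1 1))) j
          rw [hRe₁, hBu, hcos, hv₁def]
          show x j = α * (α⁻¹ * x j)
          field_simp
        · intro j
          show y j = Real.sin t * (B (R (Pi.single 0 1))) j
          rw [hRe₀, hBe₀, hsin]
          have : y j = (β • v) j := by rw [← hyv]
          rw [this]
          rfl
        · show 0 < (B (R (Pi.single 0 1))) 0
          rw [hRe₀, hBe₀]; exact hv0
    obtain ⟨t, htI, g₀, hg₀, hgx, hgy, hg0pos⟩ := key
    -- fix the determinant
    obtain ⟨g, hg, hdet1, hge1, hge0⟩ :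
        ∃ g : (Fin (k+3) → ℝ) ≃ₗ[ℝ] (Fin (k+3) → ℝ),
          (∀ a b, lorR (k+2) (g a) (g b) = lorR (k+2) a b) ∧
          LinearMap.det (g : (Fin (k+3) → ℝ) →ₗ[ℝ] (Fin (k+3) → ℝ)) = 1 ∧
          g (Pi.single 1 1) = g₀ (Pi.single 1 1) ∧
          g (Pi.single 0 1) = g₀ (Pi.single 0 1) := by
      rcases det_pm (g₀ : (Fin (k+3) → ℝ) →ₗ[ℝ] (Fin (k+3) → ℝ)) hg₀ with hdet | hdet
      · exact ⟨g₀, hg₀, hdet, rfl, rfl⟩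
      · set c2 : Fin (k+3) := ⟨2, by omega⟩ with hc2def
        have hc20 : c2 ≠ (0 : Fin (k+3)) := by
          intro h
          have := congrArg Fin.val h
          simp [hc2def] at this
        have hc21 : c2 ≠ (1 : Fin (k+3)) := by
          intro h
          have h' := congrArg Fin.val h
          rw [hval1] at h'
          simp [hc2def] at h'
        refine ⟨(flipE (k+2) c2).trans g₀, ?_, ?_, ?_, ?_⟩
        · intro a b
          show lorR _ (g₀ (flipE (k+2) c2 a)) (g₀ (flipE (k+2) c2 b)) = _
          rw [hg₀, lorR_flip]
        · rw [LinearEquiv.coe_trans, LinearMap.det_comp, hdet, flipE_det]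
          norm_num
        · show g₀ (flipE (k+2) c2 (Pi.single 1 1)) = g₀ (Pi.single 1 1)
          rw [flipE_single c2 1 hc21]
        · show g₀ (flipE (k+2) c2 (Pi.single 0 1)) = g₀ (Pi.single 0 1)
          rw [flipE_single c2 0 hc20]
    refine ⟨t, htI, g, ⟨hdet1, hg, cone_preserved g hg (by rw [hge0]; exact hg0pos)⟩, ?_⟩
    funext j
    have hre2 : (z j).re = Real.cos t * g (Pi.single 1 1) j := by
      have hx' : x j = (z j).re := by rw [hxdef]
      rw [← hx', hge1]
      exact hgx j
    have him2 : (z j).im = Real.sin t * g (Pi.single 0 1) j := by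
      have hy' : y j = (z j).im := by rw [hydef]
      rw [← hy', hge0]
      exact hgy j
    apply Complex.ext
    · rw [hre2]
      simp only [Complex.add_re, Complex.ofReal_re, Complex.mul_re, Complex.I_re,
        Complex.I_im, Complex.ofReal_im, zero_mul, one_mul, mul_zero, sub_self, add_zero, sub_zero]
    · rw [him2]
      simp only [Complex.add_im, Complex.ofReal_im, Complex.mul_im, Complex.I_re,
        Complex.I_im, Complex.ofReal_re, zero_mul, one_mul, mul_zero, zero_add, add_zero]
  · -- easy direction
    rintro ⟨t, ht, g, ⟨hgdet, hgpres, hgcone⟩, rfl⟩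
    have hsin : 0 < Real.sin t := Real.sin_pos_of_pos_of_lt_pi ht.1 ht.2
    set u : Fin (k+3) → ℝ := g (Pi.single 1 1) with hudef
    set v : Fin (k+3) → ℝ := g (Pi.single 0 1) with hvdef
    have huu : lorR (k+2) u u = -1 := by rw [hudef, hgpres]; exact he₁e₁
    have hvv : lorR (k+2) v v = 1 := by rw [hvdef, hgpres]; exact lorR_e0_e0
    have huv : lorR (k+2) u v = 0 := by rw [hudef, hvdef, hgpres]; exact he₁e₀
    have hvV : v ∈ Vplus (k+2) := by
      rw [hvdef, ← hgcone]
      exact mem_image_of_mem _ he₀mem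
    constructor
    · have hdec := lorC_decomp (d := k+2) (fun j => Real.cos t * u j) (fun j => Real.sin t * v j)
      rw [lorR_mul_mul, lorR_mul_mul, lorR_mul_mul, huu, hvv, huv] at hdec
      have hfin : ((Real.cos t * Real.cos t * (-1) - Real.sin t * Real.sin t * 1 : ℝ) : ℂ)
          + Complex.I * ((2 * (Real.cos t * Real.sin t * 0) : ℝ) : ℂ) = -1 := by
        have hsc := Complex.sin_sq_add_cos_sq (t : ℂ)
        push_cast
        linear_combination -hsc
      exact hdec.trans hfin
    · have himz : (fun j => ((((Real.cos t * u j : ℝ) : ℂ)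
          + Complex.I * ((Real.sin t * v j : ℝ) : ℂ)) ).im) = fun j => Real.sin t * v j := by
        funext j
        simp only [Complex.add_im, Complex.ofReal_im, Complex.mul_im, Complex.I_re,
        Complex.I_im, Complex.ofReal_re, zero_mul, one_mul, mul_zero, zero_add, add_zero]
      exact himz ▸ smul_mem_Vplus (Real.sin t) hsin v hvV

end
end

section
/- Let d ≥ 2. The fixed-point set of τ̄_h in the tube domain of de Sitter space admits the explicit parametrization: {z ∈ ℂ^{d+1} : [z,z] = −1, Im z ∈ V₊, τ̄_h(z) = z} = {(i·sin(s)·cosh(τ), i·sin(s)·sinh(τ), cos(s)·u) : τ ∈ ℝ, s ∈ (0,π), u ∈ ℝ^{d−1} with euclidean norm ‖u‖ = 1}, where the displayed vector has 0-th coordinate i·sin(s)·cosh(τ), 1-st coordinate i·sin(s)·sinh(τ), and coordinates 2,…,d given by cos(s)·u. (This is the orbit G^h.Exp_{e₂}(i V₊^π(e₂)^{−τ_h}) of the centralizer G^h = exp(ℝ h)·SO(d−1) of the boost h.) -/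
/- STATEMENT 3: Explicit parametrization of the fixed-point set of `τ̄_h` in the
   tube domain of de Sitter space:
   `T_M^{τ̄_h} = {(i sin s cosh τ, i sin s sinh τ, cos s · u) : τ ∈ ℝ, s ∈ (0,π), ‖u‖ = 1}`. -/

open Complex Set

noncomputable section

private lemma sum3 {M : Type*} [AddCommMonoid M] {n : ℕ} (f : Fin (n + 3) → M) :
    ∑ j, f j = f 0 + f 1 + ∑ k : Fin (n + 1), f k.succ.succ := by
  rw [Fin.sum_univ_succ, Fin.sum_univ_succ, ← add_assoc, Fin.succ_zero_eq_one]

private lemma fin_one_ne_zero (n : ℕ) : (1 : Fin (n + 3)) ≠ 0 := by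
  simp [Fin.ext_iff]

private lemma fin_succ_succ_ne_one {n : ℕ} (k : Fin (n + 1)) :
    (k.succ.succ : Fin (n + 3)) ≠ 1 := by
  intro h
  have := congrArg Fin.val h
  simp only [Fin.val_succ, Fin.val_one] at this
  omega

set_option maxHeartbeats 2000000 in
theorem tube_fixed_points (d : ℕ) (hd : 2 ≤ d) :
    {z : Fin (d + 1) → ℂ |
        (lorC d z z = -1 ∧ (fun j => (z j).im) ∈ Vplus d) ∧ tauBar d z = z} =
    {z : Fin (d + 1) → ℂ |
      ∃ τ : ℝ, ∃ s ∈ Ioo (0 : ℝ) Real.pi, ∃ u : EuclideanSpace ℝ (Fin (d - 1)),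
        ‖u‖ = 1 ∧
        z = fun j =>
          if j = 0 then Complex.I * (Real.sin s * Real.cosh τ : ℝ)
          else if j = 1 then Complex.I * (Real.sin s * Real.sinh τ : ℝ)
          else ((Real.cos s * u ⟨j.val - 2, by have := j.isLt; omega⟩ : ℝ) : ℂ)} := by
  obtain ⟨n, rfl⟩ : ∃ n, d = n + 2 := ⟨d - 2, by omega⟩
  have h10 : (1 : Fin (n + 3)) ≠ 0 := fin_one_ne_zero n
  have fin_cases3 : ∀ j : Fin (n + 3), j = 0 ∨ j = 1 ∨ ∃ k : Fin (n + 1), j = k.succ.succ := by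
    intro j
    induction j using Fin.cases with
    | zero => exact Or.inl rfl
    | succ i =>
      induction i using Fin.cases with
      | zero => exact Or.inr (Or.inl Fin.succ_zero_eq_one)
      | succ k => exact Or.inr (Or.inr ⟨k, rfl⟩)
  ext z
  simp only [mem_setOf_eq, Vplus]
  constructor
  · rintro ⟨⟨hlor, ha, hb⟩, hfix⟩
    -- extract reality conditions
    have h0 : (z 0).re = 0 := by
      have h := congrFun hfix 0
      simp only [tauBar, eq_self_iff_true, if_true] at h
      have h' := congrArg Complex.re h
      simp only [Complex.neg_re, Complex.conj_re] at h'
      linarith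
    have h1 : (z 1).re = 0 := by
      have h := congrFun hfix 1
      simp only [tauBar, if_neg h10, eq_self_iff_true, if_true] at h
      have h' := congrArg Complex.re h
      simp only [Complex.neg_re, Complex.conj_re] at h'
      linarith
    have him : ∀ k : Fin (n + 1), (z k.succ.succ).im = 0 := by
      intro k
      have h := congrFun hfix k.succ.succ
      simp only [tauBar, if_neg (Fin.succ_ne_zero _), if_neg (fin_succ_succ_ne_one k)] at h
      have h' := congrArg Complex.im h
      simp only [Complex.conj_im] at h'
      linarith
    set a := (z 0).im with ha'
    set b := (z 1).im with hb'
    have hz0 : z 0 = Complex.I * (a : ℝ) := by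
      apply Complex.ext <;> simp [h0, ha']
    have hz1 : z 1 = Complex.I * (b : ℝ) := by
      apply Complex.ext <;> simp [h1, hb']
    have hzk : ∀ k : Fin (n + 1), z k.succ.succ = ((z k.succ.succ).re : ℂ) := by
      intro k
      apply Complex.ext <;> simp [him k]
    set X := ∑ k : Fin (n + 1), (z k.succ.succ).re ^ 2 with hX
    have hXnn : 0 ≤ X := Finset.sum_nonneg fun k _ => sq_nonneg _
    have hsum : ∑ k : Fin (n + 1), z k.succ.succ * z k.succ.succ = (X : ℂ) := by
      rw [hX, Complex.ofReal_sum]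
      refine Finset.sum_congr rfl fun k _ => ?_
      conv_lhs => rw [hzk k]
      push_cast
      ring
    have hkey : a ^ 2 - b ^ 2 = 1 - X := by
      have h := hlor
      rw [lorC, sum3 (fun j => z j * z j)] at h
      simp only [hz0, hz1, hsum] at h
      have h2 : ((a ^ 2 - b ^ 2 - (1 - X) : ℝ) : ℂ) = 0 := by
        push_cast
        linear_combination -h + (a ^ 2 - b ^ 2) * Complex.I_sq
      have h3 : (a ^ 2 - b ^ 2 - (1 - X) : ℝ) = 0 := by exact_mod_cast h2
      linarith
    have hapos : 0 < a := ha
    have hab : b ^ 2 < a ^ 2 := by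
      have h := hb
      rw [lorR, sum3 (fun j => (z j).im * (z j).im)] at h
      simp only [him, mul_zero, Finset.sum_const_zero, add_zero] at h
      nlinarith [h]
    have hX1 : X < 1 := by nlinarith
    set c := Real.sqrt X with hc'
    have hc0 : 0 ≤ c := Real.sqrt_nonneg _
    have hc1 : c < 1 := by
      rw [hc', show (1 : ℝ) = Real.sqrt 1 by simp]
      exact Real.sqrt_lt_sqrt hXnn hX1
    have hc2 : c ^ 2 = X := Real.sq_sqrt hXnn
    set r := Real.sqrt (a ^ 2 - b ^ 2) with hr'
    have hr0 : 0 < r := Real.sqrt_pos.mpr (by nlinarith)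
    have hr2 : r ^ 2 = a ^ 2 - b ^ 2 := Real.sq_sqrt (by nlinarith)
    refine ⟨Real.arsinh (b / r), Real.arccos c,
      ⟨Real.arccos_pos.mpr hc1,
        lt_of_le_of_lt (Real.arccos_le_pi_div_two.mpr hc0) (by linarith [Real.pi_pos])⟩, ?_⟩
    have hcos : Real.cos (Real.arccos c) = c := Real.cos_arccos (by linarith) hc1.le
    have hsin : Real.sin (Real.arccos c) = r := by
      rw [Real.sin_arccos, hc2]
      rw [hr']
      congr 1
      linarith
    have hsinh : Real.sinh (Real.arsinh (b / r)) = b / r := Real.sinh_arsinh _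
    have hcosh : Real.cosh (Real.arsinh (b / r)) = a / r := by
      rw [Real.cosh_arsinh, show 1 + (b / r) ^ 2 = (a / r) ^ 2 by
        field_simp
        nlinarith [hr2]]
      exact Real.sqrt_sq (by positivity)
    have hra : r * (a / r) = a := by field_simp
    have hrb : r * (b / r) = b := by field_simp
    by_cases hXz : X = 0
    · -- all spatial coordinates vanish
      have hzero : ∀ k : Fin (n + 1), (z k.succ.succ).re = 0 := by
        intro k
        have h := (Finset.sum_eq_zero_iff_of_nonneg
          (fun k (_ : k ∈ Finset.univ) => sq_nonneg ((z k.succ.succ).re))).mp (hX ▸ hXz)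
        have := h k (Finset.mem_univ k)
        exact (pow_eq_zero_iff two_ne_zero).mp this
      have hcz : c = 0 := by rw [hc', hXz, Real.sqrt_zero]
      refine ⟨EuclideanSpace.single ⟨0, by omega⟩ 1, by simp, ?_⟩
      funext j
      rcases fin_cases3 j with rfl | rfl | ⟨k, rfl⟩
      · simp only [eq_self_iff_true, if_true, hsin, hcosh, hz0, hra]
      · simp only [if_neg h10, eq_self_iff_true, if_true, hsin, hsinh, hz1, hrb]
      · simp only [if_neg (Fin.succ_ne_zero _), if_neg (fin_succ_succ_ne_one k), hcos]
        rw [hzk k, hzero k, hcz, zero_mul]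
    · -- nonzero spatial part
      have hXpos : 0 < X := lt_of_le_of_ne hXnn (Ne.symm hXz)
      have hcpos : 0 < c := Real.sqrt_pos.mpr hXpos
      refine ⟨(WithLp.toLp 2 (fun k : Fin (n + 1) => (z k.succ.succ).re / c) : EuclideanSpace ℝ (Fin (n + 1))), ?_, ?_⟩
      · have hcne : c ≠ 0 := ne_of_gt hcpos
        rw [EuclideanSpace.norm_eq]
        show Real.sqrt (∑ k : Fin (n + 1), ‖(z k.succ.succ).re / c‖ ^ 2) = 1
        have hss : ∑ k : Fin (n + 1), ‖(z k.succ.succ).re / c‖ ^ 2 = 1 := by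
          simp only [Real.norm_eq_abs, _root_.sq_abs, div_pow]
          rw [← Finset.sum_div, ← hX, ← hc2, div_self (pow_ne_zero 2 hcne)]
        rw [hss, Real.sqrt_one]
      · funext j
        rcases fin_cases3 j with rfl | rfl | ⟨k, rfl⟩
        · simp only [eq_self_iff_true, if_true, hsin, hcosh, hz0, hra]
        · simp only [if_neg h10, eq_self_iff_true, if_true, hsin, hsinh, hz1, hrb]
        · have hcne : c ≠ 0 := ne_of_gt hcpos
          simp only [if_neg (Fin.succ_ne_zero _), if_neg (fin_succ_succ_ne_one k), hcos]
          conv_lhs => rw [hzk k]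
          congr 1
          show (z k.succ.succ).re = c * ((z k.succ.succ).re / c)
          field_simp
  · rintro ⟨τ, s, ⟨hs0, hsπ⟩, u, hu, hz⟩
    have hsin : 0 < Real.sin s := Real.sin_pos_of_pos_of_lt_pi hs0 hsπ
    have e0 : z 0 = Complex.I * ((Real.sin s * Real.cosh τ : ℝ) : ℂ) := by
      simp only [hz]; rw [if_true]
    have e1 : z 1 = Complex.I * ((Real.sin s * Real.sinh τ : ℝ) : ℂ) := by
      simp only [hz, if_neg h10, eq_self_iff_true, if_true]
    have ek : ∀ k : Fin (n + 1), z k.succ.succ = ((Real.cos s * u k : ℝ) : ℂ) := by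
      intro k
      simp only [hz]
      rw [if_neg (Fin.succ_ne_zero _), if_neg (fin_succ_succ_ne_one k)]
      rfl
    have hsum_u : ∑ k : Fin (n + 1), u k ^ 2 = 1 := by
      have h1 : Real.sqrt (∑ k, ‖u k‖ ^ 2) = 1 := by
        rw [← EuclideanSpace.norm_eq]; exact hu
      have h2 : ∑ k, ‖u k‖ ^ 2 = 1 := Real.sqrt_eq_one.mp h1
      have h3 : (∑ k : Fin (n + 1), u k ^ 2) = ∑ k, ‖u k‖ ^ 2 :=
        Finset.sum_congr rfl fun k _ => by rw [Real.norm_eq_abs, _root_.sq_abs]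
      rw [h3, h2]
    have hreal : (Real.sin s * Real.cosh τ) ^ 2 - (Real.sin s * Real.sinh τ) ^ 2
        + Real.cos s ^ 2 = 1 := by
      have h1 := Real.cosh_sq_sub_sinh_sq τ
      have h2 := Real.sin_sq_add_cos_sq s
      nlinarith [h1, h2]
    have hZsum : ∑ k : Fin (n + 1), z k.succ.succ * z k.succ.succ
        = ((Real.cos s ^ 2 : ℝ) : ℂ) := by
      have h1 : ∀ k : Fin (n + 1), z k.succ.succ * z k.succ.succ
          = (((Real.cos s * u k) ^ 2 : ℝ) : ℂ) := by
        intro k; rw [ek k]; push_cast; ring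
      rw [Finset.sum_congr rfl fun k _ => h1 k, ← Complex.ofReal_sum]
      congr 1
      have : ∑ k : Fin (n + 1), (Real.cos s * u k) ^ 2
          = Real.cos s ^ 2 * ∑ k : Fin (n + 1), u k ^ 2 := by
        rw [Finset.mul_sum]
        exact Finset.sum_congr rfl fun k _ => by ring
      rw [this, hsum_u, mul_one]
    refine ⟨⟨?_, ?_, ?_⟩, ?_⟩
    · rw [lorC, sum3 (fun j => z j * z j)]
      show 2 * (z 0 * z 0) - (z 0 * z 0 + z 1 * z 1
        + ∑ k : Fin (n + 1), z k.succ.succ * z k.succ.succ) = -1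
      rw [e0, e1, hZsum]
      have hrealC : ((Real.sin s * Real.cosh τ : ℝ) : ℂ) ^ 2
          - ((Real.sin s * Real.sinh τ : ℝ) : ℂ) ^ 2 + ((Real.cos s ^ 2 : ℝ) : ℂ) = 1 := by
        exact_mod_cast hreal
      linear_combination (((Real.sin s * Real.cosh τ : ℝ) : ℂ) ^ 2
        - ((Real.sin s * Real.sinh τ : ℝ) : ℂ) ^ 2) * Complex.I_sq - hrealC
    · show 0 < (z 0).im
      rw [e0]
      simp only [Complex.mul_im, Complex.I_re, Complex.I_im, Complex.ofReal_re,
        Complex.ofReal_im, zero_mul, one_mul, zero_add]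
      positivity
    · show 0 < lorR (n + 2) _ _
      rw [lorR, sum3 (fun j => (z j).im * (z j).im)]
      simp only [e0, e1, ek, Complex.mul_im, Complex.I_re, Complex.I_im, Complex.ofReal_re,
        Complex.ofReal_im, zero_mul, one_mul, zero_add, mul_zero, Finset.sum_const_zero,
        add_zero]
      have h1 := Real.cosh_sq_sub_sinh_sq τ
      nlinarith [mul_pos hsin hsin, h1]
    · funext j
      rcases fin_cases3 j with rfl | rfl | ⟨k, rfl⟩
      · simp only [tauBar, eq_self_iff_true, if_true, e0]
        rw [map_mul, Complex.conj_I, Complex.conj_ofReal]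
        ring
      · simp only [tauBar, if_neg h10, eq_self_iff_true, if_true, e1]
        rw [map_mul, Complex.conj_I, Complex.conj_ofReal]
        ring
      · simp only [tauBar, if_neg (Fin.succ_ne_zero _), if_neg (fin_succ_succ_ne_one k), ek,
          Complex.conj_ofReal]

end
end

section
/- Let V be a finite-dimensional real vector space, β a nondegenerate symmetric bilinear form on V, c ∈ ℝ with c ≠ 0, and Q_c = {v ∈ V : β(v,v) = c}. For p ∈ Q_c and v ∈ V with β(p,v) = 0, define γ : ℝ → V by γ(t) = C(t²·β(v,v)/c)·p + t·S(t²·β(v,v)/c)·v. Then: (i) γ(t) ∈ Q_c for all t ∈ ℝ; (ii) γ(0) = p and γ has derivative v at t = 0; (iii) γ(2t − s) = s_{γ(t)}(γ(s)) for all t, s ∈ ℝ. In other words, γ is the geodesic of the symmetric space Q_c through p with initial velocity v, so the exponential function of Q_c is Exp_p(v) = C(β(v,v)/β(p,p))·p + S(β(v,v)/β(p,p))·v. -/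
/- STATEMENT 5: Geodesics and the exponential function of the quadric
   `Q_c = {v : β(v,v) = c}` (Proposition on quadrics). -/

noncomputable section

/-- `C(z) = ∑_{k=0}^∞ (−1)^k z^k/(2k)!`, so that `cos z = C(z²)`. -/
def Cfun (z : ℝ) : ℝ := ∑' k : ℕ, (-1 : ℝ) ^ k * z ^ k / (Nat.factorial (2 * k))

/-- `S(z) = ∑_{k=0}^∞ (−1)^k z^k/(2k+1)!`, so that `sin z = z·S(z²)`. -/
def Sfun (z : ℝ) : ℝ := ∑' k : ℕ, (-1 : ℝ) ^ k * z ^ k / (Nat.factorial (2 * k + 1))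

lemma ofReal_Cfun (lam : ℝ) (μ : ℂ) (hμ : μ ^ 2 = (lam : ℂ)) (t : ℝ) :
    ((Cfun (t ^ 2 * lam) : ℝ) : ℂ) = Complex.cos ((t : ℂ) * μ) := by
  have h := Complex.hasSum_cos ((t : ℂ) * μ)
  have e : ∀ k : ℕ, (-1 : ℂ) ^ k * ((t : ℂ) * μ) ^ (2 * k) / ((2 * k).factorial : ℂ)
      = (((-1 : ℝ) ^ k * (t ^ 2 * lam) ^ k / ((2 * k).factorial : ℝ) : ℝ) : ℂ) := by
    intro k
    have h2 : ((t : ℂ) * μ) ^ (2 * k) = (((t ^ 2 * lam : ℝ) : ℂ)) ^ k := by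
      rw [pow_mul, mul_pow, hμ]; push_cast; ring
    rw [h2]; push_cast; ring
  simp only [e] at h
  have hre : HasSum (fun k : ℕ => (-1 : ℝ) ^ k * (t ^ 2 * lam) ^ k / ((2 * k).factorial : ℝ))
      ((Complex.cos ((t : ℂ) * μ)).re) := by
    have := Complex.reCLM.hasSum h
    simp only [Complex.reCLM_apply, Complex.ofReal_re] at this
    exact this
  have him : HasSum (fun _ : ℕ => (0 : ℝ)) ((Complex.cos ((t : ℂ) * μ)).im) := by
    have := Complex.imCLM.hasSum h
    simp only [Complex.imCLM_apply, Complex.ofReal_im] at this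
    exact this
  have him0 : (Complex.cos ((t : ℂ) * μ)).im = 0 := him.unique hasSum_zero
  have hC : Cfun (t ^ 2 * lam) = (Complex.cos ((t : ℂ) * μ)).re := hre.tsum_eq
  apply Complex.ext <;> simp [hC, him0]

lemma ofReal_Sfun (lam : ℝ) (μ : ℂ) (hμ : μ ^ 2 = (lam : ℂ)) (t : ℝ) :
    ((t * Sfun (t ^ 2 * lam) : ℝ) : ℂ) * μ = Complex.sin ((t : ℂ) * μ) := by
  by_cases hμ0 : μ = 0
  · simp [hμ0]
  · have h := Complex.hasSum_sin ((t : ℂ) * μ)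
    have e : ∀ k : ℕ, (-1 : ℂ) ^ k * ((t : ℂ) * μ) ^ (2 * k + 1) / ((2 * k + 1).factorial : ℂ)
        = (((t * ((-1 : ℝ) ^ k * (t ^ 2 * lam) ^ k / ((2 * k + 1).factorial : ℝ)) : ℝ)) : ℂ) * μ := by
      intro k
      have h2 : ((t : ℂ) * μ) ^ (2 * k + 1) = (((t ^ 2 * lam : ℝ) : ℂ)) ^ k * ((t : ℂ) * μ) := by
        rw [pow_succ, pow_mul, mul_pow, hμ]; push_cast; ring
      rw [h2]; push_cast; ring
    simp only [e] at h
    have h2 : HasSum (fun k : ℕ => ((t * ((-1 : ℝ) ^ k * (t ^ 2 * lam) ^ k / ((2 * k + 1).factorial : ℝ)) : ℝ) : ℂ))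
        (Complex.sin ((t : ℂ) * μ) / μ) := by
      simpa [mul_div_cancel_right₀ _ hμ0] using h.div_const μ
    have hre : HasSum (fun k : ℕ => t * ((-1 : ℝ) ^ k * (t ^ 2 * lam) ^ k / ((2 * k + 1).factorial : ℝ)))
        ((Complex.sin ((t : ℂ) * μ) / μ).re) := by
      have := Complex.reCLM.hasSum h2
      simp only [Complex.reCLM_apply, Complex.ofReal_re] at this
      exact this
    have him : HasSum (fun _ : ℕ => (0 : ℝ)) ((Complex.sin ((t : ℂ) * μ) / μ).im) := by
      have := Complex.imCLM.hasSum h2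
      simp only [Complex.imCLM_apply, Complex.ofReal_im] at this
      exact this
    have him0 : (Complex.sin ((t : ℂ) * μ) / μ).im = 0 := him.unique hasSum_zero
    have hS : t * Sfun (t ^ 2 * lam) = (Complex.sin ((t : ℂ) * μ) / μ).re := by
      rw [Sfun, ← tsum_mul_left]; exact hre.tsum_eq
    have hc : ((t * Sfun (t ^ 2 * lam) : ℝ) : ℂ) = Complex.sin ((t : ℂ) * μ) / μ := by
      apply Complex.ext <;> simp [hS, him0]
    rw [hc, div_mul_cancel₀ _ hμ0]

lemma cos_double_sub (A B : ℂ) :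
    Complex.cos (2 * A - B)
      = 2 * (Complex.cos A * Complex.cos B + Complex.sin A * Complex.sin B) * Complex.cos A
        - Complex.cos B := by
  have h4 := Complex.sin_sq_add_cos_sq A
  rw [show 2 * A - B = (A - B) + A from by ring, Complex.cos_add, Complex.cos_sub,
    Complex.sin_sub]
  linear_combination (-Complex.cos B) * h4

lemma sin_double_sub (A B : ℂ) :
    Complex.sin (2 * A - B)
      = 2 * (Complex.cos A * Complex.cos B + Complex.sin A * Complex.sin B) * Complex.sin A
        - Complex.sin B := by
  have h4 := Complex.sin_sq_add_cos_sq A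
  rw [show 2 * A - B = (A - B) + A from by ring, Complex.sin_add, Complex.cos_sub,
    Complex.sin_sub]
  linear_combination (-Complex.sin B) * h4

lemma Cfun_zero : Cfun 0 = 1 := by
  rw [Cfun, tsum_eq_single 0 (by intro k hk; simp [zero_pow hk])]
  simp

lemma Sfun_zero : Sfun 0 = 1 := by
  rw [Sfun, tsum_eq_single 0 (by intro k hk; simp [zero_pow hk])]
  simp [Nat.factorial]


theorem quadric_geodesics
    {V : Type*} [NormedAddCommGroup V] [NormedSpace ℝ V] [FiniteDimensional ℝ V]
    (β : V →ₗ[ℝ] V →ₗ[ℝ] ℝ)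
    (hβsymm : ∀ v w, β v w = β w v)
    (hβnondeg : ∀ v, (∀ w, β v w = 0) → v = 0)
    (c : ℝ) (hc : c ≠ 0)
    (p v : V) (hp : β p p = c) (hpv : β p v = 0)
    (γ : ℝ → V)
    (hγ : ∀ t, γ t = Cfun (t ^ 2 * β v v / c) • p + (t * Sfun (t ^ 2 * β v v / c)) • v) :
    (∀ t, β (γ t) (γ t) = c) ∧
    (γ 0 = p ∧ HasDerivAt γ v 0) ∧
    (∀ t s : ℝ, γ (2 * t - s) = -(γ s) + (2 * β (γ t) (γ s) / β (γ t) (γ t)) • γ t) := by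
  set b := β v v with hbdef
  have hvp : β v p = 0 := by rw [hβsymm]; exact hpv
  have hquad : ∀ a₁ b₁ a₂ b₂ : ℝ,
      β (a₁ • p + b₁ • v) (a₂ • p + b₂ • v) = a₁ * a₂ * c + b₁ * b₂ * b := by
    intro a₁ b₁ a₂ b₂
    simp only [map_add, map_smul, LinearMap.add_apply, LinearMap.smul_apply, smul_eq_mul,
      hp, hpv, hvp, ← hbdef]
    ring
  have hγ0 : γ 0 = p := by
    rw [hγ 0]
    norm_num [Cfun_zero, Sfun_zero]
  by_cases hb0 : b = 0
  · -- degenerate case: β v v = 0, γ t = p + t • v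
    have hγ' : ∀ t, γ t = p + t • v := by
      intro t
      rw [hγ t, hb0]
      norm_num [Cfun_zero, Sfun_zero]
    have hβts : ∀ t s : ℝ, β (γ t) (γ s) = c := by
      intro t s
      rw [hγ' t, hγ' s, show p + t • v = (1:ℝ) • p + t • v from by rw [one_smul],
        show p + s • v = (1:ℝ) • p + s • v from by rw [one_smul], hquad, hb0]
      ring
    refine ⟨fun t => hβts t t, ⟨hγ0, ?_⟩, ?_⟩
    · have : γ = fun t => p + t • v := funext hγ'
      rw [this]
      simpa using ((hasDerivAt_id (0:ℝ)).smul_const v).const_add p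
    · intro t s
      rw [hβts t s, hβts t t, show 2 * c / c = 2 from by
          rw [mul_div_assoc, div_self hc, mul_one],
        hγ' (2*t-s), hγ' s, hγ' t]
      module
  · -- main case
    set lam := b / c with hlam
    have hlam0 : lam ≠ 0 := div_ne_zero hb0 hc
    set μ : ℂ := if 0 ≤ lam then (Real.sqrt lam : ℂ) else (Real.sqrt (-lam) : ℂ) * Complex.I
      with hμdef
    have hμ2 : μ ^ 2 = (lam : ℂ) := by
      rw [hμdef]
      split_ifs with h
      · rw [← Complex.ofReal_pow, Real.sq_sqrt h]
      · rw [mul_pow, Complex.I_sq, ← Complex.ofReal_pow, Real.sq_sqrt (by linarith)]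
        push_cast; ring
    have hμ0 : μ ≠ 0 := by
      intro h
      apply hlam0
      have : (lam : ℂ) = 0 := by rw [← hμ2, h]; ring
      exact_mod_cast this
    have hu : ∀ t : ℝ, t ^ 2 * b / c = t ^ 2 * lam := fun t => mul_div_assoc _ _ _
    have hF : ∀ t : ℝ, ((Cfun (t ^ 2 * b / c) : ℝ) : ℂ) = Complex.cos ((t : ℂ) * μ) := by
      intro t; rw [hu t]; exact ofReal_Cfun lam μ hμ2 t
    have hG : ∀ t : ℝ, ((t * Sfun (t ^ 2 * b / c) : ℝ) : ℂ) * μ = Complex.sin ((t : ℂ) * μ) := by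
      intro t; rw [hu t]; exact ofReal_Sfun lam μ hμ2 t
    have hlc : lam * c = b := div_mul_cancel₀ b hc
    have key1 : ∀ t : ℝ, Cfun (t ^ 2 * b / c) * Cfun (t ^ 2 * b / c) * c
        + (t * Sfun (t ^ 2 * b / c)) * (t * Sfun (t ^ 2 * b / c)) * b = c := by
      intro t
      have h4 := Complex.sin_sq_add_cos_sq ((t : ℂ) * μ)
      rw [← hF t, ← hG t] at h4
      have hbc : ((b : ℝ) : ℂ) = μ ^ 2 * (c : ℂ) := by
        rw [hμ2]; exact_mod_cast hlc.symm
      have hC : ((Cfun (t ^ 2 * b / c) * Cfun (t ^ 2 * b / c) * c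
          + (t * Sfun (t ^ 2 * b / c)) * (t * Sfun (t ^ 2 * b / c)) * b : ℝ) : ℂ) = (c : ℂ) := by
        push_cast at h4 hbc ⊢
        linear_combination (c : ℂ) * h4
          + ((t : ℂ) * ((Sfun (t ^ 2 * b / c) : ℝ) : ℂ)) ^ 2 * hbc
      exact_mod_cast hC
    have key2 : ∀ t s : ℝ, Cfun ((2 * t - s) ^ 2 * b / c)
        = 2 * (Cfun (t ^ 2 * b / c) * Cfun (s ^ 2 * b / c)
            + (t * Sfun (t ^ 2 * b / c)) * (s * Sfun (s ^ 2 * b / c)) * lam)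
          * Cfun (t ^ 2 * b / c) - Cfun (s ^ 2 * b / c) := by
      intro t s
      rw [← Complex.ofReal_inj]
      have hL := hF (2 * t - s)
      rw [show ((2 * t - s : ℝ) : ℂ) * μ = 2 * ((t : ℂ) * μ) - (s : ℂ) * μ from by
        push_cast; ring] at hL
      have hid := cos_double_sub ((t : ℂ) * μ) ((s : ℂ) * μ)
      rw [← hF t, ← hF s, ← hG t, ← hG s] at hid
      rw [hL, hid]
      push_cast
      linear_combination (2 * ((t : ℂ) * ((Sfun (t ^ 2 * b / c) : ℝ) : ℂ))
        * ((s : ℂ) * ((Sfun (s ^ 2 * b / c) : ℝ) : ℂ))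
        * ((Cfun (t ^ 2 * b / c) : ℝ) : ℂ)) * hμ2
    have key3 : ∀ t s : ℝ, (2 * t - s) * Sfun ((2 * t - s) ^ 2 * b / c)
        = 2 * (Cfun (t ^ 2 * b / c) * Cfun (s ^ 2 * b / c)
            + (t * Sfun (t ^ 2 * b / c)) * (s * Sfun (s ^ 2 * b / c)) * lam)
          * (t * Sfun (t ^ 2 * b / c)) - s * Sfun (s ^ 2 * b / c) := by
      intro t s
      rw [← Complex.ofReal_inj]
      apply mul_right_cancel₀ hμ0
      have hL := hG (2 * t - s)
      rw [show ((2 * t - s : ℝ) : ℂ) * μ = 2 * ((t : ℂ) * μ) - (s : ℂ) * μ from by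
        push_cast; ring] at hL
      have hid := sin_double_sub ((t : ℂ) * μ) ((s : ℂ) * μ)
      rw [← hF t, ← hF s, ← hG t, ← hG s] at hid
      rw [hL, hid]
      push_cast
      linear_combination (2 * ((t : ℂ) * ((Sfun (t ^ 2 * b / c) : ℝ) : ℂ)) ^ 2
        * ((s : ℂ) * ((Sfun (s ^ 2 * b / c) : ℝ) : ℂ)) * μ) * hμ2
    have parti : ∀ t, β (γ t) (γ t) = c := by
      intro t
      rw [hγ t, hquad]
      exact key1 t
    refine ⟨parti, ⟨hγ0, ?_⟩, ?_⟩
    · -- derivative at 0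
      have hγfun : γ = fun t => Cfun (t ^ 2 * b / c) • p + (t * Sfun (t ^ 2 * b / c)) • v :=
        funext hγ
      have hinner : HasDerivAt (fun w : ℂ => w * μ) μ (((0:ℝ) : ℂ)) := by
        simpa using (hasDerivAt_id (((0:ℝ) : ℂ))).mul_const μ
      have hcosR : HasDerivAt (fun t : ℝ => Complex.cos ((t : ℂ) * μ)) 0 0 := by
        have := (hinner.ccos).comp_ofReal
        simpa using this
      have hsinR : HasDerivAt (fun t : ℝ => μ⁻¹ * Complex.sin ((t : ℂ) * μ)) 1 0 := by
        have := ((hinner.csin).const_mul μ⁻¹).comp_ofReal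
        have h1 : μ⁻¹ * (Complex.cos (((0:ℝ) : ℂ) * μ) * μ) = 1 := by
          simp [inv_mul_cancel₀ hμ0, mul_comm μ⁻¹ μ, mul_inv_cancel₀ hμ0]
        rwa [h1] at this
      have hre1 : HasDerivAt (fun t : ℝ => (Complex.cos ((t : ℂ) * μ)).re) 0 0 := by
        simpa [Function.comp_def] using Complex.reCLM.hasFDerivAt.comp_hasDerivAt 0 hcosR
      have hre2 : HasDerivAt (fun t : ℝ => (μ⁻¹ * Complex.sin ((t : ℂ) * μ)).re) 1 0 := by
        simpa [Function.comp_def] using Complex.reCLM.hasFDerivAt.comp_hasDerivAt 0 hsinR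
      have hf0 : HasDerivAt (fun t : ℝ => Cfun (t ^ 2 * b / c)) 0 0 :=
        hre1.congr_of_eventuallyEq (Filter.Eventually.of_forall fun t => by
          show Cfun (t ^ 2 * b / c) = (Complex.cos ((t : ℂ) * μ)).re
          rw [← hF t, Complex.ofReal_re])
      have hg0 : HasDerivAt (fun t : ℝ => t * Sfun (t ^ 2 * b / c)) 1 0 :=
        hre2.congr_of_eventuallyEq (Filter.Eventually.of_forall fun t => by
          show t * Sfun (t ^ 2 * b / c) = (μ⁻¹ * Complex.sin ((t : ℂ) * μ)).re
          have e : μ⁻¹ * Complex.sin ((t : ℂ) * μ)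
              = ((t * Sfun (t ^ 2 * b / c) : ℝ) : ℂ) := by
            rw [← hG t, mul_comm, mul_assoc, mul_inv_cancel₀ hμ0, mul_one]
          rw [e, Complex.ofReal_re])
      have := (hf0.smul_const p).add (hg0.smul_const v)
      rw [hγfun]
      simpa [Pi.add_def] using this
    · intro t s
      rw [hγ (2 * t - s), hγ s, hγ t, hquad, hquad, key1 t, key2 t s, key3 t s,
        show 2 * (Cfun (t ^ 2 * b / c) * Cfun (s ^ 2 * b / c) * c
            + (t * Sfun (t ^ 2 * b / c)) * (s * Sfun (s ^ 2 * b / c)) * b) / c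
          = 2 * (Cfun (t ^ 2 * b / c) * Cfun (s ^ 2 * b / c)
            + (t * Sfun (t ^ 2 * b / c)) * (s * Sfun (s ^ 2 * b / c)) * lam) from by
          rw [hlam]; field_simp]
      module

end
end

section
/- Let V be a finite-dimensional real vector space, β a nondegenerate symmetric bilinear form on V, c ∈ ℝ with c ≠ 0, and Q_c = {v ∈ V : β(v,v) = c}. Then for all x, y ∈ Q_c: (i) s_x maps Q_c into Q_c; (ii) s_x ∘ s_x is the identity on V; (iii) s_x(s_y(z)) = s_{s_x(y)}(s_x(z)) for all z ∈ Q_c; (iv) the fixed-point set of s_x in Q_c is exactly {x, −x}, so x is an isolated fixed point of s_x. Hence (Q_c, μ) with μ(x,y) = s_x(y) is a symmetric space in the sense of Loos. -/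
/- STATEMENT 6: The quadric `Q_c` with the point reflections `s_x` is a symmetric
   space in the sense of Loos. -/

theorem quadric_is_symmetric_space
    {V : Type*} [AddCommGroup V] [Module ℝ V] [FiniteDimensional ℝ V]
    (β : V →ₗ[ℝ] V →ₗ[ℝ] ℝ)
    (hβsymm : ∀ v w, β v w = β w v)
    (hβnondeg : ∀ v, (∀ w, β v w = 0) → v = 0)
    (c : ℝ) (hc : c ≠ 0)
    (Q : Set V) (hQ : Q = {v : V | β v v = c})
    (s : V → V → V) (hs : ∀ x y, s x y = -y + (2 * β x y / β x x) • x) :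
    ∀ x ∈ Q, ∀ y ∈ Q,
      (s x y ∈ Q) ∧
      (∀ z : V, s x (s x z) = z) ∧
      (∀ z ∈ Q, s x (s y z) = s (s x y) (s x z)) ∧
      ({w ∈ Q | s x w = w} = {x, -x}) := by
  subst hQ
  intro x hx y hy
  simp only [Set.mem_setOf_eq] at hx hy
  -- a helper: β of reflections
  have hβs : ∀ u v : V, β (s x u) (s x v) = β u v := by
    intro u v
    simp only [hs, hx, map_add, map_neg, map_smul, LinearMap.add_apply,
      LinearMap.neg_apply, LinearMap.smul_apply, smul_eq_mul]
    rw [hβsymm u x]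
    field_simp
    ring
  have hmemQ : ∀ v : V, β v v = c → s x v ∈ {v : V | β v v = c} := by
    intro v hv
    simp only [Set.mem_setOf_eq]
    rw [show β (s x v) (s x v) = β v v from hβs v v, hv]
  have hinv : ∀ z : V, s x (s x z) = z := by
    intro z
    simp only [hs, hx, map_add, map_neg, map_smul, smul_eq_mul, LinearMap.add_apply,
      LinearMap.neg_apply, LinearMap.smul_apply]
    match_scalars <;> field_simp <;> ring
  refine ⟨hmemQ y hy, hinv, ?_, ?_⟩
  · intro z hz
    simp only [Set.mem_setOf_eq] at hz
    have hsxy : β (s x y) (s x y) = c := by rw [hβs y y, hy]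
    rw [show s (s x y) (s x z) = -(s x z) + (2 * β (s x y) (s x z) / β (s x y) (s x y)) • (s x y)
        from hs _ _, hβs y z, hsxy]
    simp only [hs, hx, hy, map_add, map_neg, map_smul, smul_eq_mul, LinearMap.add_apply,
      LinearMap.neg_apply, LinearMap.smul_apply]
    match_scalars <;> field_simp <;> ring
  · ext w
    simp only [Set.mem_setOf_eq, Set.mem_sep_iff, Set.mem_insert_iff, Set.mem_singleton_iff]
    constructor
    · rintro ⟨hw, heq⟩
      rw [hs, hx] at heq
      have h2 : (2 : ℝ) • w = (2 * β x w / c) • x := by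
        linear_combination (norm := module) -heq
      have hwx : w = (β x w / c) • x := by
        linear_combination (norm := module) (2 : ℝ)⁻¹ • h2
      have hww := hw
      rw [hwx] at hww
      simp only [map_smul, LinearMap.smul_apply, smul_eq_mul, hx] at hww
      have ha : β x w * β x w = c * c := by
        field_simp at hww
        nlinarith [hww]
      rcases mul_self_eq_mul_self_iff.mp ha with h | h
      · left
        rw [hwx, h, div_self hc, one_smul]
      · right
        rw [hwx, h, neg_div, div_self hc, neg_smul, one_smul]
    · rintro (rfl | rfl)
      · refine ⟨hx, ?_⟩
        rw [hs, hx]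
        match_scalars
        field_simp
        ring
      · refine ⟨by simpa using hx, ?_⟩
        rw [hs]
        simp only [map_neg, smul_eq_mul, hx]
        match_scalars
        field_simp
        ring
end

section
/- Let 𝔤 be a finite-dimensional real Lie algebra, τ an involutive Lie algebra automorphism of 𝔤 with (−1)-eigenspace 𝔮 = {x ∈ 𝔤 : τ(x) = −x}, and h ∈ 𝔤 with τ(h) = h and (ad h)³ = ad h (an Euler element: ad h is diagonalizable with eigenvalues in {−1,0,1}). Let C ⊆ 𝔮 be a closed convex cone with e^{t·ad h}(C) = C for all t ∈ ℝ, and set C₊ = C ∩ ker(ad h − 1) and C₋ = (−C) ∩ ker(ad h + 1). Then: (i) the spectral projection p₊ = ½((ad h)² + ad h) onto ker(ad h − 1) satisfies p₊(C) = C₊; (ii) the spectral projection p₋ = ½((ad h)² − ad h) onto ker(ad h + 1) satisfies p₋(C) = −C₋; (iii) the spectral projection (ad h)² onto ker((ad h)² − 1) satisfies (ad h)²(C) = C₊ − C₋ = (C ∩ ker(ad h − 1)) + (C ∩ ker(ad h + 1)); (iv) if C is pointed (C ∩ (−C) = {0}) then C₊ and C₋ are pointed; (v) if C is generating in 𝔮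 (C − C = 𝔮) then C₊ − C₊ = 𝔮 ∩ ker(ad h − 1) and C₋ − C₋ = 𝔮 ∩ ker(ad h + 1). -/
/- STATEMENT 7: Projections of an invariant cone onto the eigenspaces of an Euler
   element (Proposition 2.18-type statement). -/

open scoped Pointwise

/-- If `A v = c • v` then `exp A v = e^c • v`. -/
lemma exp_apply_eigen {E : Type*} [NormedAddCommGroup E] [NormedSpace ℝ E] [CompleteSpace E]
    (A : E →L[ℝ] E) (c : ℝ) (v : E) (hv : A v = c • v) :
    NormedSpace.exp A v = Real.exp c • v := by
  have hpow : ∀ n : ℕ, (A ^ n) v = c ^ n • v := by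
    intro n
    induction n with
    | zero => simp
    | succ n ih =>
      rw [pow_succ, pow_succ, ContinuousLinearMap.mul_apply, hv, map_smul, ih, smul_smul,
        mul_comm]
  have hs : Summable (fun n : ℕ => (n.factorial : ℝ)⁻¹ • A ^ n) :=
    NormedSpace.expSeries_summable' A
  have h1 : NormedSpace.exp A v
      = ∑' n : ℕ, ((n.factorial : ℝ)⁻¹ • A ^ n) v := by
    rw [NormedSpace.exp_eq_tsum ℝ]
    exact ((ContinuousLinearMap.apply ℝ E v).map_tsum hs)
  rw [h1]
  have h2 : ∀ n : ℕ, ((n.factorial : ℝ)⁻¹ • A ^ n) v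
      = ((n.factorial : ℝ)⁻¹ * c ^ n) • v := by
    intro n
    rw [ContinuousLinearMap.smul_apply, hpow, smul_smul]
  simp only [h2]
  rw [Summable.tsum_smul_const ?_]
  · congr 1
    rw [Real.exp_eq_exp_ℝ, NormedSpace.exp_eq_tsum ℝ]
    simp [smul_eq_mul]
  · have := NormedSpace.expSeries_summable' (𝕂 := ℝ) c
    simpa [smul_eq_mul] using this

/-- Key lemma: the spectral projections `p₊` and `p₋` of an Euler element map an
invariant closed cone into itself. -/
lemma euler_key {𝔤 : Type*} [NormedAddCommGroup 𝔤] [NormedSpace ℝ 𝔤] [FiniteDimensional ℝ 𝔤]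
    (bracket : 𝔤 →ₗ[ℝ] 𝔤 →ₗ[ℝ] 𝔤) (h : 𝔤)
    (heuler : ∀ y, bracket h (bracket h (bracket h y)) = bracket h y)
    (C : Set 𝔤) (hCclosed : IsClosed C)
    (hCsmul : ∀ r : ℝ, 0 ≤ r → ∀ x ∈ C, r • x ∈ C)
    (hCinv : ∀ t : ℝ,
      ⇑(NormedSpace.exp (t • LinearMap.toContinuousLinearMap (bracket h))) '' C = C)
    {x : 𝔤} (hx : x ∈ C) :
    (1/2:ℝ) • (bracket h (bracket h x) + bracket h x) ∈ C ∧
    (1/2:ℝ) • (bracket h (bracket h x) - bracket h x) ∈ C := by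
  set A := LinearMap.toContinuousLinearMap (bracket h) with hAdef
  have hAapp : ∀ y, A y = bracket h y := fun y => rfl
  set q : 𝔤 := (1/2:ℝ) • (bracket h (bracket h x) + bracket h x) with hqdef
  set m : 𝔤 := (1/2:ℝ) • (bracket h (bracket h x) - bracket h x) with hmdef
  set z : 𝔤 := x - bracket h (bracket h x) with hzdef
  have hq : bracket h q = q := by
    rw [hqdef, map_smul, map_add, heuler, add_comm]
  have hm : bracket h m = -m := by
    rw [hmdef, map_smul, map_sub, heuler, ← smul_neg, neg_sub]
  have hz : bracket h z = 0 := by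
    rw [hzdef, map_sub, heuler, sub_self]
  have hsum : q + m + z = x := by
    rw [hqdef, hmdef, hzdef]; module
  have hexp : ∀ t : ℝ, NormedSpace.exp (t • A) x
      = Real.exp t • q + Real.exp (-t) • m + z := by
    intro t
    have hq' : (t • A) q = t • q := by
      rw [ContinuousLinearMap.smul_apply, hAapp, hq]
    have hm' : (t • A) m = (-t) • m := by
      rw [ContinuousLinearMap.smul_apply, hAapp, hm, smul_neg, neg_smul]
    have hz' : (t • A) z = (0:ℝ) • z := by
      rw [ContinuousLinearMap.smul_apply, hAapp, hz, smul_zero, zero_smul]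
    have e1 := exp_apply_eigen (t • A) t q hq'
    have e2 := exp_apply_eigen (t • A) (-t) m hm'
    have e3 := exp_apply_eigen (t • A) 0 z hz'
    rw [Real.exp_zero, one_smul] at e3
    calc NormedSpace.exp (t • A) x
        = NormedSpace.exp (t • A) (q + m + z) := by rw [hsum]
      _ = NormedSpace.exp (t • A) q + NormedSpace.exp (t • A) m
            + NormedSpace.exp (t • A) z := by rw [map_add, map_add]
      _ = Real.exp t • q + Real.exp (-t) • m + z := by rw [e1, e2, e3]
  have hmem : ∀ t : ℝ, NormedSpace.exp (t • A) x ∈ C := by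
    intro t
    rw [← hCinv t]
    exact Set.mem_image_of_mem _ hx
  clear_value A q m z
  constructor
  · -- q ∈ C via t → ∞
    have hmemq : ∀ t : ℝ, q + Real.exp (-(2*t)) • m + Real.exp (-t) • z ∈ C := by
      intro t
      have h2 := hCsmul (Real.exp (-t)) (Real.exp_pos _).le _ (hmem t)
      rw [hexp t] at h2
      have e1 : Real.exp (-t) * Real.exp t = 1 := by
        rw [← Real.exp_add]; simp
      have e2 : Real.exp (-t) * Real.exp (-t) = Real.exp (-(2*t)) := by
        rw [← Real.exp_add]; ring_nf
      have : Real.exp (-t) • (Real.exp t • q + Real.exp (-t) • m + z)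
          = q + Real.exp (-(2*t)) • m + Real.exp (-t) • z := by
        rw [smul_add, smul_add, smul_smul, smul_smul, e1, e2, one_smul]
      rwa [this] at h2
    have ht : Filter.Tendsto
        (fun t : ℝ => q + Real.exp (-(2*t)) • m + Real.exp (-t) • z)
        Filter.atTop (nhds q) := by
      have l1 : Filter.Tendsto (fun t : ℝ => Real.exp (-(2*t))) Filter.atTop (nhds 0) :=
        Real.tendsto_exp_atBot.comp
          (Filter.tendsto_neg_atTop_atBot.comp
            (Filter.tendsto_id.const_mul_atTop (by norm_num : (0:ℝ) < 2)))
      have l2 : Filter.Tendsto (fun t : ℝ => Real.exp (-t)) Filter.atTop (nhds 0) :=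
        Real.tendsto_exp_atBot.comp Filter.tendsto_neg_atTop_atBot
      have := ((tendsto_const_nhds (x := q)).add (l1.smul_const m)).add (l2.smul_const z)
      simpa using this
    exact hCclosed.mem_of_tendsto ht (Filter.Eventually.of_forall hmemq)
  · -- m ∈ C via t → -∞
    have hmemm : ∀ t : ℝ, Real.exp (2*t) • q + m + Real.exp t • z ∈ C := by
      intro t
      have h2 := hCsmul (Real.exp t) (Real.exp_pos _).le _ (hmem t)
      rw [hexp t] at h2
      have e1 : Real.exp t * Real.exp t = Real.exp (2*t) := by
        rw [← Real.exp_add]; ring_nf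
      have e2 : Real.exp t * Real.exp (-t) = 1 := by
        rw [← Real.exp_add]; simp
      have : Real.exp t • (Real.exp t • q + Real.exp (-t) • m + z)
          = Real.exp (2*t) • q + m + Real.exp t • z := by
        rw [smul_add, smul_add, smul_smul, smul_smul, e1, e2, one_smul]
      rwa [this] at h2
    have ht : Filter.Tendsto
        (fun t : ℝ => Real.exp (2*t) • q + m + Real.exp t • z)
        Filter.atBot (nhds m) := by
      have l1 : Filter.Tendsto (fun t : ℝ => Real.exp (2*t)) Filter.atBot (nhds 0) :=
        Real.tendsto_exp_atBot.comp
          (Filter.tendsto_id.const_mul_atBot (by norm_num : (0:ℝ) < 2))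
      have l2 : Filter.Tendsto (fun t : ℝ => Real.exp t) Filter.atBot (nhds 0) :=
        Real.tendsto_exp_atBot
      have := ((l1.smul_const q).add (tendsto_const_nhds (x := m))).add (l2.smul_const z)
      simpa using this
    exact hCclosed.mem_of_tendsto ht (Filter.Eventually.of_forall hmemm)

theorem euler_cone_projections
    {𝔤 : Type*} [NormedAddCommGroup 𝔤] [NormedSpace ℝ 𝔤] [FiniteDimensional ℝ 𝔤]
    -- Lie algebra structure: an antisymmetric bilinear bracket satisfying Jacobi
    (bracket : 𝔤 →ₗ[ℝ] 𝔤 →ₗ[ℝ] 𝔤)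
    (halt : ∀ x, bracket x x = 0)
    (hjac : ∀ x y z, bracket x (bracket y z)
      = bracket (bracket x y) z + bracket y (bracket x z))
    -- τ : involutive Lie algebra automorphism
    (τ : 𝔤 ≃ₗ[ℝ] 𝔤) (hτinv : ∀ x, τ (τ x) = x)
    (hτbr : ∀ x y, τ (bracket x y) = bracket (τ x) (τ y))
    -- h : Euler element fixed by τ
    (h : 𝔤) (hτh : τ h = h)
    (heuler : ∀ y, bracket h (bracket h (bracket h y)) = bracket h y)
    -- C : closed convex cone contained in 𝔮 = {x : τ x = -x}, invariant under e^{t ad h}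
    (C : Set 𝔤)
    (hCsub : ∀ x ∈ C, τ x = -x)
    (hCclosed : IsClosed C)
    (hCadd : ∀ x ∈ C, ∀ y ∈ C, x + y ∈ C)
    (hCsmul : ∀ r : ℝ, 0 ≤ r → ∀ x ∈ C, r • x ∈ C)
    (hCinv : ∀ t : ℝ,
      ⇑(NormedSpace.exp (t • LinearMap.toContinuousLinearMap (bracket h))) '' C = C) :
    -- (i) p₊ = ½((ad h)² + ad h) maps C onto C₊ = C ∩ ker(ad h − 1)
    ((fun y => (1 / 2 : ℝ) • (bracket h (bracket h y) + bracket h y)) '' C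
        = C ∩ {x | bracket h x = x}) ∧
    -- (ii) p₋ = ½((ad h)² − ad h) maps C onto −C₋, where C₋ = (−C) ∩ ker(ad h + 1)
    ((fun y => (1 / 2 : ℝ) • (bracket h (bracket h y) - bracket h y)) '' C
        = -((-C) ∩ {x | bracket h x = -x})) ∧
    -- (iii) (ad h)² maps C onto C₊ − C₋ = (C ∩ ker(ad h − 1)) + (C ∩ ker(ad h + 1))
    ((fun y => bracket h (bracket h y)) '' C
        = (C ∩ {x | bracket h x = x}) - ((-C) ∩ {x | bracket h x = -x})) ∧
    ((C ∩ {x | bracket h x = x}) - ((-C) ∩ {x | bracket h x = -x})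
        = (C ∩ {x | bracket h x = x}) + (C ∩ {x | bracket h x = -x})) ∧
    -- (iv) pointedness is inherited
    (C ∩ (-C) = {0} →
      (C ∩ {x | bracket h x = x}) ∩ (-(C ∩ {x | bracket h x = x})) = {0} ∧
      ((-C) ∩ {x | bracket h x = -x}) ∩ (-((-C) ∩ {x | bracket h x = -x})) = {0}) ∧
    -- (v) generation is inherited
    (C - C = {x | τ x = -x} →
      (C ∩ {x | bracket h x = x}) - (C ∩ {x | bracket h x = x})
          = {x | τ x = -x} ∩ {x | bracket h x = x} ∧
      ((-C) ∩ {x | bracket h x = -x}) - ((-C) ∩ {x | bracket h x = -x})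
          = {x | τ x = -x} ∩ {x | bracket h x = -x}) := by
  have key : ∀ {x : 𝔤}, x ∈ C →
      (1/2:ℝ) • (bracket h (bracket h x) + bracket h x) ∈ C ∧
      (1/2:ℝ) • (bracket h (bracket h x) - bracket h x) ∈ C :=
    fun hx => euler_key bracket h heuler C hCclosed hCsmul hCinv hx
  -- eigenvalue computations for the projections
  have eigq : ∀ y, bracket h ((1/2:ℝ) • (bracket h (bracket h y) + bracket h y))
      = (1/2:ℝ) • (bracket h (bracket h y) + bracket h y) := by
    intro y; rw [map_smul, map_add, heuler, add_comm]
  have eigm : ∀ y, bracket h ((1/2:ℝ) • (bracket h (bracket h y) - bracket h y))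
      = -((1/2:ℝ) • (bracket h (bracket h y) - bracket h y)) := by
    intro y; rw [map_smul, map_sub, heuler, ← smul_neg, neg_sub]
  have fixq : ∀ y, bracket h y = y →
      (1/2:ℝ) • (bracket h (bracket h y) + bracket h y) = y := by
    intro y hy; rw [hy, hy]; module
  have fixm : ∀ y, bracket h y = -y →
      (1/2:ℝ) • (bracket h (bracket h y) - bracket h y) = y := by
    intro y hy; rw [hy, map_neg, hy]; module
  -- the negated cone identity
  have negneg : -((-C) ∩ {x | bracket h x = -x}) = C ∩ {x | bracket h x = -x} := by
    ext w
    simp only [Set.mem_neg, Set.mem_inter_iff, Set.mem_setOf_eq, map_neg, neg_neg]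
    constructor
    · rintro ⟨h1, h2⟩
      exact ⟨h1, by linear_combination (norm := module) - h2⟩
    · rintro ⟨h1, h2⟩
      exact ⟨h1, by linear_combination (norm := module) - h2⟩
  -- (i)
  have part1 : (fun y => (1 / 2 : ℝ) • (bracket h (bracket h y) + bracket h y)) '' C
      = C ∩ {x | bracket h x = x} := by
    ext w
    constructor
    · rintro ⟨y, hy, rfl⟩
      exact ⟨(key hy).1, eigq y⟩
    · rintro ⟨hwC, hw⟩
      exact ⟨w, hwC, fixq w hw⟩
  -- (ii)
  have part2 : (fun y => (1 / 2 : ℝ) • (bracket h (bracket h y) - bracket h y)) '' C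
      = -((-C) ∩ {x | bracket h x = -x}) := by
    rw [negneg]
    ext w
    constructor
    · rintro ⟨y, hy, rfl⟩
      exact ⟨(key hy).2, eigm y⟩
    · rintro ⟨hwC, hw⟩
      exact ⟨w, hwC, fixm w hw⟩
  refine ⟨part1, part2, ?_, ?_, ?_, ?_⟩
  · -- (iii)
    ext w
    constructor
    · rintro ⟨y, hy, rfl⟩
      obtain ⟨hqC, hmC⟩ := key hy
      refine Set.mem_sub.mpr
        ⟨(1/2:ℝ) • (bracket h (bracket h y) + bracket h y), ⟨hqC, eigq y⟩,
         -((1/2:ℝ) • (bracket h (bracket h y) - bracket h y)),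
         ⟨Set.neg_mem_neg.mpr hmC, ?_⟩, ?_⟩
      · show bracket h _ = _
        rw [map_neg, eigm y, neg_neg]
      · show _ - _ = bracket h (bracket h y)
        module
    · intro hw
      obtain ⟨a, ⟨haC, haK⟩, b, ⟨hbC, hbK⟩, rfl⟩ := Set.mem_sub.mp hw
      simp only [Set.mem_setOf_eq] at haK hbK
      have hbC' : -b ∈ C := Set.mem_neg.mp hbC
      refine ⟨a + -b, hCadd a haC (-b) hbC', ?_⟩
      show bracket h (bracket h (a + -b)) = a - b
      have h1 : bracket h (a + -b) = a + b := by
        rw [map_add, map_neg, haK, hbK, neg_neg]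
      rw [h1, map_add, haK, hbK, ← sub_eq_add_neg]
  · -- (iii) second identity
    ext w
    rw [Set.mem_sub, Set.mem_add]
    constructor
    · rintro ⟨a, ⟨haC, haK⟩, b, ⟨hbC, hbK⟩, rfl⟩
      simp only [Set.mem_setOf_eq] at haK hbK
      refine ⟨a, ⟨haC, haK⟩, -b, ⟨Set.mem_neg.mp hbC, ?_⟩, (sub_eq_add_neg a b).symm⟩
      show bracket h (-b) = -(-b)
      rw [map_neg, hbK]
    · rintro ⟨a, ⟨haC, haK⟩, c, ⟨hcC, hcK⟩, rfl⟩
      simp only [Set.mem_setOf_eq] at haK hcK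
      refine ⟨a, ⟨haC, haK⟩, -c, ⟨Set.neg_mem_neg.mpr hcC, ?_⟩, sub_neg_eq_add a c⟩
      show bracket h (-c) = -(-c)
      rw [map_neg, hcK]
  · -- (iv)
    intro hpt
    have h0C : (0:𝔤) ∈ C := by
      have : (0:𝔤) ∈ C ∩ (-C) := by rw [hpt]; rfl
      exact this.1
    constructor
    · ext w
      simp only [Set.mem_singleton_iff]
      constructor
      · rintro ⟨⟨hwC, _⟩, hwneg⟩
        have h2 : -w ∈ C := (Set.mem_neg.mp hwneg).1
        have hw : w ∈ C ∩ (-C) := ⟨hwC, Set.mem_neg.mpr h2⟩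
        rw [hpt] at hw
        exact hw
      · rintro rfl
        refine ⟨⟨h0C, by simp⟩, ?_⟩
        rw [Set.mem_neg, neg_zero]
        exact ⟨h0C, by simp⟩
    · ext w
      simp only [Set.mem_singleton_iff]
      constructor
      · rintro ⟨⟨hwC, _⟩, hwneg⟩
        have h2 : -w ∈ -C := (Set.mem_neg.mp hwneg).1
        have h3 : w ∈ C := by
          have := Set.mem_neg.mp h2
          rwa [neg_neg] at this
        have hw : w ∈ C ∩ (-C) := ⟨h3, hwC⟩
        rw [hpt] at hw
        exact hw
      · rintro rfl
        have h0neg : (0:𝔤) ∈ -C := by rw [Set.mem_neg, neg_zero]; exact h0C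
        refine ⟨⟨h0neg, by simp⟩, ?_⟩
        rw [Set.mem_neg, neg_zero]
        exact ⟨h0neg, by simp⟩
  · -- (v)
    intro hgen
    constructor
    · ext w
      rw [Set.mem_sub]
      constructor
      · rintro ⟨a, ⟨haC, haK⟩, b, ⟨hbC, hbK⟩, rfl⟩
        simp only [Set.mem_setOf_eq] at haK hbK
        refine ⟨?_, ?_⟩
        · rw [← hgen]
          exact Set.mem_sub.mpr ⟨a, haC, b, hbC, rfl⟩
        · show bracket h (a - b) = a - b
          rw [map_sub, haK, hbK]
      · rintro ⟨hwQ, hwK⟩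
        simp only [Set.mem_setOf_eq] at hwK
        have hw : w ∈ C - C := by rw [hgen]; exact hwQ
        obtain ⟨a, haC, b, hbC, rfl⟩ := Set.mem_sub.mp hw
        refine Set.mem_sub.mpr
          ⟨(1/2:ℝ) • (bracket h (bracket h a) + bracket h a), ⟨(key haC).1, eigq a⟩,
           (1/2:ℝ) • (bracket h (bracket h b) + bracket h b), ⟨(key hbC).1, eigq b⟩, ?_⟩
        have h2 : bracket h (bracket h (a - b)) = a - b := by rw [hwK, hwK]
        have e : (1/2:ℝ) • (bracket h (bracket h a) + bracket h a)
              - (1/2:ℝ) • (bracket h (bracket h b) + bracket h b)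
            = (1/2:ℝ) • (bracket h (bracket h (a - b)) + bracket h (a - b)) := by
          simp only [map_sub]; module
        rw [e, h2, hwK]; module
    · ext w
      rw [Set.mem_sub]
      constructor
      · rintro ⟨a, ⟨haC, haK⟩, b, ⟨hbC, hbK⟩, rfl⟩
        simp only [Set.mem_setOf_eq] at haK hbK
        refine ⟨?_, ?_⟩
        · rw [← hgen]
          refine Set.mem_sub.mpr ⟨-b, Set.mem_neg.mp hbC, -a, Set.mem_neg.mp haC, ?_⟩
          abel
        · show bracket h (a - b) = -(a - b)
          rw [map_sub, haK, hbK]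
          abel
      · rintro ⟨hwQ, hwK⟩
        simp only [Set.mem_setOf_eq] at hwK
        have hw : w ∈ C - C := by rw [hgen]; exact hwQ
        obtain ⟨a, haC, b, hbC, rfl⟩ := Set.mem_sub.mp hw
        have hmaC := (key haC).2
        have hmbC := (key hbC).2
        have h2 : bracket h (bracket h (a - b)) = a - b := by
          rw [hwK, map_neg, hwK, neg_neg]
        have e : (1/2:ℝ) • (bracket h (bracket h a) - bracket h a)
              - (1/2:ℝ) • (bracket h (bracket h b) - bracket h b)
            = (1/2:ℝ) • (bracket h (bracket h (a - b)) - bracket h (a - b)) := by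
          simp only [map_sub]; module
        have key2 : (1/2:ℝ) • (bracket h (bracket h a) - bracket h a)
              - (1/2:ℝ) • (bracket h (bracket h b) - bracket h b) = a - b := by
          rw [e, h2, hwK]; module
        refine Set.mem_sub.mpr
          ⟨-((1/2:ℝ) • (bracket h (bracket h b) - bracket h b)),
           ⟨Set.neg_mem_neg.mpr hmbC, ?_⟩,
           -((1/2:ℝ) • (bracket h (bracket h a) - bracket h a)),
           ⟨Set.neg_mem_neg.mpr hmaC, ?_⟩, ?_⟩
        · show bracket h _ = _
          rw [map_neg, eigm b, neg_neg]
        · show bracket h _ = _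
          rw [map_neg, eigm a, neg_neg]
        · rw [← key2]; abel
end

section
/- Let 𝔤 be a finite-dimensional real Lie algebra, τ an involutive Lie algebra automorphism of 𝔤, 𝔥 = ker(τ − id), 𝔮 = ker(τ + id), and x ∈ 𝔮. Set σ_x = exp(−2·ad x) and ζ_x = exp(−ad x) (exponentials of endomorphisms of 𝔤). Then: (i) τ ∘ σ_x ∘ τ = σ_x⁻¹, so on the subspace ker(σ_x² − id) the maps τ and σ_x commute; (ii) the eigenspaces 𝔤^{σ_x} = ker(σ_x − id) and 𝔤^{−σ_x} = ker(σ_x + id) are invariant under τ and under ζ_x; (iii) on 𝔤^{σ_x} the maps ζ_x and τ commute, while on 𝔤^{−σ_x} one has τ ∘ ζ_x = −ζ_x ∘ τ and ζ_x ∘ ζ_x = −id (so ζ_x is a complex structure on 𝔤^{−σ_x}); (iv) consequently ζ_x(𝔥 ∩ 𝔤^{σ_x}) = 𝔥 ∩ 𝔤^{σ_x}, ζ_x(𝔮 ∩ 𝔤^{σ_x}) = 𝔮 ∩ 𝔤^{σ_x}, ζ_x(𝔥 ∩ 𝔤^{−σ_x}) = 𝔮 ∩ 𝔤^{−σ_x},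 and ζ_x(𝔮 ∩ 𝔤^{−σ_x}) = 𝔥 ∩ 𝔤^{−σ_x}. -/
open NormedSpace
set_option maxHeartbeats 1000000 in
set_option synthInstance.maxHeartbeats 400000 in

/- STATEMENT 8: Interaction of τ with σ_x = exp(−2 ad x) and ζ_x = exp(−ad x)
   for x ∈ 𝔮 (Lemma 2.7 (c)-(e)-type statement). -/

theorem tau_sigma_zeta_relations
    {𝔤 : Type*} [NormedAddCommGroup 𝔤] [NormedSpace ℝ 𝔤] [FiniteDimensional ℝ 𝔤]
    -- Lie algebra structure
    (bracket : 𝔤 →ₗ[ℝ] 𝔤 →ₗ[ℝ] 𝔤)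
    (halt : ∀ x, bracket x x = 0)
    (hjac : ∀ x y z, bracket x (bracket y z)
      = bracket (bracket x y) z + bracket y (bracket x z))
    -- τ : involutive Lie algebra automorphism
    (τ : 𝔤 ≃ₗ[ℝ] 𝔤) (hτinv : ∀ x, τ (τ x) = x)
    (hτbr : ∀ x y, τ (bracket x y) = bracket (τ x) (τ y))
    -- x ∈ 𝔮
    (x : 𝔤) (hx : τ x = -x)
    (σx ζx : 𝔤 →L[ℝ] 𝔤)
    (hσx : σx = NormedSpace.exp ((-2 : ℝ) • LinearMap.toContinuousLinearMap (bracket x)))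
    (hζx : ζx = NormedSpace.exp ((-1 : ℝ) • LinearMap.toContinuousLinearMap (bracket x))) :
    -- (i) τ ∘ σ_x ∘ τ = σ_x⁻¹, hence τ and σ_x commute on ker(σ_x² − id)
    (∀ y, τ (σx (τ y))
        = NormedSpace.exp ((2 : ℝ) • LinearMap.toContinuousLinearMap (bracket x)) y) ∧
    (∀ y, σx (σx y) = y → τ (σx y) = σx (τ y)) ∧
    -- (ii) the eigenspaces 𝔤^{±σ_x} are invariant under τ and ζ_x
    (∀ y, σx y = y → σx (τ y) = τ y ∧ σx (ζx y) = ζx y) ∧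
    (∀ y, σx y = -y → σx (τ y) = -(τ y) ∧ σx (ζx y) = -(ζx y)) ∧
    -- (iii) ζ_x and τ commute on 𝔤^{σ_x}; on 𝔤^{−σ_x}, τ∘ζ_x = −ζ_x∘τ and ζ_x² = −id
    (∀ y, σx y = y → ζx (τ y) = τ (ζx y)) ∧
    (∀ y, σx y = -y → τ (ζx y) = -(ζx (τ y)) ∧ ζx (ζx y) = -y) ∧
    -- (iv) the induced bijections between the intersections with 𝔥 and 𝔮
    (⇑ζx '' ({y | τ y = y} ∩ {y | σx y = y}) = {y | τ y = y} ∩ {y | σx y = y}) ∧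
    (⇑ζx '' ({y | τ y = -y} ∩ {y | σx y = y}) = {y | τ y = -y} ∩ {y | σx y = y}) ∧
    (⇑ζx '' ({y | τ y = y} ∩ {y | σx y = -y}) = {y | τ y = -y} ∩ {y | σx y = -y}) ∧
    (⇑ζx '' ({y | τ y = -y} ∩ {y | σx y = -y}) = {y | τ y = y} ∩ {y | σx y = -y}) := by
  subst hσx hζx
  set A : 𝔤 →L[ℝ] 𝔤 := LinearMap.toContinuousLinearMap (bracket x) with hA
  set T : 𝔤 →L[ℝ] 𝔤 := LinearMap.toContinuousLinearMap (τ : 𝔤 →ₗ[ℝ] 𝔤) with hT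
  have hTapp : ∀ y, T y = τ y := fun y => rfl
  have hTT : T * T = 1 := by
    ext y
    show T (T y) = y
    rw [hTapp, hTapp, hτinv]
  letI : NormedAlgebra ℚ (𝔤 →L[ℝ] 𝔤) := NormedAlgebra.restrictScalars ℚ ℝ (𝔤 →L[ℝ] 𝔤)
  -- exp of sums
  have hmul : ∀ (a b : ℝ) (y : 𝔤),
      exp (a • A) (exp (b • A) y) = exp ((a + b) • A) y := by
    intro a b y
    rw [add_smul, exp_add_of_commute (((Commute.refl A).smul_left a).smul_right b)]
    rfl
  have hzero : ∀ y : 𝔤, exp ((0 : ℝ) • A) y = y := by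
    intro y; rw [zero_smul, exp_zero]; rfl
  have hcommE : ∀ (a b : ℝ) (y : 𝔤),
      exp (a • A) (exp (b • A) y) = exp (b • A) (exp (a • A) y) := by
    intro a b y; rw [hmul, hmul, add_comm]
  -- conjugation by τ
  have hconj : ∀ c : ℝ, T * (c • A) * T = (-c) • A := by
    intro c
    ext y
    show T ((c • A) (T y)) = ((-c) • A) y
    rw [ContinuousLinearMap.smul_apply, ContinuousLinearMap.smul_apply, hTapp, hTapp, map_smul]
    have h1 : A (τ y) = bracket x (τ y) := rfl
    have h2 : A y = bracket x y := rfl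
    rw [h1, h2, hτbr, hτinv, hx, map_neg, LinearMap.neg_apply, smul_neg, neg_smul]
  have htau : ∀ (c : ℝ) (y : 𝔤), τ (exp (c • A) y) = exp ((-c) • A) (τ y) := by
    intro c y
    have hu := exp_units_conj (⟨T, T, hTT, hTT⟩ : (𝔤 →L[ℝ] 𝔤)ˣ) (c • A)
    have hu' : exp ((-c) • A) = T * exp (c • A) * T := by
      rw [← hconj c]; exact hu
    have := congrArg (fun f : 𝔤 →L[ℝ] 𝔤 => f (τ y)) hu'
    simp only [ContinuousLinearMap.mul_apply, hTapp, hτinv] at this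
    exact this.symm
  -- basic flips
  have hflip : ∀ (c : ℝ) (y : 𝔤), exp (c • A) y = y → exp ((-c) • A) y = y := by
    intro c y h
    conv_lhs => rw [← h]
    rw [hmul, neg_add_cancel]
    exact hzero y
  have hflipneg : ∀ (c : ℝ) (y : 𝔤), exp (c • A) y = -y → exp ((-c) • A) y = -y := by
    intro c y h
    have h1 : exp ((-c) • A) (exp (c • A) y) = y := by
      rw [hmul, neg_add_cancel]; exact hzero y
    rw [h, map_neg] at h1
    exact neg_eq_iff_eq_neg.mp h1
  -- facts on τ y from eigenvector equations
  have hE2fix : ∀ y : 𝔤, exp ((-2 : ℝ) • A) y = y → exp ((2 : ℝ) • A) (τ y) = τ y := by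
    intro y h
    have := htau (-2) y
    rw [h] at this
    rw [show ((2 : ℝ)) = -(-2) by norm_num]
    exact this.symm
  have hE2neg : ∀ y : 𝔤, exp ((-2 : ℝ) • A) y = -y → exp ((2 : ℝ) • A) (τ y) = -(τ y) := by
    intro y h
    have := htau (-2) y
    rw [h, map_neg] at this
    rw [show ((2 : ℝ)) = -(-2) by norm_num]
    exact this.symm
  -- E(-1) vs E(1) on eigenvectors
  have hone_fix : ∀ y : 𝔤, exp ((-2 : ℝ) • A) y = y →
      exp ((-1 : ℝ) • A) y = exp ((1 : ℝ) • A) y := by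
    intro y h
    have h1 := hmul 1 (-2) y
    rw [h, show ((1 : ℝ) + -2) = -1 by norm_num] at h1
    exact h1.symm
  have hone_neg : ∀ y : 𝔤, exp ((-2 : ℝ) • A) y = -y →
      exp ((-1 : ℝ) • A) y = -(exp ((1 : ℝ) • A) y) := by
    intro y h
    have h1 := hmul 1 (-2) y
    rw [h, map_neg, show ((1 : ℝ) + -2) = -1 by norm_num] at h1
    exact h1.symm
  have hζE1 : ∀ z : 𝔤, exp ((-1 : ℝ) • A) (exp ((1 : ℝ) • A) z) = z := by
    intro z
    rw [hmul, show ((-1 : ℝ) + 1) = 0 by norm_num]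
    exact hzero z
  -- Now the individual parts.
  refine ⟨?_, ?_, ?_, ?_, ?_, ?_, ?_, ?_, ?_, ?_⟩
  · -- (i) first
    intro y
    have := htau (-2) (τ y)
    rw [hτinv] at this
    rw [this, show (-(-2 : ℝ)) = 2 by norm_num]
  · -- (i) second
    intro y h
    have h4 : exp ((-4 : ℝ) • A) y = y := by
      have h1 := hmul (-2) (-2) y
      rw [h, show ((-2 : ℝ) + -2) = -4 by norm_num] at h1
      exact h1.symm
    have h4τ : exp ((4 : ℝ) • A) (τ y) = τ y := by
      have := htau (-4) y
      rw [h4, show (-(-4 : ℝ)) = 4 by norm_num] at this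
      exact this.symm
    have hL : τ (exp ((-2 : ℝ) • A) y) = exp ((2 : ℝ) • A) (τ y) := by
      rw [htau, show (-(-2 : ℝ)) = 2 by norm_num]
    rw [hL]
    have h2 := hmul (-2) 4 (τ y)
    rw [h4τ, show ((-2 : ℝ) + 4) = 2 by norm_num] at h2
    exact h2.symm
  · -- (ii) fixed
    intro y h
    constructor
    · have h2 := hE2fix y h
      have := hflip 2 (τ y) h2
      rwa [show (-(2 : ℝ)) = -2 by norm_num] at this
    · rw [hcommE, h]
  · -- (ii) neg
    intro y h
    constructor
    · have h2 := hE2neg y h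
      have := hflipneg 2 (τ y) h2
      rwa [show (-(2 : ℝ)) = -2 by norm_num] at this
    · rw [hcommE, h, map_neg]
  · -- (iii) fixed: ζ τ = τ ζ
    intro y h
    rw [htau, show (-(-1 : ℝ)) = 1 by norm_num]
    have h2 := hE2fix y h
    have h1 := hmul (-1) 2 (τ y)
    rw [h2, show ((-1 : ℝ) + 2) = 1 by norm_num] at h1
    exact h1
  · -- (iii) neg
    intro y h
    constructor
    · rw [htau, show (-(-1 : ℝ)) = 1 by norm_num]
      have h2 := hE2neg y h
      have h1 := hmul (-1) 2 (τ y)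
      rw [h2, map_neg, show ((-1 : ℝ) + 2) = 1 by norm_num] at h1
      exact h1.symm
    · have h1 := hmul (-1) (-1) y
      rw [show ((-1 : ℝ) + -1) = -2 by norm_num] at h1
      rw [h1, h]
  · -- (iv) 1
    ext z
    simp only [Set.mem_image, Set.mem_inter_iff, Set.mem_setOf_eq]
    constructor
    · rintro ⟨y, ⟨h1, h2⟩, rfl⟩
      refine ⟨?_, by rw [hcommE, h2]⟩
      calc τ (exp ((-1 : ℝ) • A) y)
          = exp ((1 : ℝ) • A) (τ y) := by
            rw [htau, show (-(-1 : ℝ)) = 1 by norm_num]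
        _ = exp ((1 : ℝ) • A) y := by rw [h1]
        _ = exp ((-1 : ℝ) • A) y := (hone_fix y h2).symm
    · rintro ⟨h1, h2⟩
      refine ⟨exp ((1 : ℝ) • A) z, ⟨?_, by rw [hcommE, h2]⟩, hζE1 z⟩
      calc τ (exp ((1 : ℝ) • A) z)
          = exp ((-1 : ℝ) • A) (τ z) := by
            rw [htau, show (-(1 : ℝ)) = -1 by norm_num]
        _ = exp ((-1 : ℝ) • A) z := by rw [h1]
        _ = exp ((1 : ℝ) • A) z := hone_fix z h2
  · -- (iv) 2
    ext z
    simp only [Set.mem_image, Set.mem_inter_iff, Set.mem_setOf_eq]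
    constructor
    · rintro ⟨y, ⟨h1, h2⟩, rfl⟩
      refine ⟨?_, by rw [hcommE, h2]⟩
      calc τ (exp ((-1 : ℝ) • A) y)
          = exp ((1 : ℝ) • A) (τ y) := by
            rw [htau, show (-(-1 : ℝ)) = 1 by norm_num]
        _ = exp ((1 : ℝ) • A) (-y) := by rw [h1]
        _ = -(exp ((1 : ℝ) • A) y) := map_neg _ _
        _ = -(exp ((-1 : ℝ) • A) y) := by rw [hone_fix y h2]
    · rintro ⟨h1, h2⟩
      refine ⟨exp ((1 : ℝ) • A) z, ⟨?_, by rw [hcommE, h2]⟩, hζE1 z⟩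
      calc τ (exp ((1 : ℝ) • A) z)
          = exp ((-1 : ℝ) • A) (τ z) := by
            rw [htau, show (-(1 : ℝ)) = -1 by norm_num]
        _ = -(exp ((-1 : ℝ) • A) z) := by rw [h1, map_neg]
        _ = -(exp ((1 : ℝ) • A) z) := by rw [hone_fix z h2]
  · -- (iv) 3
    ext z
    simp only [Set.mem_image, Set.mem_inter_iff, Set.mem_setOf_eq]
    constructor
    · rintro ⟨y, ⟨h1, h2⟩, rfl⟩
      refine ⟨?_, by rw [hcommE, h2, map_neg]⟩
      calc τ (exp ((-1 : ℝ) • A) y)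
          = exp ((1 : ℝ) • A) (τ y) := by
            rw [htau, show (-(-1 : ℝ)) = 1 by norm_num]
        _ = exp ((1 : ℝ) • A) y := by rw [h1]
        _ = -(exp ((-1 : ℝ) • A) y) := by rw [hone_neg y h2, neg_neg]
    · rintro ⟨h1, h2⟩
      refine ⟨exp ((1 : ℝ) • A) z, ⟨?_, by rw [hcommE, h2, map_neg]⟩, hζE1 z⟩
      calc τ (exp ((1 : ℝ) • A) z)
          = exp ((-1 : ℝ) • A) (τ z) := by
            rw [htau, show (-(1 : ℝ)) = -1 by norm_num]
        _ = -(exp ((-1 : ℝ) • A) z) := by rw [h1, map_neg]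
        _ = exp ((1 : ℝ) • A) z := by rw [hone_neg z h2, neg_neg]
  · -- (iv) 4
    ext z
    simp only [Set.mem_image, Set.mem_inter_iff, Set.mem_setOf_eq]
    constructor
    · rintro ⟨y, ⟨h1, h2⟩, rfl⟩
      refine ⟨?_, by rw [hcommE, h2, map_neg]⟩
      calc τ (exp ((-1 : ℝ) • A) y)
          = exp ((1 : ℝ) • A) (τ y) := by
            rw [htau, show (-(-1 : ℝ)) = 1 by norm_num]
        _ = -(exp ((1 : ℝ) • A) y) := by rw [h1, map_neg]
        _ = exp ((-1 : ℝ) • A) y := (hone_neg y h2).symm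
    · rintro ⟨h1, h2⟩
      refine ⟨exp ((1 : ℝ) • A) z, ⟨?_, by rw [hcommE, h2, map_neg]⟩, hζE1 z⟩
      calc τ (exp ((1 : ℝ) • A) z)
          = exp ((-1 : ℝ) • A) (τ z) := by
            rw [htau, show (-(1 : ℝ)) = -1 by norm_num]
        _ = exp ((-1 : ℝ) • A) z := by rw [h1]
        _ = -(exp ((1 : ℝ) • A) z) := hone_neg z h2
end

section
/- Let V be a finite-dimensional real vector space and A a linear endomorphism of V. Then ker(cosh A) = ker(exp(−2A) + id_V) = ∑_{n=0}^∞ ker(A² + (n + 1/2)²π²·id_V), where cosh A = ½(exp(A) + exp(−A)), exp denotes the exponential of endomorphisms, and the right-hand side is the sum (supremum as subspaces) over all integers n ≥ 0 of the kernels of A² + (n + 1/2)²π²·id_V. -/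
/- STATEMENT 11 (Lemma C.2): For an endomorphism A of a finite-dimensional real
   vector space, ker(cosh A) = ker(exp(−2A) + id) = ∑_{n≥0} ker(A² + (n+½)²π²·id). -/

open scoped Real

set_option maxHeartbeats 1000000
set_option synthInstance.maxHeartbeats 400000

namespace KerCoshAux

open Polynomial

variable {V : Type*} [NormedAddCommGroup V] [NormedSpace ℝ V] [FiniteDimensional ℝ V]

noncomputable instance instNormedAlgebraRatEndKC : NormedAlgebra ℚ (V →L[ℝ] V) :=
  NormedAlgebra.restrictScalars ℚ ℝ (V →L[ℝ] V)

lemma hasSum_exp_apply (N : V →L[ℝ] V) (v : V) :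
    HasSum (fun k : ℕ => ((Nat.factorial k : ℝ)⁻¹) • ((N ^ k) v)) (NormedSpace.exp N v) := by
  have h := NormedSpace.exp_series_hasSum_exp' (𝕂 := ℝ) N
  have h2 := (ContinuousLinearMap.apply ℝ V v).hasSum h
  simpa using h2

lemma pow_two_mul_apply (N : V →L[ℝ] V) (c : ℝ) (w : V) (h : N (N w) = c • w) :
    ∀ j : ℕ, (N ^ (2 * j)) w = (c ^ j) • w := by
  intro j
  induction j with
  | zero => simp
  | succ j ih =>
    have h2 : 2 * (j + 1) = 2 * j + 2 := by ring
    have hN2 : (N ^ 2) w = c • w := by rw [sq, ContinuousLinearMap.mul_apply]; exact h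
    rw [h2, pow_add, ContinuousLinearMap.mul_apply, hN2, map_smul, ih, smul_smul, ← pow_succ']

lemma exp_apply_eq_of_sq (N : V →L[ℝ] V) (v : V) (β : ℝ) (hβ : β ≠ 0)
    (h : N (N v) = (-(β ^ 2)) • v) :
    NormedSpace.exp N v = Real.cos β • v + (β⁻¹ * Real.sin β) • N v := by
  have hNv : N (N (N v)) = (-(β ^ 2)) • N v := by rw [h, map_smul]
  set f : ℕ → V := fun k => ((Nat.factorial k : ℝ)⁻¹) • ((N ^ k) v) with hfdef
  clear_value f
  have he : HasSum (fun j : ℕ => f (2 * j)) (Real.cos β • v) := by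
    have hc := (Real.hasSum_cos β).smul_const v
    have hfun : (fun j : ℕ => f (2 * j))
        = fun j : ℕ => ((-1) ^ j * β ^ (2 * j) / ((Nat.factorial (2 * j) : ℝ))) • v := by
      funext j
      simp only [hfdef]
      rw [pow_two_mul_apply N _ v h j, smul_smul]
      congr 1
      rw [neg_pow, ← pow_mul]
      ring
    rw [hfun]
    exact hc
  have ho : HasSum (fun j : ℕ => f (2 * j + 1)) ((β⁻¹ * Real.sin β) • N v) := by
    have hs := ((Real.hasSum_sin β).mul_left β⁻¹).smul_const (N v)
    have hfun : (fun j : ℕ => f (2 * j + 1))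
        = fun j : ℕ => (β⁻¹ * ((-1) ^ j * β ^ (2 * j + 1) / ((Nat.factorial (2 * j + 1) : ℝ)))) • N v := by
      funext j
      simp only [hfdef]
      rw [pow_succ, ContinuousLinearMap.mul_apply, pow_two_mul_apply N _ (N v) hNv j, smul_smul]
      congr 1
      rw [neg_pow, ← pow_mul]
      field_simp
      ring
    rw [hfun]
    exact hs
  have htot := he.even_add_odd ho
  rw [hfdef] at htot
  exact (hasSum_exp_apply N v).unique htot

lemma exp_apply_eq_of_eigen (N : V →L[ℝ] V) (v : V) (a : ℝ) (h : N v = a • v) :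
    NormedSpace.exp N v = Real.exp a • v := by
  have key : ∀ k : ℕ, (N ^ k) v = (a ^ k) • v := by
    intro k
    induction k with
    | zero => simp
    | succ k ih =>
      rw [pow_succ, ContinuousLinearMap.mul_apply, h, map_smul, ih, smul_smul, ← pow_succ']
  have h1 : HasSum (fun k : ℕ => ((Nat.factorial k : ℝ)⁻¹) • ((N ^ k) v)) (Real.exp a • v) := by
    have h2 := (NormedSpace.exp_series_hasSum_exp' (𝕂 := ℝ) a).smul_const v
    simpa [smul_smul, key, Real.exp_eq_exp_ℝ] using h2
  exact (hasSum_exp_apply N v).unique h1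

lemma exp_mul_exp_neg (A : V →L[ℝ] V) :
    NormedSpace.exp A * NormedSpace.exp (-A) = 1 := by
  rw [← NormedSpace.exp_add_of_commute (Commute.refl A).neg_right, add_neg_cancel,
    NormedSpace.exp_zero]

lemma exp_neg_mul_exp (A : V →L[ℝ] V) :
    NormedSpace.exp (-A) * NormedSpace.exp A = 1 := by
  rw [← NormedSpace.exp_add_of_commute (Commute.refl A).neg_left, neg_add_cancel,
    NormedSpace.exp_zero]

lemma exp_two_smul (A : V →L[ℝ] V) :
    NormedSpace.exp ((2 : ℝ) • A) = NormedSpace.exp A * NormedSpace.exp A := by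
  rw [two_smul, NormedSpace.exp_add_of_commute (Commute.refl A)]

lemma exp_neg_two_smul (A : V →L[ℝ] V) :
    NormedSpace.exp ((-2 : ℝ) • A) = NormedSpace.exp (-A) * NormedSpace.exp (-A) := by
  rw [show ((-2 : ℝ) • A) = -A + -A by rw [show ((-2:ℝ)) = -(2:ℝ) by norm_num, neg_smul, two_smul, neg_add], NormedSpace.exp_add_of_commute (Commute.refl (-A))]

lemma exp_neg_mul_exp_two (A : V →L[ℝ] V) :
    NormedSpace.exp (-A) * NormedSpace.exp ((2 : ℝ) • A) = NormedSpace.exp A := by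
  rw [← NormedSpace.exp_add_of_commute (((Commute.refl A).smul_right (2:ℝ)).neg_left)]
  congr 1
  rw [two_smul]
  abel

lemma exp_mul_exp_neg_two (A : V →L[ℝ] V) :
    NormedSpace.exp A * NormedSpace.exp ((-2 : ℝ) • A) = NormedSpace.exp (-A) := by
  rw [← NormedSpace.exp_add_of_commute ((Commute.refl A).smul_right (-2:ℝ))]
  congr 1
  rw [show ((-2:ℝ)) = -(2:ℝ) by norm_num, neg_smul, two_smul]
  abel

lemma cosh_apply_eq_zero_iff (A : V →L[ℝ] V) (x : V) :
    ((1 / 2 : ℝ) • (NormedSpace.exp A + NormedSpace.exp (-A))) x = 0 ↔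
      NormedSpace.exp A x + NormedSpace.exp (-A) x = 0 := by
  rw [ContinuousLinearMap.smul_apply, ContinuousLinearMap.add_apply, smul_eq_zero]
  constructor
  · rintro (h | h)
    · norm_num at h
    · exact h
  · exact fun h => Or.inr h

lemma sum_eq_zero_iff_exp_two (A : V →L[ℝ] V) (x : V) :
    NormedSpace.exp A x + NormedSpace.exp (-A) x = 0 ↔
      NormedSpace.exp ((2 : ℝ) • A) x = -x := by
  constructor
  · intro h
    have h2 : NormedSpace.exp ((2 : ℝ) • A) x + x
        = NormedSpace.exp A (NormedSpace.exp A x + NormedSpace.exp (-A) x) := by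
      rw [map_add, ← ContinuousLinearMap.mul_apply, ← ContinuousLinearMap.mul_apply,
        ← exp_two_smul, exp_mul_exp_neg, ContinuousLinearMap.one_apply]
    rw [h, map_zero] at h2
    exact eq_neg_of_add_eq_zero_left h2
  · intro h
    have h2 : NormedSpace.exp A x + NormedSpace.exp (-A) x
        = NormedSpace.exp (-A) (NormedSpace.exp ((2 : ℝ) • A) x + x) := by
      rw [map_add, ← ContinuousLinearMap.mul_apply, exp_neg_mul_exp_two]
    rw [h, neg_add_cancel, map_zero] at h2
    exact h2

lemma sum_eq_zero_iff_exp_neg_two (A : V →L[ℝ] V) (x : V) :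
    NormedSpace.exp A x + NormedSpace.exp (-A) x = 0 ↔
      NormedSpace.exp ((-2 : ℝ) • A) x = -x := by
  constructor
  · intro h
    have h2 : NormedSpace.exp ((-2 : ℝ) • A) x + x
        = NormedSpace.exp (-A) (NormedSpace.exp (-A) x + NormedSpace.exp A x) := by
      rw [map_add, ← ContinuousLinearMap.mul_apply, ← ContinuousLinearMap.mul_apply,
        ← exp_neg_two_smul, exp_neg_mul_exp, ContinuousLinearMap.one_apply]
    rw [add_comm (NormedSpace.exp (-A) x), h, map_zero] at h2
    exact eq_neg_of_add_eq_zero_left h2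
  · intro h
    have h2 : NormedSpace.exp A x + NormedSpace.exp (-A) x
        = NormedSpace.exp A (NormedSpace.exp ((-2 : ℝ) • A) x + x) := by
      rw [map_add, ← ContinuousLinearMap.mul_apply, exp_mul_exp_neg_two, add_comm]
    rw [h, neg_add_cancel, map_zero] at h2
    exact h2

lemma no_eigen (A : V →L[ℝ] V) (v : V) (a : ℝ) (hv : v ≠ 0) (hAv : A v = a • v)
    (hexp : NormedSpace.exp ((2 : ℝ) • A) v = -v) : False := by
  have h2 : ((2 : ℝ) • A) v = (2 * a) • v := by
    rw [ContinuousLinearMap.smul_apply, hAv, smul_smul]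
  have h3 := exp_apply_eq_of_eigen ((2 : ℝ) • A) v (2 * a) h2
  rw [hexp] at h3
  have h4 : (Real.exp (2 * a) + 1) • v = 0 := by
    rw [add_smul, one_smul, ← h3, neg_add_cancel]
  rcases smul_eq_zero.mp h4 with h5 | h5
  · have := Real.exp_pos (2 * a); linarith
  · exact hv h5

lemma quad_case (A : V →L[ℝ] V) (y : V) (b c : ℝ) (hy : y ≠ 0)
    (hrel : A (A y) + b • A y + c • y = 0)
    (hdisc : b ^ 2 < 4 * c)
    (hexp : NormedSpace.exp ((2 : ℝ) • A) y = -y) :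
    b = 0 ∧ ∃ n : ℕ, c = ((n : ℝ) + 1 / 2) ^ 2 * π ^ 2 := by
  have hind : ∀ r₁ r₂ : ℝ, r₁ • y + r₂ • A y = 0 → r₁ = 0 ∧ r₂ = 0 := by
    intro r₁ r₂ hr
    by_cases h2 : r₂ = 0
    · subst h2
      rw [zero_smul, add_zero] at hr
      rcases smul_eq_zero.mp hr with h | h
      exacts [⟨h, rfl⟩, absurd h hy]
    · exfalso
      have h5 : r₂ • A y = (-r₁) • y := by
        rw [neg_smul]; exact eq_neg_of_add_eq_zero_right hr
      have hAy : A y = (r₂⁻¹ * -r₁) • y := by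
        rw [mul_smul, ← h5, inv_smul_smul₀ h2]
      set t := r₂⁻¹ * -r₁ with ht
      have hAAy : A (A y) = (t * t) • y := by rw [hAy, map_smul, hAy, smul_smul]
      rw [hAAy, hAy] at hrel
      have h6 : (t * t + b * t + c) • y = 0 := by
        rw [← hrel]; module
      rcases smul_eq_zero.mp h6 with h7 | h7
      · nlinarith [sq_nonneg (t + b / 2)]
      · exact hy h7
  set α := -(b / 2) with hα
  have hcβ : (0:ℝ) < c - b ^ 2 / 4 := by nlinarith
  set β := Real.sqrt (c - b ^ 2 / 4) with hβdef
  have hβpos : 0 < β := Real.sqrt_pos.mpr hcβ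
  have hβ2 : β ^ 2 = c - b ^ 2 / 4 := Real.sq_sqrt hcβ.le
  set N := A - α • (1 : V →L[ℝ] V) with hN
  have hNapp : ∀ w : V, N w = A w - α • w := by
    intro w
    rw [hN, ContinuousLinearMap.sub_apply, ContinuousLinearMap.smul_apply,
      ContinuousLinearMap.one_apply]
  have hAAy : A (A y) = (-b) • A y + (-c) • y := by
    calc A (A y) = (A (A y) + b • A y + c • y) + ((-b) • A y + (-c) • y) := by module
    _ = (-b) • A y + (-c) • y := by rw [hrel, zero_add]
  have hNNy : N (N y) = (-(β ^ 2)) • y := by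
    rw [hNapp, hNapp, map_sub, map_smul, hAAy]
    match_scalars
    · simp only [hα]; ring
    · simp only [hα, hβ2]; ring
  have h2A : (2 : ℝ) • A = (2 * α) • (1 : V →L[ℝ] V) + (2 : ℝ) • N := by
    rw [hN, smul_sub, smul_smul]
    abel
  have hcomm : Commute ((2 * α) • (1 : V →L[ℝ] V)) ((2 : ℝ) • N) :=
    ((Commute.one_left N).smul_left _).smul_right _
  have hsplit := NormedSpace.exp_add_of_commute hcomm
  have hexp1 : NormedSpace.exp ((2 * α) • (1 : V →L[ℝ] V)) = Real.exp (2 * α) • 1 := by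
    ext v
    rw [exp_apply_eq_of_eigen ((2 * α) • (1 : V →L[ℝ] V)) v (2 * α) (by
      rw [ContinuousLinearMap.smul_apply, ContinuousLinearMap.one_apply]),
      ContinuousLinearMap.smul_apply, ContinuousLinearMap.one_apply]
  have hN2y : ((2 : ℝ) • N) (((2 : ℝ) • N) y) = (-((2 * β) ^ 2)) • y := by
    rw [ContinuousLinearMap.smul_apply, ContinuousLinearMap.smul_apply, map_smul, hNNy]
    match_scalars
    ring
  have hE := exp_apply_eq_of_sq ((2 : ℝ) • N) y (2 * β) (by positivity) hN2y
  have hbig : Real.exp (2 * α) • (Real.cos (2 * β) • y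
      + ((2 * β)⁻¹ * Real.sin (2 * β)) • (((2 : ℝ) • N) y)) = -y := by
    rw [← hE]
    calc Real.exp (2 * α) • (NormedSpace.exp ((2 : ℝ) • N) y)
        = (Real.exp (2 * α) • (1 : V →L[ℝ] V)) (NormedSpace.exp ((2 : ℝ) • N) y) := by
          rw [ContinuousLinearMap.smul_apply, ContinuousLinearMap.one_apply]
      _ = NormedSpace.exp ((2 : ℝ) • A) y := by
          rw [← hexp1, ← ContinuousLinearMap.mul_apply, ← hsplit, ← h2A]
      _ = -y := hexp
  have heq : (Real.exp (2 * α) * Real.cos (2 * β)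
        - (Real.exp (2 * α) * ((2 * β)⁻¹ * Real.sin (2 * β)) * 2) * α + 1) • y
      + (Real.exp (2 * α) * ((2 * β)⁻¹ * Real.sin (2 * β)) * 2) • A y = 0 := by
    have hstep : (Real.exp (2 * α) * Real.cos (2 * β)
          - (Real.exp (2 * α) * ((2 * β)⁻¹ * Real.sin (2 * β)) * 2) * α + 1) • y
        + (Real.exp (2 * α) * ((2 * β)⁻¹ * Real.sin (2 * β)) * 2) • A y
        = Real.exp (2 * α) • (Real.cos (2 * β) • y
          + ((2 * β)⁻¹ * Real.sin (2 * β)) • (((2 : ℝ) • N) y)) + y := by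
      rw [ContinuousLinearMap.smul_apply, hNapp]
      module
    rw [hstep, hbig, neg_add_cancel]
  obtain ⟨h1, h2⟩ := hind _ _ heq
  have hE0 : Real.exp (2 * α) ≠ 0 := Real.exp_ne_zero _
  have h2βne : (2 * β) ≠ 0 := by positivity
  have hs0 : Real.sin (2 * β) = 0 := by
    rcases mul_eq_zero.mp h2 with h | h
    · rcases mul_eq_zero.mp h with h' | h'
      · exact absurd h' hE0
      · rcases mul_eq_zero.mp h' with h'' | h''
        · exact absurd h'' (inv_ne_zero h2βne)
        · exact h''
    · norm_num at h
  have hco : Real.cos (2 * β) * Real.cos (2 * β) = 1 := by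
    have hpy := Real.sin_sq_add_cos_sq (2 * β)
    nlinarith [hpy, hs0]
  rw [hs0] at h1
  simp only [mul_zero, zero_mul, sub_zero] at h1
  rcases mul_self_eq_one_iff.mp hco with hco1 | hco1
  · exfalso
    rw [hco1] at h1
    have := Real.exp_pos (2 * α)
    nlinarith [h1]
  · have hE1 : Real.exp (2 * α) = 1 := by
      rw [hco1] at h1
      nlinarith [h1]
    have hα0 : α = 0 := by
      have h9 : (2 : ℝ) * α = 0 := Real.exp_injective (hE1.trans Real.exp_zero.symm)
      linarith
    have hb0 : b = 0 := by
      rw [hα] at hα0; linarith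
    refine ⟨hb0, ?_⟩
    have hcosβ : Real.cos β = 0 := by
      have h2m := Real.cos_two_mul β
      rw [hco1] at h2m
      have : Real.cos β ^ 2 = 0 := by linarith
      exact pow_eq_zero_iff (two_ne_zero) |>.mp this
    obtain ⟨kk, hkk⟩ := Real.cos_eq_zero_iff.mp hcosβ
    have hkknn : 0 ≤ kk := by
      by_contra hneg
      push_neg at hneg
      have hkk1 : (kk : ℝ) ≤ -1 := by
        have hkk2 : kk ≤ -1 := by omega
        exact_mod_cast hkk2
      have hpi := Real.pi_pos
      nlinarith [hβpos, hkk]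
    refine ⟨kk.toNat, ?_⟩
    have hcast : ((kk.toNat : ℕ) : ℝ) = (kk : ℝ) := by
      exact_mod_cast congrArg (Int.cast : ℤ → ℝ) (Int.toNat_of_nonneg hkknn)
    have hc : c = β ^ 2 := by rw [hβ2, hb0]; ring
    rw [hc, hkk, hcast]
    ring

lemma double_root_case (A : V →L[ℝ] V) (y : V) (ω : ℝ) (hω : ω ≠ 0)
    (hsin : Real.sin (2 * ω) = 0) (hcos : Real.cos (2 * ω) = -1)
    (hMM : A (A (A (A y) + ω ^ 2 • y)) + ω ^ 2 • (A (A y) + ω ^ 2 • y) = 0)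
    (hexp : NormedSpace.exp ((2 : ℝ) • A) y = -y) :
    A (A y) + ω ^ 2 • y = 0 := by
  set m := A (A y) + ω ^ 2 • y with hm
  clear_value m
  have hA2y : A (A y) = m - ω ^ 2 • y := by rw [hm]; abel
  have hA2m : A (A m) = (-(ω ^ 2)) • m := by
    rw [neg_smul]; exact eq_neg_of_add_eq_zero_left hMM
  set g : ℕ → ℝ := fun j => if j = 0 then 0 else (j : ℝ) * (-(ω ^ 2)) ^ (j - 1) with hg
  clear_value g
  have hg0 : g 0 = 0 := by simp [hg]
  have hgs : ∀ i : ℕ, g (i + 1) = ((i : ℝ) + 1) * (-(ω ^ 2)) ^ i := by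
    intro i; simp [hg]
  have hgkey : ∀ j : ℕ, (-(ω ^ 2)) ^ j - ω ^ 2 * g j = ((j : ℝ) + 1) * (-(ω ^ 2)) ^ j := by
    intro j
    cases j with
    | zero => simp [hg0]
    | succ i =>
      rw [hgs i, pow_succ]
      push_cast
      ring
  have hAm_pow := pow_two_mul_apply A (-(ω ^ 2)) m hA2m
  have keyE : ∀ j : ℕ, (A ^ (2 * j)) y = ((-(ω ^ 2)) ^ j) • y + (g j) • m := by
    intro j
    induction j with
    | zero => simp [hg0]
    | succ j ih =>
      have h2 : 2 * (j + 1) = 2 * j + 2 := by ring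
      have hA2 : (A ^ 2) y = m - ω ^ 2 • y := by
        rw [sq, ContinuousLinearMap.mul_apply, hA2y]
      rw [h2, pow_add, ContinuousLinearMap.mul_apply, hA2, map_sub, map_smul, hAm_pow j, ih]
      cases j with
      | zero =>
        rw [hg0, hgs 0]
        match_scalars <;> push_cast <;> ring
      | succ i =>
        rw [hgs i, hgs (i + 1)]
        match_scalars <;> push_cast <;> ring
  have keyO : ∀ j : ℕ, (A ^ (2 * j + 1)) y = ((-(ω ^ 2)) ^ j) • A y + (g j) • A m := by
    intro j
    rw [pow_succ', ContinuousLinearMap.mul_apply, keyE j, map_add, map_smul, map_smul]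
  set f : ℕ → V := fun k => ((Nat.factorial k : ℝ)⁻¹) • ((((2 : ℝ) • A) ^ k) y) with hfdef
  clear_value f
  have hfk : ∀ k : ℕ, f k = ((Nat.factorial k : ℝ)⁻¹ * 2 ^ k) • ((A ^ k) y) := by
    intro k
    simp only [hfdef]
    rw [_root_.smul_pow, ContinuousLinearMap.smul_apply, smul_smul]
  have hfactne : ∀ k : ℕ, ((Nat.factorial k : ℝ)) ≠ 0 := fun k =>
    Nat.cast_ne_zero.mpr (Nat.factorial_ne_zero k)
  have hEvenSum : HasSum (fun j : ℕ => f (2 * j))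
      (Real.cos (2 * ω) • y + (ω⁻¹ * Real.sin (2 * ω)) • m) := by
    have p1 : HasSum (fun j : ℕ => (((Nat.factorial (2 * j) : ℝ))⁻¹ * 2 ^ (2 * j) * (-(ω ^ 2)) ^ j) • y)
        (Real.cos (2 * ω) • y) := by
      have hc := (Real.hasSum_cos (2 * ω)).smul_const y
      have hfun : (fun j : ℕ => (((Nat.factorial (2 * j) : ℝ))⁻¹ * 2 ^ (2 * j) * (-(ω ^ 2)) ^ j) • y)
          = fun j : ℕ => ((-1) ^ j * (2 * ω) ^ (2 * j) / ((Nat.factorial (2 * j) : ℝ))) • y := by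
        funext j
        congr 1
        rw [neg_pow, ← pow_mul, mul_pow]
        ring
      rw [hfun]
      exact hc
    have p2 : HasSum (fun j : ℕ => (((Nat.factorial (2 * j) : ℝ))⁻¹ * 2 ^ (2 * j) * g j) • m)
        ((ω⁻¹ * Real.sin (2 * ω)) • m) := by
      have hshift : HasSum
          (fun i : ℕ => (((Nat.factorial (2 * (i + 1)) : ℝ))⁻¹ * 2 ^ (2 * (i + 1)) * g (i + 1)) • m)
          ((ω⁻¹ * Real.sin (2 * ω)) • m) := by
        have hs := ((Real.hasSum_sin (2 * ω)).mul_left ω⁻¹).smul_const m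
        have hfun : (fun i : ℕ => (((Nat.factorial (2 * (i + 1)) : ℝ))⁻¹ * 2 ^ (2 * (i + 1)) * g (i + 1)) • m)
            = fun i : ℕ => (ω⁻¹ * ((-1) ^ i * (2 * ω) ^ (2 * i + 1) / ((Nat.factorial (2 * i + 1) : ℝ)))) • m := by
          funext i
          congr 1
          rw [hgs i]
          have h1 : 2 * (i + 1) = (2 * i + 1) + 1 := by ring
          rw [h1, Nat.factorial_succ]
          push_cast
          rw [neg_pow, ← pow_mul, mul_pow]
          field_simp
          ring
        rw [hfun]
        exact hs
      have h0 := HasSum.zero_add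
        (f := fun jj : ℕ => ((Nat.factorial (2 * jj) : ℝ)⁻¹ * 2 ^ (2 * jj) * g jj) • m) hshift
      simpa [hg0] using h0
    have hsum := p1.add p2
    have hfun : (fun j : ℕ => f (2 * j))
        = fun j : ℕ => ((((Nat.factorial (2 * j) : ℝ))⁻¹ * 2 ^ (2 * j) * (-(ω ^ 2)) ^ j) • y
          + (((Nat.factorial (2 * j) : ℝ))⁻¹ * 2 ^ (2 * j) * g j) • m) := by
      funext j
      rw [hfk, keyE j, smul_add, smul_smul, smul_smul]
    rw [hfun]
    exact hsum
  have hOddSum : HasSum (fun j : ℕ => f (2 * j + 1))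
      ((ω⁻¹ * Real.sin (2 * ω)) • A y
        + ((ω ^ 2)⁻¹ * ((2 * ω)⁻¹ * Real.sin (2 * ω) - Real.cos (2 * ω))) • A m) := by
    have p3 : HasSum (fun j : ℕ => (((Nat.factorial (2 * j + 1) : ℝ))⁻¹ * 2 ^ (2 * j + 1) * (-(ω ^ 2)) ^ j) • A y)
        ((ω⁻¹ * Real.sin (2 * ω)) • A y) := by
      have hs := ((Real.hasSum_sin (2 * ω)).mul_left ω⁻¹).smul_const (A y)
      have hfun : (fun j : ℕ => (((Nat.factorial (2 * j + 1) : ℝ))⁻¹ * 2 ^ (2 * j + 1) * (-(ω ^ 2)) ^ j) • A y)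
          = fun j : ℕ => (ω⁻¹ * ((-1) ^ j * (2 * ω) ^ (2 * j + 1) / ((Nat.factorial (2 * j + 1) : ℝ)))) • A y := by
        funext j
        congr 1
        rw [neg_pow, ← pow_mul, mul_pow]
        field_simp
        ring
      rw [hfun]
      exact hs
    have p4 : HasSum (fun j : ℕ => (((Nat.factorial (2 * j + 1) : ℝ))⁻¹ * 2 ^ (2 * j + 1) * g j) • A m)
        (((ω ^ 2)⁻¹ * ((2 * ω)⁻¹ * Real.sin (2 * ω) - Real.cos (2 * ω))) • A m) := by
      have hbase := ((((Real.hasSum_sin (2 * ω)).mul_left (2 * ω)⁻¹).sub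
        (Real.hasSum_cos (2 * ω))).mul_left ((ω ^ 2)⁻¹)).smul_const (A m)
      have hfun : (fun j : ℕ => (((Nat.factorial (2 * j + 1) : ℝ))⁻¹ * 2 ^ (2 * j + 1) * g j) • A m)
          = fun j : ℕ => ((ω ^ 2)⁻¹ * ((2 * ω)⁻¹ * ((-1) ^ j * (2 * ω) ^ (2 * j + 1) / ((Nat.factorial (2 * j + 1) : ℝ)))
            - (-1) ^ j * (2 * ω) ^ (2 * j) / ((Nat.factorial (2 * j) : ℝ)))) • A m := by
        funext j
        congr 1
        cases j with
        | zero =>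
          have h20 : (2 * ω) ≠ 0 := mul_ne_zero two_ne_zero hω
          rw [hg0, mul_zero]
          norm_num [Nat.factorial]
          field_simp [h20]
          try ring
          try simp
        | succ i =>
          rw [hgs i]
          have h1 : 2 * (i + 1) + 1 = (2 * i + 2) + 1 := by ring
          have h2 : 2 * (i + 1) = (2 * i + 1) + 1 := by ring
          rw [h1]
          rw [show Nat.factorial ((2 * i + 2) + 1) = ((2 * i + 2) + 1) * Nat.factorial ((2 * i + 1) + 1) from by
            rw [Nat.factorial_succ]; try norm_num]
          rw [show Nat.factorial ((2 * i + 1) + 1) = ((2 * i + 1) + 1) * Nat.factorial (2 * i + 1) from Nat.factorial_succ _]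
          rw [h2, show Nat.factorial ((2 * i + 1) + 1) = ((2 * i + 1) + 1) * Nat.factorial (2 * i + 1) from Nat.factorial_succ _]
          push_cast
          rw [neg_pow, ← pow_mul, mul_pow]
          field_simp
          try ring
      rw [hfun]
      exact hbase
    have hsum := p3.add p4
    have hfun : (fun j : ℕ => f (2 * j + 1))
        = fun j : ℕ => ((((Nat.factorial (2 * j + 1) : ℝ))⁻¹ * 2 ^ (2 * j + 1) * (-(ω ^ 2)) ^ j) • A y
          + (((Nat.factorial (2 * j + 1) : ℝ))⁻¹ * 2 ^ (2 * j + 1) * g j) • A m) := by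
      funext j
      rw [hfk, keyO j, smul_add, smul_smul, smul_smul]
    rw [hfun]
    exact hsum
  have htot := hEvenSum.even_add_odd hOddSum
  rw [hfdef] at htot
  have hexpf := hasSum_exp_apply ((2 : ℝ) • A) y
  have huniq := hexpf.unique htot
  rw [hexp, hsin, hcos] at huniq
  simp only [mul_zero, zero_smul, zero_add, add_zero, zero_sub, sub_neg_eq_add, neg_neg,
    mul_one, neg_one_smul] at huniq
  have h9 : ((ω ^ 2)⁻¹) • A m = 0 := by
    have := huniq
    rw [left_eq_add] at this
    exact this
  have hAm : A m = 0 := by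
    rcases smul_eq_zero.mp h9 with h | h
    · exfalso
      exact (inv_ne_zero (pow_ne_zero 2 hω)) h
    · exact h
  have h10 : A (A m) = 0 := by rw [hAm, map_zero]
  rw [h10, zero_add] at hMM
  rcases smul_eq_zero.mp hMM with h | h
  · exact absurd h (pow_ne_zero 2 hω)
  · exact h

lemma irreducible_natDegree_le_two {p : ℝ[X]} (hp : Irreducible p) : p.natDegree ≤ 2 := by
  have hd0 : 0 < p.natDegree := hp.natDegree_pos
  have hdeg : 0 < (p.map (algebraMap ℝ ℂ)).degree := by
    rw [Polynomial.degree_map_eq_of_injective (algebraMap ℝ ℂ).injective]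
    exact Polynomial.natDegree_pos_iff_degree_pos.mp hd0
  obtain ⟨z, hz⟩ := Complex.exists_root hdeg
  have haz : Polynomial.aeval z p = 0 := by
    rwa [Polynomial.aeval_def, ← Polynomial.eval_map]
  have hint : IsIntegral ℝ z := IsIntegral.of_finite ℝ z
  obtain ⟨s, hs⟩ := minpoly.dvd ℝ z haz
  have hmin_nunit : ¬ IsUnit (minpoly ℝ z) := by
    intro hu
    exact (minpoly.natDegree_pos hint).ne' (Polynomial.natDegree_eq_zero_of_isUnit hu)
  rcases hp.isUnit_or_isUnit hs with h | h
  · exact absurd h hmin_nunit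
  · have hs0 : s ≠ 0 := by
      rintro rfl
      rw [mul_zero] at hs
      exact hp.ne_zero hs
    have hdsum : p.natDegree = (minpoly ℝ z).natDegree + s.natDegree := by
      rw [hs, Polynomial.natDegree_mul (minpoly.ne_zero hint) hs0]
    rw [Polynomial.natDegree_eq_zero_of_isUnit h] at hdsum
    have hle := minpoly.natDegree_le (A := ℝ) z
    rw [Complex.finrank_real_complex] at hle
    omega

lemma monic_natDegree_two_eq {p : ℝ[X]} (hm : p.Monic) (h2 : p.natDegree = 2) :
    p = X ^ 2 + C (p.coeff 1) * X + C (p.coeff 0) := by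
  have hc2 : p.coeff 2 = 1 := by
    have := hm.coeff_natDegree
    rwa [h2] at this
  ext n
  simp only [Polynomial.coeff_add, Polynomial.coeff_X_pow, Polynomial.coeff_C_mul,
    Polynomial.coeff_X, Polynomial.coeff_C]
  match n with
  | 0 => simp
  | 1 => simp
  | 2 => simpa using hc2
  | (n + 3) =>
    have hlt : p.natDegree < n + 3 := by omega
    rw [Polynomial.coeff_eq_zero_of_natDegree_lt hlt]
    simp

lemma ind_main (A : V →L[ℝ] V)
    (W : Submodule ℝ V) (hWexp : ∀ x ∈ W, NormedSpace.exp ((2 : ℝ) • A) x = -x)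
    (B : Module.End ℝ W) (hB : ∀ w : W, ((B w : V)) = A (w : V))
    (T : Submodule ℝ V)
    (hT : ∀ (n : ℕ) (u : V), A (A u) + (((n : ℝ) + 1 / 2) ^ 2 * π ^ 2) • u = 0 → u ∈ T) :
    ∀ (d : ℕ) (r : ℝ[X]), r.natDegree ≤ d → r ≠ 0 → ∀ v : W,
      Polynomial.aeval B r v = 0 → (v : V) ∈ T := by
  have hconst : ∀ (r : ℝ[X]), r.natDegree = 0 → r ≠ 0 → ∀ v : W,
      Polynomial.aeval B r v = 0 → (v : V) ∈ T := by
    intro r h0 hr0 v hv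
    rw [Polynomial.eq_C_of_natDegree_le_zero (le_of_eq h0), Polynomial.aeval_C,
      Module.algebraMap_end_apply] at hv
    have hc0 : r.coeff 0 ≠ 0 := by
      intro h
      apply hr0
      rw [Polynomial.eq_C_of_natDegree_le_zero (le_of_eq h0), h, map_zero]
    have hv0 : v = 0 := by
      rcases smul_eq_zero.mp hv with h | h
      · exact absurd h hc0
      · exact h
    rw [hv0]
    simpa using T.zero_mem
  intro d
  induction d with
  | zero =>
    intro r hdeg hr0 v hv
    exact hconst r (Nat.le_zero.mp hdeg) hr0 v hv
  | succ d ih =>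
    intro r hdeg hr0 v hv
    by_cases hd0 : r.natDegree = 0
    · exact hconst r hd0 hr0 v hv
    have hnotunit : ¬ IsUnit r := fun h => hd0 (Polynomial.natDegree_eq_zero_of_isUnit h)
    obtain ⟨p, hpirr, hpdvd⟩ := WfDvdMonoid.exists_irreducible_factor hnotunit hr0
    have hpne : p ≠ 0 := hpirr.ne_zero
    have hu : IsUnit (Polynomial.C (p.leadingCoeff)⁻¹) :=
      Polynomial.isUnit_C.mpr (isUnit_iff_ne_zero.mpr
        (inv_ne_zero (Polynomial.leadingCoeff_ne_zero.mpr hpne)))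
    set q := p * Polynomial.C (p.leadingCoeff)⁻¹ with hqdef
    have hassoc : Associated p q := ⟨hu.unit, by rw [IsUnit.unit_spec]⟩
    have hqirr : Irreducible q := hassoc.irreducible hpirr
    have hqmonic : q.Monic := Polynomial.monic_mul_leadingCoeff_inv hpne
    have hq0 : q ≠ 0 := hqmonic.ne_zero
    have hqdvd : q ∣ r := hassoc.symm.dvd.trans hpdvd
    obtain ⟨r₂, hr₂⟩ := hqdvd
    clear_value q
    have hr₂0 : r₂ ≠ 0 := by
      rintro rfl
      rw [mul_zero] at hr₂
      exact hr0 hr₂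
    have hdegq_pos : 0 < q.natDegree := by
      rcases Nat.eq_zero_or_pos q.natDegree with h | h
      · exfalso
        apply hqirr.not_isUnit
        rw [Polynomial.eq_C_of_natDegree_le_zero (le_of_eq h)]
        apply Polynomial.isUnit_C.mpr
        have hcn := hqmonic.coeff_natDegree
        rw [h] at hcn
        rw [hcn]
        exact isUnit_one
      · exact h
    have hdegsum : r.natDegree = q.natDegree + r₂.natDegree := by
      rw [hr₂, Polynomial.natDegree_mul hq0 hr₂0]
    have hr₂deg : r₂.natDegree ≤ d := by omega
    by_cases hu0 : Polynomial.aeval B r₂ v = 0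
    · exact ih r₂ hr₂deg hr₂0 v hu0
    have hqu : Polynomial.aeval B q (Polynomial.aeval B r₂ v) = 0 := by
      rw [← Module.End.mul_apply, ← map_mul, ← hr₂]
      exact hv
    set u := Polynomial.aeval B r₂ v with hudef
    have hexpu : NormedSpace.exp ((2 : ℝ) • A) (u : V) = -(u : V) := hWexp u u.2
    have huV0 : (u : V) ≠ 0 := fun h => hu0 (by
      apply Subtype.ext
      simpa using h)
    have hqdeg2 : q.natDegree ≤ 2 := irreducible_natDegree_le_two hqirr
    rcases (by omega : q.natDegree = 1 ∨ q.natDegree = 2) with hdeg1 | hdeg2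
    · exfalso
      have hq_eq : q = Polynomial.X + Polynomial.C (q.coeff 0) := by
        have heq := Polynomial.eq_X_add_C_of_natDegree_le_one (le_of_eq hdeg1)
        have hc1 : q.coeff 1 = 1 := by
          have := hqmonic.coeff_natDegree
          rwa [hdeg1] at this
        rwa [hc1, map_one, one_mul] at heq
      obtain ⟨c0, hqc0⟩ : ∃ c0, q = Polynomial.X + Polynomial.C c0 := ⟨q.coeff 0, hq_eq⟩
      have h0 : B u + c0 • u = 0 := by
        have hstep : Polynomial.aeval B q u = B u + c0 • u := by
          rw [hqc0, map_add, Polynomial.aeval_X, Polynomial.aeval_C, LinearMap.add_apply,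
            Module.algebraMap_end_apply]
        rw [← hstep]
        exact hqu
      have h0' : A (u : V) + c0 • (u : V) = 0 := by
        have hcoe := congrArg (fun w : W => (w : V)) h0
        simpa [hB] using hcoe
      have hAu : A (u : V) = (-c0) • (u : V) := by
        rw [neg_smul]
        exact eq_neg_of_add_eq_zero_left h0'
      exact no_eigen A (u : V) (-c0) huV0 hAu hexpu
    · have hq_eq := monic_natDegree_two_eq hqmonic hdeg2
      obtain ⟨bb, cc, hqbc⟩ : ∃ bb cc, q = X ^ 2 + C bb * X + C cc :=
        ⟨q.coeff 1, q.coeff 0, hq_eq⟩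
      have haevalq : ∀ w : W, ((Polynomial.aeval B q w : W) : V)
          = A (A (w : V)) + bb • A (w : V) + cc • (w : V) := by
        intro w
        have hstep : Polynomial.aeval B q w = B (B w) + bb • (B w) + cc • w := by
          conv_lhs => rw [hqbc]
          rw [map_add, map_add, map_mul, Polynomial.aeval_X_pow, Polynomial.aeval_X,
            Polynomial.aeval_C, Polynomial.aeval_C, LinearMap.add_apply, LinearMap.add_apply,
            Module.End.mul_apply, Module.algebraMap_end_apply, Module.algebraMap_end_apply,
            pow_two, Module.End.mul_apply]
        rw [hstep]
        push_cast
        simp only [Submodule.coe_add, SetLike.val_smul, hB]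
      have hdisc : bb ^ 2 < 4 * cc := by
        by_contra hge
        push_neg at hge
        have hge' : (0:ℝ) ≤ bb ^ 2 - 4 * cc := by linarith
        set t := (-bb + Real.sqrt (bb ^ 2 - 4 * cc)) / 2 with htdef
        have hroot : Polynomial.IsRoot q t := by
          have hs := Real.sq_sqrt hge'
          rw [Polynomial.IsRoot, hqbc]
          simp only [Polynomial.eval_add, Polynomial.eval_mul, Polynomial.eval_pow,
            Polynomial.eval_X, Polynomial.eval_C]
          rw [htdef]
          nlinarith [hs]
        obtain ⟨q2, hq2⟩ := Polynomial.dvd_iff_isRoot.mpr hroot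
        rcases hqirr.isUnit_or_isUnit hq2 with h | h
        · have := Polynomial.natDegree_eq_zero_of_isUnit h
          rw [Polynomial.natDegree_X_sub_C] at this
          omega
        · have hq20 : q2 ≠ 0 := by
            rintro rfl
            rw [mul_zero] at hq2
            exact hq0 hq2
          have hdu := Polynomial.natDegree_eq_zero_of_isUnit h
          have hdq := congrArg Polynomial.natDegree hq2
          rw [Polynomial.natDegree_mul (Polynomial.X_sub_C_ne_zero t) hq20,
            Polynomial.natDegree_X_sub_C, hdu, hdeg2] at hdq
          omega
      have hrelu : A (A (u : V)) + bb • A (u : V) + cc • (u : V) = 0 := by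
        rw [← haevalq u, hqu]
        simp
      obtain ⟨hb0, n, hc⟩ := quad_case A (u : V) bb cc huV0 hrelu hdisc hexpu
      set ω := ((n : ℝ) + 1 / 2) * π with hωdef
      have hωne : ω ≠ 0 := by
        rw [hωdef]
        positivity
      have hcc : cc = ω ^ 2 := by rw [hc, hωdef]; ring
      have h2ω : 2 * ω = π + (n : ℤ) * (2 * π) := by
        rw [hωdef]; push_cast; ring
      have hsin : Real.sin (2 * ω) = 0 := by
        rw [h2ω, Real.sin_add_int_mul_two_pi, Real.sin_pi]
      have hcos2 : Real.cos (2 * ω) = -1 := by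
        rw [h2ω, Real.cos_add_int_mul_two_pi, Real.cos_pi]
      have haevalq2 : ∀ w : W, ((Polynomial.aeval B q w : W) : V)
          = A (A (w : V)) + ω ^ 2 • (w : V) := by
        intro w
        rw [haevalq w, hb0, hcc, zero_smul, add_zero]
      by_cases hdvd2 : q ∣ r₂
      · obtain ⟨r₃, hr₃⟩ := hdvd2
        have hr₃0 : r₃ ≠ 0 := by
          rintro rfl
          rw [mul_zero] at hr₃
          exact hr₂0 hr₃
        set w := Polynomial.aeval B r₃ v with hwdef
        set Cw := Polynomial.aeval B q w with hCwdef
        have hCCw : Polynomial.aeval B q Cw = 0 := by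
          have hfac : q * (q * r₃) = r := by rw [hr₂, hr₃]; try ring
          have h9 : Polynomial.aeval B (q * (q * r₃)) v = 0 := by rw [hfac]; exact hv
          rw [map_mul, map_mul, Module.End.mul_apply, Module.End.mul_apply] at h9
          rw [hCwdef, hwdef]
          exact h9
        have hMw : A (A (w : V)) + ω ^ 2 • (w : V) = (Cw : V) := (haevalq2 w).symm
        have hMMw : A (A ((Cw : V))) + ω ^ 2 • (Cw : V) = 0 := by
          have := haevalq2 Cw
          rw [hCCw] at this
          simpa using this.symm
        have hexpw : NormedSpace.exp ((2 : ℝ) • A) (w : V) = -(w : V) := hWexp w w.2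
        have hconc := double_root_case A (w : V) ω hωne hsin hcos2
          (by rw [hMw]; exact hMMw) hexpw
        have hCw0 : Cw = 0 := by
          have hcV : (Cw : V) = 0 := by rw [← hMw]; exact hconc
          exact Subtype.ext (by simpa using hcV)
        have hnew : Polynomial.aeval B (q * r₃) v = 0 := by
          rw [map_mul, Module.End.mul_apply, ← hwdef, ← hCwdef]
          exact hCw0
        have hdeg' : (q * r₃).natDegree ≤ d := by
          have h3 := congrArg Polynomial.natDegree hr₃
          rw [Polynomial.natDegree_mul hq0 hr₃0, hdeg2] at h3
          rw [Polynomial.natDegree_mul hq0 hr₃0, hdeg2]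
          omega
        exact ih (q * r₃) hdeg' (mul_ne_zero hq0 hr₃0) v hnew
      · have hcop : IsCoprime q r₂ := (hqirr.coprime_iff_not_dvd).mpr hdvd2
        obtain ⟨a, b', hab⟩ := hcop
        have hsplit : v = Polynomial.aeval B (b' * r₂) v + Polynomial.aeval B (a * q) v := by
          have h9 := congrArg (fun pp : ℝ[X] => Polynomial.aeval B pp v) hab
          simp only [map_add, map_one, LinearMap.add_apply, Module.End.one_apply] at h9
          rw [add_comm] at h9
          exact h9.symm
        have hv1 : Polynomial.aeval B q (Polynomial.aeval B (b' * r₂) v) = 0 := by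
          rw [← Module.End.mul_apply, ← map_mul]
          have hfac : q * (b' * r₂) = b' * r := by rw [hr₂]; ring
          rw [hfac, map_mul, Module.End.mul_apply, hv, map_zero]
        have hm1 : ((Polynomial.aeval B (b' * r₂) v : W) : V) ∈ T := by
          apply hT n
          have h10 := haevalq2 (Polynomial.aeval B (b' * r₂) v)
          rw [hv1] at h10
          have h11 : A (A ((Polynomial.aeval B (b' * r₂) v : W) : V))
              + ω ^ 2 • ((Polynomial.aeval B (b' * r₂) v : W) : V) = 0 := by
            simpa using h10.symm
          rw [show (((n : ℝ) + 1 / 2) ^ 2 * π ^ 2) = ω ^ 2 from by rw [hωdef]; ring]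
          exact h11
        have hv2 : Polynomial.aeval B r₂ (Polynomial.aeval B (a * q) v) = 0 := by
          rw [← Module.End.mul_apply, ← map_mul]
          have hfac : r₂ * (a * q) = a * r := by rw [hr₂]; ring
          rw [hfac, map_mul, Module.End.mul_apply, hv, map_zero]
        have hm2 := ih r₂ hr₂deg hr₂0 _ hv2
        rw [hsplit, Submodule.coe_add]
        exact T.add_mem hm1 hm2

end KerCoshAux

open KerCoshAux in
theorem ker_cosh
    {V : Type*} [NormedAddCommGroup V] [NormedSpace ℝ V] [FiniteDimensional ℝ V]
    (A : V →L[ℝ] V) :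
    LinearMap.ker (((1 / 2 : ℝ) • (NormedSpace.exp A + NormedSpace.exp (-A)) : V →L[ℝ] V) : V →ₗ[ℝ] V)
        = LinearMap.ker ((NormedSpace.exp ((-2 : ℝ) • A) + (1 : V →L[ℝ] V) : V →L[ℝ] V) : V →ₗ[ℝ] V) ∧
    LinearMap.ker (((1 / 2 : ℝ) • (NormedSpace.exp A + NormedSpace.exp (-A)) : V →L[ℝ] V) : V →ₗ[ℝ] V)
        = ⨆ n : ℕ,
            LinearMap.ker ((A ^ 2 + (((n : ℝ) + 1 / 2) ^ 2 * π ^ 2) • (1 : V →L[ℝ] V) : V →L[ℝ] V) : V →ₗ[ℝ] V) := by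
  constructor
  · ext x
    rw [LinearMap.mem_ker, LinearMap.mem_ker, ContinuousLinearMap.coe_coe, ContinuousLinearMap.coe_coe, cosh_apply_eq_zero_iff,
      sum_eq_zero_iff_exp_neg_two, ContinuousLinearMap.add_apply, ContinuousLinearMap.one_apply]
    constructor
    · intro h
      rw [h]
      exact neg_add_cancel x
    · intro h
      exact eq_neg_of_add_eq_zero_left h
  · apply le_antisymm
    · intro x hx
      rw [LinearMap.mem_ker, ContinuousLinearMap.coe_coe, cosh_apply_eq_zero_iff, sum_eq_zero_iff_exp_two] at hx
      set W : Submodule ℝ V :=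
        LinearMap.ker ((NormedSpace.exp ((2 : ℝ) • A) + 1 : V →L[ℝ] V) : V →ₗ[ℝ] V) with hWdef
      have hWmem : ∀ y : V, y ∈ W ↔ NormedSpace.exp ((2 : ℝ) • A) y = -y := by
        intro y
        rw [hWdef, LinearMap.mem_ker, ContinuousLinearMap.coe_coe, ContinuousLinearMap.add_apply,
          ContinuousLinearMap.one_apply]
        constructor
        · exact fun h => eq_neg_of_add_eq_zero_left h
        · intro h
          rw [h]
          exact neg_add_cancel y
      have hWinv : ∀ y ∈ W, (A : V →ₗ[ℝ] V) y ∈ W := by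
        intro y hy
        rw [hWmem] at hy ⊢
        have hcomm : Commute (NormedSpace.exp ((2 : ℝ) • A)) A :=
          ((Commute.refl A).smul_left (2 : ℝ)).exp_left
        calc NormedSpace.exp ((2 : ℝ) • A) ((A : V →ₗ[ℝ] V) y)
            = A (NormedSpace.exp ((2 : ℝ) • A) y) := by
              show NormedSpace.exp ((2 : ℝ) • A) (A y) = A (NormedSpace.exp ((2 : ℝ) • A) y)
              rw [← ContinuousLinearMap.mul_apply, ← ContinuousLinearMap.mul_apply, hcomm.eq]
          _ = -((A : V →ₗ[ℝ] V) y) := by rw [hy, map_neg]; rfl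
      set B : Module.End ℝ W := (A : V →ₗ[ℝ] V).restrict hWinv with hBdef
      have hB : ∀ w : W, ((B w : V)) = A (w : V) := fun w => rfl
      have hxW : x ∈ W := (hWmem x).mpr hx
      have hmain := ind_main A W (fun y hy => (hWmem y).mp hy) B hB
        (⨆ n : ℕ, LinearMap.ker ((A ^ 2 + (((n : ℝ) + 1 / 2) ^ 2 * π ^ 2) • (1 : V →L[ℝ] V) : V →L[ℝ] V) : V →ₗ[ℝ] V))
        ?hT (LinearMap.charpoly B).natDegree (LinearMap.charpoly B) le_rfl
        (LinearMap.charpoly_monic B).ne_zero ⟨x, hxW⟩ ?haev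
      · exact hmain
      case hT =>
        intro n u hu
        apply Submodule.mem_iSup_of_mem n
        rw [LinearMap.mem_ker, ContinuousLinearMap.coe_coe, ContinuousLinearMap.add_apply, ContinuousLinearMap.smul_apply,
          ContinuousLinearMap.one_apply, pow_two, ContinuousLinearMap.mul_apply]
        exact hu
      case haev =>
        rw [LinearMap.aeval_self_charpoly B]
        rfl
    · apply iSup_le
      intro n x hx
      rw [LinearMap.mem_ker, ContinuousLinearMap.coe_coe] at hx ⊢
      rw [ContinuousLinearMap.add_apply, ContinuousLinearMap.smul_apply,
        ContinuousLinearMap.one_apply, pow_two, ContinuousLinearMap.mul_apply] at hx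
      set ωn := ((n : ℝ) + 1 / 2) * π with hωn
      have hcω : ((n : ℝ) + 1 / 2) ^ 2 * π ^ 2 = ωn ^ 2 := by rw [hωn]; ring
      have hA2 : A (A x) = (-(ωn ^ 2)) • x := by
        rw [neg_smul]
        apply eq_neg_of_add_eq_zero_left
        rw [← hcω]
        exact hx
      have hωne : ωn ≠ 0 := by
        rw [hωn]
        positivity
      have h1 := exp_apply_eq_of_sq A x ωn hωne hA2
      have hA2' : (-A) ((-A) x) = (-(ωn ^ 2)) • x := by
        rw [ContinuousLinearMap.neg_apply, ContinuousLinearMap.neg_apply, map_neg, neg_neg, hA2]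
      have h2 := exp_apply_eq_of_sq (-A) x ωn hωne hA2'
      have hcosz : Real.cos ωn = 0 := by
        rw [Real.cos_eq_zero_iff]
        exact ⟨(n : ℤ), by rw [hωn]; push_cast; ring⟩
      rw [ContinuousLinearMap.smul_apply, ContinuousLinearMap.add_apply, h1, h2, hcosz]
      simp [ContinuousLinearMap.neg_apply]
end

section
/- Let V be a nonzero finite-dimensional complex vector space and A a linear endomorphism of V. Then: (a) the operator ∑_{k=0}^∞ (1/(2k+1)!)·A^{2k} (representing sinh(A)/A) is invertible if and only if the spectrum of A contains no element of πi·ℤ except possibly 0, i.e. Spec(A) ∩ πi·ℤ ⊆ {0}; (b) the operator cosh A = ½(exp(A) + exp(−A)) is invertible if and only if Spec(A) ∩ (π/2 + π·ℤ)·i = ∅. -/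
/- STATEMENT 12 (Lemma 2.3-type regularity criteria): invertibility of sinh(A)/A and
   cosh(A) in terms of the eigenvalues of A, for an endomorphism A of a nonzero
   finite-dimensional complex vector space. -/

open scoped Real

/-! Auxiliary lemmas -/

lemma sinhc_op_summable {𝔸 : Type*} [NormedRing 𝔸] [NormedAlgebra ℂ 𝔸] [NormOneClass 𝔸]
    [CompleteSpace 𝔸] (x : 𝔸) :
    Summable fun k : ℕ => ((Nat.factorial (2 * k + 1) : ℂ))⁻¹ • x ^ (2 * k) := by
  apply Summable.of_norm
  refine Summable.of_nonneg_of_le (fun _ => norm_nonneg _) (fun k => ?_)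
    (Real.summable_pow_div_factorial (‖x‖ ^ 2))
  rw [norm_smul]
  calc ‖((Nat.factorial (2 * k + 1) : ℂ))⁻¹‖ * ‖x ^ (2 * k)‖
      ≤ ((Nat.factorial k : ℝ))⁻¹ * ‖x‖ ^ (2 * k) := by
        refine mul_le_mul ?_ (norm_pow_le _ _) (norm_nonneg _) (by positivity)
        rw [norm_inv, Complex.norm_natCast]
        apply inv_anti₀
        · exact_mod_cast Nat.factorial_pos k
        · exact_mod_cast Nat.factorial_le (by omega)
    _ = (‖x‖ ^ 2) ^ k / (Nat.factorial k : ℝ) := by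
        rw [pow_mul]; ring

noncomputable def sinhc (μ : ℂ) : ℂ := ∑' k : ℕ, ((Nat.factorial (2 * k + 1) : ℂ))⁻¹ • μ ^ (2 * k)

lemma hasSum_sinh_aux (μ : ℂ) :
    HasSum (fun k : ℕ => μ ^ (2 * k + 1) / ((2 * k + 1).factorial : ℂ)) (Complex.sinh μ) := by
  have h := Complex.hasSum_sin (μ * Complex.I)
  rw [Complex.sin_mul_I] at h
  have h2 := h.div_const Complex.I
  rw [mul_div_cancel_right₀ _ Complex.I_ne_zero] at h2
  convert h2 using 2 with k
  case e'_3 => rfl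
  have hI : (Complex.I : ℂ) ^ (2 * k + 1) = (-1) ^ k * Complex.I := by
    rw [pow_succ, pow_mul, Complex.I_sq]
  have hk : ((-1 : ℂ)) ^ k * (-1 : ℂ) ^ k = 1 := by rw [← mul_pow]; norm_num
  have hf : (((2 * k + 1).factorial : ℂ)) ≠ 0 := Nat.cast_ne_zero.mpr (Nat.factorial_ne_zero _)
  rw [mul_pow, hI]
  field_simp
  linear_combination (-(μ ^ (2 * k + 1))) * hk

lemma mul_sinhc (μ : ℂ) : μ * sinhc μ = Complex.sinh μ := by
  rw [sinhc, ← (sinhc_op_summable μ).tsum_mul_left μ, ← (hasSum_sinh_aux μ).tsum_eq]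
  apply tsum_congr
  intro k
  rw [smul_eq_mul]
  have hf : (((2 * k + 1).factorial : ℂ)) ≠ 0 := Nat.cast_ne_zero.mpr (Nat.factorial_ne_zero _)
  field_simp
  ring

lemma sinhc_zero : sinhc 0 = 1 := by
  rw [sinhc, tsum_eq_single 0 (fun k hk => by simp [zero_pow (by omega : 2 * k ≠ 0)])]
  simp

lemma sinhc_eq_zero_iff (μ : ℂ) :
    sinhc μ = 0 ↔ μ ≠ 0 ∧ ∃ n : ℤ, μ = (π : ℂ) * Complex.I * n := by
  rcases eq_or_ne μ 0 with rfl | hμ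
  · simp [sinhc_zero]
  · simp only [hμ, ne_eq, not_false_iff, true_and]
    have h1 : sinhc μ = 0 ↔ Complex.sinh μ = 0 := by
      rw [← mul_sinhc μ, mul_eq_zero]; tauto
    have h2 : Complex.sinh μ = 0 ↔ Complex.sin (μ * Complex.I) = 0 := by
      rw [Complex.sin_mul_I, mul_eq_zero]; simp [Complex.I_ne_zero]
    rw [h1, h2, Complex.sin_eq_zero_iff]
    constructor
    · rintro ⟨k, hk⟩
      refine ⟨-k, ?_⟩
      push_cast at hk ⊢
      linear_combination (-Complex.I) * hk + μ * Complex.I_sq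
    · rintro ⟨n, rfl⟩
      exact ⟨-n, by push_cast; linear_combination ((π : ℂ) * n) * Complex.I_sq⟩

lemma cosh_eq_zero_iff' (μ : ℂ) :
    Complex.cosh μ = 0 ↔ ∃ n : ℤ, μ = ((π : ℂ) / 2 + (π : ℂ) * n) * Complex.I := by
  have h2 : Complex.cosh μ = 0 ↔ Complex.cos (μ * Complex.I) = 0 := by
    rw [Complex.cos_mul_I]
  rw [h2, Complex.cos_eq_zero_iff]
  constructor
  · rintro ⟨k, hk⟩
    refine ⟨-k - 1, ?_⟩
    push_cast at hk ⊢
    linear_combination (-Complex.I) * hk + μ * Complex.I_sq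
  · rintro ⟨n, rfl⟩
    refine ⟨-n - 1, ?_⟩
    push_cast
    linear_combination (π / 2 + π * (n : ℂ)) * Complex.I_sq

section Operators

variable {V : Type*} [NormedAddCommGroup V] [NormedSpace ℂ V] [FiniteDimensional ℂ V]
  [Nontrivial V]

lemma pow_apply_eigenvector (A : V →L[ℂ] V) (μ : ℂ) (v : V) (hv : A v = μ • v) (m : ℕ) :
    (A ^ m) v = μ ^ m • v := by
  induction m with
  | zero => simp
  | succ m ih =>
      rw [pow_succ, ContinuousLinearMap.mul_apply, hv, map_smul, ih, smul_smul, pow_succ]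
      rw [mul_comm]

lemma tsum_apply_eigenvector (A : V →L[ℂ] V) (c : ℕ → ℂ) (n : ℕ → ℕ)
    (hs : Summable fun k => c k • A ^ (n k)) (μ : ℂ)
    (hμ : Summable fun k => c k • μ ^ (n k)) (v : V) (hv : A v = μ • v) :
    (∑' k : ℕ, c k • A ^ (n k)) v = (∑' k : ℕ, c k • μ ^ (n k)) • v := by
  have step1 : (∑' k : ℕ, c k • A ^ (n k)) v = ∑' k : ℕ, (c k • A ^ (n k)) v :=
    (ContinuousLinearMap.apply ℂ V v).map_tsum hs
  have step2 : ∀ k : ℕ, (c k • A ^ (n k)) v = (c k • μ ^ (n k)) • v := by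
    intro k
    rw [ContinuousLinearMap.smul_apply, pow_apply_eigenvector A μ v hv, smul_smul, smul_eq_mul]
  have step3 : (∑' k : ℕ, c k • μ ^ (n k)) • v = ∑' k : ℕ, (c k • μ ^ (n k)) • v := by
    exact (((ContinuousLinearMap.id ℂ ℂ).smulRight v).map_tsum hμ)
  rw [step1, step3]
  exact tsum_congr step2

lemma tsum_comm_self (A : V →L[ℂ] V) (c : ℕ → ℂ) (n : ℕ → ℕ)
    (hs : Summable fun k => c k • A ^ (n k)) :
    (∑' k : ℕ, c k • A ^ (n k)) * A = A * (∑' k : ℕ, c k • A ^ (n k)) := by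
  rw [← hs.tsum_mul_right A, ← hs.tsum_mul_left A]
  apply tsum_congr
  intro k
  rw [smul_mul_assoc, mul_smul_comm, ← pow_succ, ← pow_succ']

lemma key_isUnit_iff (A B : V →L[ℂ] V) (f : ℂ → ℂ)
    (hcomm : B * A = A * B)
    (heig : ∀ (μ : ℂ) (v : V), A v = μ • v → B v = f μ • v) :
    IsUnit B ↔ ∀ μ : ℂ, (∃ v, v ≠ 0 ∧ A v = μ • v) → f μ ≠ 0 := by
  constructor
  · rintro hB μ ⟨v, hv, hAv⟩ hf
    have hBv : B v = 0 := by rw [heig μ v hAv, hf, zero_smul]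
    obtain ⟨u, rfl⟩ := hB
    apply hv
    have h2 : (↑u⁻¹ : V →L[ℂ] V) ((↑u : V →L[ℂ] V) v) = v := by
      have h3 := congrArg (fun T : V →L[ℂ] V => T v) u.inv_mul
      simp only [ContinuousLinearMap.mul_apply, ContinuousLinearMap.one_apply] at h3
      exact h3
    rw [hBv, map_zero] at h2
    exact h2.symm
  · intro h
    by_cases hK : LinearMap.ker (B : V →ₗ[ℂ] V) = ⊥
    · have hinj : Function.Injective (B : V →ₗ[ℂ] V) := LinearMap.ker_eq_bot.mp hK
      have hbij : Function.Bijective (B : V →ₗ[ℂ] V) :=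
        ⟨hinj, (LinearMap.injective_iff_surjective).mp hinj⟩
      let e := LinearEquiv.ofBijective (B : V →ₗ[ℂ] V) hbij
      let eC := e.toContinuousLinearEquiv
      refine isUnit_iff_exists.mpr ⟨eC.symm.toContinuousLinearMap, ?_, ?_⟩
      · ext v
        exact eC.apply_symm_apply v
      · ext v
        exact eC.symm_apply_apply v
    · exfalso
      set p := LinearMap.ker (B : V →ₗ[ℂ] V) with hp
      have hinv : ∀ x ∈ p, A x ∈ p := by
        intro x hx
        have hx' : B x = 0 := hx
        have hBA : B (A x) = A (B x) := by
          have := congrArg (fun T : V →L[ℂ] V => T x) hcomm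
          simpa [ContinuousLinearMap.mul_apply] using this
        simp only [hx', map_zero] at hBA
        exact hBA
      haveI : Nontrivial p := Submodule.nontrivial_iff_ne_bot.mpr hK
      let g : Module.End ℂ p := (A : V →ₗ[ℂ] V).restrict hinv
      obtain ⟨μ, hμ⟩ := Module.End.exists_eigenvalue g
      obtain ⟨v, hv⟩ := hμ.exists_hasEigenvector
      have hAv : A (v : V) = μ • (v : V) := by
        have := congrArg (Subtype.val) hv.apply_eq_smul
        simpa [g, LinearMap.restrict_apply] using this
      have hv0 : (v : V) ≠ 0 := Submodule.coe_eq_zero.not.mpr hv.right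
      have hfμ := h μ ⟨v, hv0, hAv⟩
      have hBv : B (v : V) = 0 := v.2
      rw [heig μ v hAv] at hBv
      exact hfμ (smul_eq_zero.mp hBv |>.resolve_right hv0)

lemma exp_apply_eigenvector (A : V →L[ℂ] V) (μ : ℂ) (v : V) (hv : A v = μ • v) :
    NormedSpace.exp A v = Complex.exp μ • v := by
  rw [NormedSpace.exp_eq_tsum (𝕂 := ℂ)]
  have h := tsum_apply_eigenvector A (fun k => ((k.factorial : ℂ))⁻¹) id
    (NormedSpace.expSeries_summable' A) μ (NormedSpace.expSeries_summable' μ) v hv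
  simp only [id] at h
  rw [h, Complex.exp_eq_exp_ℂ, NormedSpace.exp_eq_tsum (𝕂 := ℂ)]

end Operators


theorem invertibility_of_sinhc_and_cosh
    {V : Type*} [NormedAddCommGroup V] [NormedSpace ℂ V] [FiniteDimensional ℂ V]
    [Nontrivial V] (A : V →L[ℂ] V) :
    -- (a) sinh(A)/A is invertible iff Spec(A) ∩ πiℤ ⊆ {0}
    (IsUnit (∑' k : ℕ, ((Nat.factorial (2 * k + 1) : ℂ))⁻¹ • A ^ (2 * k)) ↔
      {μ : ℂ | ∃ v : V, v ≠ 0 ∧ A v = μ • v}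
          ∩ {μ : ℂ | ∃ n : ℤ, μ = (π : ℂ) * Complex.I * n} ⊆ {0}) ∧
    -- (b) cosh A is invertible iff Spec(A) ∩ (π/2 + πℤ)i = ∅
    (IsUnit ((1 / 2 : ℂ) • (NormedSpace.exp A + NormedSpace.exp (-A))) ↔
      {μ : ℂ | ∃ v : V, v ≠ 0 ∧ A v = μ • v}
          ∩ {μ : ℂ | ∃ n : ℤ, μ = ((π : ℂ) / 2 + (π : ℂ) * n) * Complex.I} = ∅) := by
  constructor
  · -- part (a)
    have hs : Summable fun k : ℕ => ((Nat.factorial (2 * k + 1) : ℂ))⁻¹ • A ^ (2 * k) :=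
      sinhc_op_summable A
    have key := key_isUnit_iff A
      (∑' k : ℕ, ((Nat.factorial (2 * k + 1) : ℂ))⁻¹ • A ^ (2 * k)) sinhc
      (tsum_comm_self A _ (fun k => 2 * k) hs)
      (fun μ v hv => tsum_apply_eigenvector A _ (fun k => 2 * k) hs μ
        (sinhc_op_summable μ) v hv)
    rw [key]
    constructor
    · rintro h μ ⟨hμ1, hμ2⟩
      by_contra h0
      exact h μ hμ1 ((sinhc_eq_zero_iff μ).mpr ⟨h0, hμ2⟩)
    · rintro h μ hμ1 h0
      obtain ⟨hne, hμ2⟩ := (sinhc_eq_zero_iff μ).mp h0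
      exact hne (h ⟨hμ1, hμ2⟩)
  · -- part (b)
    have hcomm : ((1 / 2 : ℂ) • (NormedSpace.exp A + NormedSpace.exp (-A))) * A
        = A * ((1 / 2 : ℂ) • (NormedSpace.exp A + NormedSpace.exp (-A))) := by
      have c1 : Commute A (NormedSpace.exp A) := (Commute.refl A).exp_right
      have c2 : Commute A (NormedSpace.exp (-A)) := ((Commute.refl A).neg_right).exp_right
      rw [smul_mul_assoc, mul_smul_comm, add_mul, mul_add, c1.eq, c2.eq]
    have heig : ∀ (μ : ℂ) (v : V), A v = μ • v →
        ((1 / 2 : ℂ) • (NormedSpace.exp A + NormedSpace.exp (-A))) v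
          = Complex.cosh μ • v := by
      intro μ v hv
      have h1 := exp_apply_eigenvector A μ v hv
      have h2 := exp_apply_eigenvector (-A) (-μ) v (by rw [ContinuousLinearMap.neg_apply, hv, neg_smul])
      rw [ContinuousLinearMap.smul_apply, ContinuousLinearMap.add_apply, h1, h2,
        Complex.cosh, ← add_smul, smul_smul]
      congr 1
      ring
    rw [key_isUnit_iff A _ Complex.cosh hcomm heig]
    rw [Set.eq_empty_iff_forall_notMem]
    constructor
    · rintro h μ ⟨hμ1, hμ2⟩
      exact h μ hμ1 ((cosh_eq_zero_iff' μ).mpr hμ2)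
    · rintro h μ hμ1 h0
      exact h μ ⟨hμ1, (cosh_eq_zero_iff' μ).mp h0⟩
end

section
/- In ℝ⁴, let D = {x ∈ ℝ⁴ : x₁ ≥ 0, x₂ ≥ 0, x₃ ≤ 0, x₄ ≤ 0} and let K be the convex cone generated by D together with the two vectors (2,2,1,−5) and (2,2,−5,1). Then every element x of the topological closure of K satisfies x₁ ≥ 0 and x₂ ≥ 0; in particular, the vector (−1,5,−2,−2) does not belong to K. (Here (2,2,−5,1) is the image of z = (2,2,1,−5) under the Weyl group 𝒲_k ≅ S₂ × S₂ permuting the first two and the last two coordinates, and (−1,5,−2,−2) = −τ_h(z) where −τ_h sends (x₁,x₂,x₃,x₄) to (−x₃,−x₄,−x₁,−x₂); this shows the existence of an invariant cone C with minimal cone ⊆ C ⊆ maximal cone that is not invariant under −τ_h.) -/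
/- STATEMENT 16: The cone generated by D = {x₁,x₂ ≥ 0, x₃,x₄ ≤ 0} together with
   (2,2,1,−5) and (2,2,−5,1) has closure contained in {x₁ ≥ 0, x₂ ≥ 0}; in
   particular (−1,5,−2,−2) does not belong to it. -/

/-- The convex cone generated by a subset `S` of `ℝ⁴`: the smallest subset
containing `S` stable under addition and multiplication by nonnegative scalars. -/
def generatedCone (S : Set (Fin 4 → ℝ)) : Set (Fin 4 → ℝ) :=
  ⋂₀ {T : Set (Fin 4 → ℝ) | S ⊆ T ∧
    (∀ x ∈ T, ∀ y ∈ T, x + y ∈ T) ∧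
    (∀ r : ℝ, 0 ≤ r → ∀ x ∈ T, r • x ∈ T)}

theorem cone_not_tau_invariant :
    (∀ x ∈ closure (generatedCone
        ({x : Fin 4 → ℝ | 0 ≤ x 0 ∧ 0 ≤ x 1 ∧ x 2 ≤ 0 ∧ x 3 ≤ 0} ∪
          {![2, 2, 1, -5], ![2, 2, -5, 1]})),
      0 ≤ x 0 ∧ 0 ≤ x 1) ∧
    ![(-1 : ℝ), 5, -2, -2] ∉ generatedCone
        ({x : Fin 4 → ℝ | 0 ≤ x 0 ∧ 0 ≤ x 1 ∧ x 2 ≤ 0 ∧ x 3 ≤ 0} ∪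
          {![2, 2, 1, -5], ![2, 2, -5, 1]}) := by
  set T : Set (Fin 4 → ℝ) := {x | 0 ≤ x 0 ∧ 0 ≤ x 1} with hT
  have hmem : T ∈ {T : Set (Fin 4 → ℝ) |
      ({x : Fin 4 → ℝ | 0 ≤ x 0 ∧ 0 ≤ x 1 ∧ x 2 ≤ 0 ∧ x 3 ≤ 0} ∪
          {![2, 2, 1, -5], ![2, 2, -5, 1]}) ⊆ T ∧
      (∀ x ∈ T, ∀ y ∈ T, x + y ∈ T) ∧
      (∀ r : ℝ, 0 ≤ r → ∀ x ∈ T, r • x ∈ T)} := by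
    refine ⟨?_, ?_, ?_⟩
    · rintro x (⟨h0, h1, _, _⟩ | rfl | rfl)
      · exact ⟨h0, h1⟩
      · constructor <;> norm_num
      · constructor <;> norm_num
    · intro x hx y hy
      exact ⟨add_nonneg hx.1 hy.1, add_nonneg hx.2 hy.2⟩
    · intro r hr x hx
      exact ⟨mul_nonneg hr hx.1, mul_nonneg hr hx.2⟩
  have hsub : generatedCone
      ({x : Fin 4 → ℝ | 0 ≤ x 0 ∧ 0 ≤ x 1 ∧ x 2 ≤ 0 ∧ x 3 ≤ 0} ∪
        {![2, 2, 1, -5], ![2, 2, -5, 1]}) ⊆ T :=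
    Set.sInter_subset_of_mem hmem
  have hTclosed : IsClosed T := by
    have : T = (fun x : Fin 4 → ℝ => x 0) ⁻¹' (Set.Ici 0) ∩
        (fun x : Fin 4 → ℝ => x 1) ⁻¹' (Set.Ici 0) := by
      ext x; simp [hT, Set.mem_Ici]
    rw [this]
    exact (isClosed_Ici.preimage (continuous_apply 0)).inter
      (isClosed_Ici.preimage (continuous_apply 1))
  constructor
  · intro x hx
    have : x ∈ T := hTclosed.closure_subset_iff.mpr hsub hx
    exact this
  · intro h
    have : (![(-1 : ℝ), 5, -2, -2]) ∈ T := hsub h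
    have h0 : (0 : ℝ) ≤ -1 := by simpa using this.1
    linarith
end
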